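/- arXiv:1205.4340 — 5 statements merged into one kernel-verified Lean document; each statement's English description precedes it below -/
import Mathlib

section
/- The overpartition function satisfies the recurrence p̄(n) + 2 ∑_{j=1}^{∞} (-1)^j p̄(n - j²) = 0 for all n ≥ 1, where p̄(m) = 0 for m < 0 (the sum is finite). -/
/-- number of (unrestricted) partitions of `n` -/
def partitionCount (n : ℕ) : ℕ := Fintype.card (Nat.Partition n)

/-- the overpartition function: an overpartition is equivalent to a pair consisting of a
partition into distinct parts (the overlined parts) and an arbitrary partition. -/
def overpartitionCount (n : ℕ) : ℕ :=
  ∑ x ∈ Finset.HasAntidiagonal.antidiagonal n,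
    (Nat.Partition.distincts x.1).card * partitionCount x.2

/-- the overpartition function extended by `0` on negative integers -/
def pbar (m : ℤ) : ℤ := if 0 ≤ m then overpartitionCount m.toNat else 0

namespace Overpart

noncomputable section

open PowerSeries Finset
open scoped Classical

variable {α : Type*}

/-- A convenience constructor for the power series whose coefficients indicate a subset. -/
def indicatorSeries (α : Type*) [Semiring α] (s : Set ℕ) : PowerSeries α :=
  PowerSeries.mk fun n => if n ∈ s then 1 else 0

theorem coeff_indicator (s : Set ℕ) [Semiring α] (n : ℕ) :
    coeff n (indicatorSeries α s) = if n ∈ s then 1 else 0 :=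
  coeff_mk _ _

theorem coeff_indicator_pos (s : Set ℕ) [Semiring α] (n : ℕ) (h : n ∈ s) :
    coeff n (indicatorSeries α s) = 1 := by rw [coeff_indicator, if_pos h]

theorem coeff_indicator_neg (s : Set ℕ) [Semiring α] (n : ℕ) (h : n ∉ s) :
    coeff n (indicatorSeries α s) = 0 := by rw [coeff_indicator, if_neg h]

theorem two_series (i : ℕ) [Semiring α] :
    1 + (X : PowerSeries α) ^ i.succ = indicatorSeries α {0, i.succ} := by
  ext n
  simp only [coeff_indicator, coeff_one, coeff_X_pow, Set.mem_insert_iff, Set.mem_singleton_iff,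
    map_add]
  cases' n with d
  · simp [(Nat.succ_ne_zero i).symm]
  · simp [Nat.succ_ne_zero d]

-- The main workhorse (copied from Archive/Wiedijk100Theorems/Partition.lean).
theorem partialGF_prop (α : Type*) [CommSemiring α] (n : ℕ) (s : Finset ℕ) (hs : ∀ i ∈ s, 0 < i)
    (c : ℕ → Set ℕ) (hc : ∀ i, i ∉ s → 0 ∈ c i) :
    #{p : n.Partition | (∀ j, p.parts.count j ∈ c j) ∧ ∀ j ∈ p.parts, j ∈ s} =
      coeff n (∏ i ∈ s, indicatorSeries α ((· * i) '' c i)) := by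
  simp_rw [coeff_prod, coeff_indicator, prod_boole, sum_boole]
  apply congr_arg
  simp only [mem_univ, forall_true_left, not_and, not_forall, exists_prop,
    Set.mem_image, not_exists]
  set φ : (a : Nat.Partition n) →
    a ∈ filter (fun p ↦ (∀ (j : ℕ), Multiset.count j p.parts ∈ c j) ∧ ∀ j ∈ p.parts, j ∈ s) univ →
    ℕ →₀ ℕ := fun p _ => {
      toFun := fun i => Multiset.count i p.parts • i
      support := Finset.filter (fun i => i ≠ 0) p.parts.toFinset
      mem_support_toFun := fun a => by
        simp only [smul_eq_mul, ne_eq, mul_eq_zero, Multiset.count_eq_zero]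
        rw [not_or, not_not]
        simp only [Multiset.mem_toFinset, not_not, mem_filter] }
  refine Finset.card_bij φ ?_ ?_ ?_
  · intro a ha
    simp only [φ, not_forall, not_exists, not_and, exists_prop, mem_filter]
    rw [mem_finsuppAntidiag]
    dsimp only [ne_eq, smul_eq_mul, id_eq, eq_mpr_eq_cast, le_eq_subset, Finsupp.coe_mk]
    simp only [mem_univ, forall_true_left, not_and, not_forall, exists_prop,
      mem_filter, true_and] at ha
    refine ⟨⟨?_, fun i ↦ ?_⟩, fun i _ ↦ ⟨a.parts.count i, ha.1 i, rfl⟩⟩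
    · conv_rhs => simp [← a.parts_sum]
      rw [sum_multiset_count_of_subset _ s]
      · simp only [smul_eq_mul]
      · intro i
        simp only [Multiset.mem_toFinset, not_not, mem_filter]
        apply ha.2
    · simp only [ne_eq, Multiset.mem_toFinset, not_not, mem_filter, and_imp]
      exact fun hi _ ↦ ha.2 i hi
  · intro p₁ hp₁ p₂ hp₂ h
    apply Nat.Partition.ext
    simp only [true_and, mem_univ, mem_filter] at hp₁ hp₂
    ext i
    simp only [φ, ne_eq, Multiset.mem_toFinset, not_not, smul_eq_mul, Finsupp.mk.injEq] at h
    by_cases hi : i = 0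
    · rw [hi]
      rw [Multiset.count_eq_zero_of_notMem]
      · rw [Multiset.count_eq_zero_of_notMem]
        intro a; exact Nat.lt_irrefl 0 (hs 0 (hp₂.2 0 a))
      intro a; exact Nat.lt_irrefl 0 (hs 0 (hp₁.2 0 a))
    · rw [← mul_left_inj' hi]
      rw [funext_iff] at h
      exact h.2 i
  · simp only [φ, mem_filter, mem_finsuppAntidiag, mem_univ, exists_prop, true_and, and_assoc]
    rintro f ⟨hf, hf₃, hf₄⟩
    have hf' : f ∈ finsuppAntidiag s n := mem_finsuppAntidiag.mpr ⟨hf, hf₃⟩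
    simp only [mem_finsuppAntidiag] at hf'
    refine ⟨⟨∑ i ∈ s, Multiset.replicate (f i / i) i, ?_, ?_⟩, ?_, ?_, ?_⟩
    · intro i hi
      simp only [exists_prop, Multiset.mem_sum, mem_map, Function.Embedding.coeFn_mk] at hi
      rcases hi with ⟨t, ht, z⟩
      apply hs
      rwa [Multiset.eq_of_mem_replicate z]
    · simp_rw [Multiset.sum_sum, Multiset.sum_replicate, Nat.nsmul_eq_mul]
      rw [← hf'.1]
      refine sum_congr rfl fun i hi => Nat.div_mul_cancel ?_
      rcases hf₄ i hi with ⟨w, _, hw₂⟩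
      rw [← hw₂]
      exact dvd_mul_left _ _
    · intro i
      simp_rw [Multiset.count_sum', Multiset.count_replicate, sum_ite_eq']
      split_ifs with h
      · rcases hf₄ i h with ⟨w, hw₁, hw₂⟩
        rwa [← hw₂, Nat.mul_div_cancel _ (hs i h)]
      · exact hc _ h
    · intro i hi
      rw [Multiset.mem_sum] at hi
      rcases hi with ⟨j, hj₁, hj₂⟩
      rwa [Multiset.eq_of_mem_replicate hj₂]
    · ext i
      simp_rw [Multiset.count_sum', Multiset.count_replicate, sum_ite_eq']
      simp only [ne_eq, Multiset.mem_toFinset, not_not, smul_eq_mul, ite_mul,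
        zero_mul, Finsupp.coe_mk]
      split_ifs with h
      · apply Nat.div_mul_cancel
        rcases hf₄ i h with ⟨w, _, hw₂⟩
        apply Dvd.intro_left _ hw₂
      · apply symm
        rw [← Finsupp.notMem_support_iff]
        exact notMem_mono hf'.2 h

/-- geometric series: the inverse of `1 - X ^ i` -/
def G (i : ℕ) : PowerSeries ℤ := indicatorSeries ℤ {k | i ∣ k}

def E (N : ℕ) : PowerSeries ℤ := ∏ i ∈ range N, (1 - X ^ (i + 1))
def DD (N : ℕ) : PowerSeries ℤ := ∏ i ∈ range N, (1 + X ^ (i + 1))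
def PP (N : ℕ) : PowerSeries ℤ := ∏ i ∈ range N, G (i + 1)
def Od (N : ℕ) : PowerSeries ℤ := ∏ i ∈ range N, (1 - X ^ (2 * i + 1))
def E2 (N : ℕ) : PowerSeries ℤ := ∏ i ∈ range N, (1 - X ^ (2 * i + 2))
def PK (N : ℕ) : PowerSeries ℤ := ∏ i ∈ range N, G (2 * i + 2)

theorem part_le {n : ℕ} (p : Nat.Partition n) {i : ℕ} (hi : i ∈ p.parts) : i ≤ n := by
  simpa [p.parts_sum] using Multiset.single_le_sum (fun _ _ => Nat.zero_le _) _ hi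

theorem mem_succ_map {n N i : ℕ} (h : n ≤ N) (p : Nat.Partition n) (hi : i ∈ p.parts) :
    i ∈ (range N).map ⟨Nat.succ, Nat.succ_injective⟩ := by
  have h1 : i ≤ n := part_le p hi
  have h2 : 0 < i := p.parts_pos hi
  simp only [mem_map, mem_range, Function.Embedding.coeFn_mk]
  exact ⟨i - 1, by omega, by omega⟩

theorem coeff_PP (n N : ℕ) (h : n ≤ N) :
    (partitionCount n : ℤ) = coeff n (PP N) := by
  have hprop := partialGF_prop ℤ n ((range N).map ⟨Nat.succ, Nat.succ_injective⟩)
    (fun i hi => by rcases mem_map.mp hi with ⟨a, -, rfl⟩; exact Nat.succ_pos a)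
    (fun _ => Set.univ) (fun _ _ => trivial)
  rw [Finset.prod_map] at hprop
  simp only [Function.Embedding.coeFn_mk] at hprop
  have h2 : (∏ i ∈ range N, indicatorSeries ℤ ((· * Nat.succ i) '' Set.univ)) = PP N := by
    refine Finset.prod_congr rfl fun i _ => ?_
    have hset : ((· * Nat.succ i) '' Set.univ) = {k | i + 1 ∣ k} := by
      ext k
      simp only [Set.mem_image, Set.mem_univ, true_and, Set.mem_setOf_eq,
        dvd_iff_exists_eq_mul_left, Nat.succ_eq_add_one]
      exact exists_congr fun x => eq_comm
    rw [hset, G]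
  rw [h2] at hprop
  rw [← hprop, partitionCount]
  norm_cast
  rw [Fintype.card]
  congr 1
  rw [eq_comm]
  rw [Finset.filter_true_of_mem]
  exact fun p _ => ⟨fun j => trivial, fun j hj => mem_succ_map h p hj⟩

theorem coeff_DD_aux (n N : ℕ) :
    (#{p : n.Partition |
        p.parts.Nodup ∧ ∀ j ∈ p.parts, j ∈ (range N).map ⟨Nat.succ, Nat.succ_injective⟩} : ℤ) =
      coeff n (DD N) := by
  rw [DD]
  convert partialGF_prop ℤ n
    ((range N).map ⟨Nat.succ, Nat.succ_injective⟩) _ (fun _ => {0, 1}) (fun _ _ => Or.inl rfl)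
    using 2
  · rfl
  · congr! with p
    rw [Multiset.nodup_iff_count_le_one]
    congr! 1 with i
    rcases Multiset.count i p.parts with (_ | _ | ms) <;> simp
  · simp_rw [Finset.prod_map, two_series]
    congr with i
    simp [Set.image_pair]
  · simp only [mem_map, Function.Embedding.coeFn_mk]
    rintro i ⟨_, _, rfl⟩
    apply Nat.succ_pos

theorem coeff_DD (n N : ℕ) (h : n ≤ N) :
    ((Nat.Partition.distincts n).card : ℤ) = coeff n (DD N) := by
  rw [← coeff_DD_aux, Nat.Partition.distincts]
  congr with p
  apply (and_iff_left _).symm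
  intro i hi
  exact mem_succ_map h p hi

theorem coeff_DD_mul_PP (n N : ℕ) (h : n ≤ N) :
    coeff n (DD N * PP N) = (overpartitionCount n : ℤ) := by
  rw [coeff_mul, overpartitionCount]
  push_cast
  refine Finset.sum_congr rfl fun x hx => ?_
  rw [Finset.HasAntidiagonal.mem_antidiagonal] at hx
  rw [← coeff_DD x.1 N (le_trans (by omega) h), ← coeff_PP x.2 N (le_trans (by omega) h)]

theorem one_sub_X_pow_mul_G (i : ℕ) (hi : 0 < i) : (1 - X ^ i) * G i = 1 := by
  ext m
  rw [sub_mul, one_mul, map_sub, PowerSeries.coeff_X_pow_mul', coeff_one]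
  rw [G, indicatorSeries, coeff_mk]
  by_cases hm : m = 0
  · subst hm
    simp [Nat.not_le_of_lt hi, hi.ne']
  by_cases hle : i ≤ m
  · rw [if_pos hle, coeff_mk]
    have : (i ∣ m) ↔ (i ∣ m - i) := by
      constructor
      · intro h; exact Nat.dvd_sub h dvd_rfl
      · intro h
        have := Nat.dvd_add h (dvd_refl i)
        rwa [Nat.sub_add_cancel hle] at this
    simp only [Set.mem_setOf_eq]
    rw [if_neg hm]
    by_cases hd : i ∣ m
    · rw [if_pos hd, if_pos (this.mp hd)]; ring
    · rw [if_neg hd, if_neg (fun hh => hd (this.mpr hh))]; ring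
  · rw [if_neg hle, if_neg hm]
    have hd : ¬ (i ∣ m) := by
      intro hdvd
      exact hle (Nat.le_of_dvd (Nat.pos_of_ne_zero hm) hdvd)
    simp [Set.mem_setOf_eq, hd]

/-- congruence of power series modulo `X ^ (n+1)` -/
def MEq (n : ℕ) (A B : PowerSeries ℤ) : Prop := ∀ m ≤ n, coeff m A = coeff m B

theorem MEq.refl {n : ℕ} (A : PowerSeries ℤ) : MEq n A A := fun _ _ => rfl

theorem MEq.symm {n : ℕ} {A B : PowerSeries ℤ} (h : MEq n A B) : MEq n B A :=
  fun m hm => (h m hm).symm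

theorem MEq.trans {n : ℕ} {A B C : PowerSeries ℤ} (h1 : MEq n A B) (h2 : MEq n B C) :
    MEq n A C := fun m hm => (h1 m hm).trans (h2 m hm)

theorem MEq.mul_right {n : ℕ} {A B : PowerSeries ℤ} (h : MEq n A B) (C : PowerSeries ℤ) :
    MEq n (A * C) (B * C) := by
  intro m hm
  rw [coeff_mul, coeff_mul]
  refine Finset.sum_congr rfl fun x hx => ?_
  rw [Finset.HasAntidiagonal.mem_antidiagonal] at hx
  rw [h x.1 (by omega)]

theorem MEq.mul {n : ℕ} {A B C D : PowerSeries ℤ} (h1 : MEq n A B) (h2 : MEq n C D) :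
    MEq n (A * C) (B * D) := by
  refine (h1.mul_right C).trans ?_
  intro m hm
  rw [mul_comm B C, mul_comm B D]
  exact (h2.mul_right B) m hm

theorem MEq.add {n : ℕ} {A B C D : PowerSeries ℤ} (h1 : MEq n A B) (h2 : MEq n C D) :
    MEq n (A + C) (B + D) := by
  intro m hm
  rw [map_add, map_add, h1 m hm, h2 m hm]

theorem MEq.sum {n : ℕ} {ι : Type*} (s : Finset ι) (f g : ι → PowerSeries ℤ)
    (h : ∀ i ∈ s, MEq n (f i) (g i)) : MEq n (∑ i ∈ s, f i) (∑ i ∈ s, g i) := by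
  intro m hm
  rw [map_sum, map_sum]
  exact Finset.sum_congr rfl fun i hi => h i hi m hm

theorem MEq.X_pow_mul {n t : ℕ} (ht : n < t) (C : PowerSeries ℤ) :
    MEq n (X ^ t * C) 0 := by
  intro m hm
  rw [PowerSeries.coeff_X_pow_mul', if_neg (by omega), map_zero]

theorem MEq_one_sub_X_pow {n t : ℕ} (ht : n < t) : MEq n (1 - X ^ t) 1 := by
  intro m hm
  rw [map_sub, coeff_X_pow, if_neg (by omega), sub_zero]

theorem MEq_G_one {n t : ℕ} (ht : n < t) : MEq n (G t) 1 := by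
  intro m hm
  rw [G, indicatorSeries, coeff_mk, coeff_one]
  by_cases hm0 : m = 0
  · subst hm0; simp
  · rw [if_neg hm0, if_neg]
    intro hd
    exact hm0 (Nat.eq_zero_of_dvd_of_lt hd (by omega))
    
theorem MEq_prod_one {n : ℕ} {ι : Type*} (s : Finset ι) (f : ι → PowerSeries ℤ)
    (h : ∀ i ∈ s, MEq n (f i) 1) : MEq n (∏ i ∈ s, f i) 1 := by
  classical
  induction s using Finset.induction_on with
  | empty => exact MEq.refl 1
  | insert _ _ hx ih =>
    rename_i a s'
    rw [Finset.prod_insert hx]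
    have h1 : MEq n (f a) 1 := h a (Finset.mem_insert_self a s')
    have h2 : MEq n (∏ i ∈ s', f i) 1 := ih fun i hi => h i (Finset.mem_insert_of_mem hi)
    have := h1.mul h2
    rwa [one_mul] at this

theorem E_mul_PP (N : ℕ) : E N * PP N = 1 := by
  rw [E, PP, ← Finset.prod_mul_distrib]
  exact Finset.prod_eq_one fun i _ => one_sub_X_pow_mul_G (i + 1) (by omega)

theorem E2_mul_PK (N : ℕ) : E2 N * PK N = 1 := by
  rw [E2, PK, ← Finset.prod_mul_distrib]
  exact Finset.prod_eq_one fun i _ => one_sub_X_pow_mul_G (2 * i + 2) (by omega)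

theorem DD_mul_E (N : ℕ) : DD N * E N = E2 N := by
  rw [DD, E, E2, ← Finset.prod_mul_distrib]
  refine Finset.prod_congr rfl fun i _ => ?_
  have h : (X : PowerSeries ℤ) ^ (i+1) * X ^ (i+1) = X ^ (2*i+2) := by
    rw [← pow_add]; congr 1; omega
  linear_combination h

theorem Od_mul_E2 (N : ℕ) : Od N * E2 N = E (2 * N) := by
  induction N with
  | zero => simp [Od, E2, E]
  | succ N ih =>
    have h2 : 2 * (N + 1) = (2 * N + 1) + 1 := by omega
    rw [Od, E2, Finset.prod_range_succ, Finset.prod_range_succ, ← Od, ← E2, E, h2,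
      Finset.prod_range_succ, Finset.prod_range_succ, ← E, ← ih]
    have e1 : 2 * N + 1 + 1 = 2 * N + 2 := by omega
    have e2 : 2 * N + 1 + 1 + 1 = 2 * N + 1 + 1 + 1 := rfl
    rw [e1]
    ring

/-- the Gaussian binomial coefficient `[m choose k]` in the variable `X ^ 2`,
expressed as a power series over `ℤ` -/
def qb (m k : ℕ) : PowerSeries ℤ :=
  if k ≤ m then (∏ i ∈ Ico (m - k) m, (1 - X ^ (2*i+2))) * ∏ i ∈ range k, G (2*i+2) else 0

theorem qb_zero (m : ℕ) : qb m 0 = 1 := by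
  rw [qb, if_pos (Nat.zero_le m)]
  simp

theorem qb_of_gt {m k : ℕ} (h : m < k) : qb m k = 0 := by
  rw [qb, if_neg (by omega)]

theorem qb_self (m : ℕ) : qb m m = 1 := by
  rw [qb, if_pos le_rfl, Nat.sub_self]
  have h : Finset.Ico 0 m = range m := by rw [Finset.range_eq_Ico]
  rw [h]
  exact E2_mul_PK m

theorem pascal₁ (m k : ℕ) :
    qb (m+1) (k+1) = qb m (k+1) + X ^ (2*(m-k)) * qb m k := by
  rcases lt_trichotomy k m with hk | rfl | hk
  · have hsub : m + 1 - (k+1) = m - k := by omega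
    rw [qb, if_pos (by omega), hsub, qb, if_pos (by omega), qb, if_pos (by omega)]
    have hsub2 : m - (k+1) = (m - k - 1) := by omega
    rw [hsub2]
    rw [Finset.prod_Ico_succ_top (by omega : m - k ≤ m)]
    rw [Finset.prod_eq_prod_Ico_succ_bot (by omega : m - k - 1 < m)]
    have hstep : m - k - 1 + 1 = m - k := by omega
    rw [hstep]
    rw [Finset.prod_range_succ]
    have hg : (1 - (X : PowerSeries ℤ) ^ (2*k+2)) * G (2*k+2) = 1 :=
      one_sub_X_pow_mul_G _ (by omega)
    have hx : (X : PowerSeries ℤ) ^ (2*m+2) = X ^ (2*(m-k)) * X ^ (2*k+2) := by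
      rw [← pow_add]; congr 1; omega
    have he : 2*(m-k-1)+2 = 2*(m-k) := by omega
    rw [he, hx]
    set A := ∏ i ∈ Ico (m-k) m, (1 - (X : PowerSeries ℤ) ^ (2*i+2)) with hA
    set B := ∏ i ∈ range k, G (2*i+2) with hB
    set u := (X : PowerSeries ℤ) ^ (2*k+2) with hu
    set v := (X : PowerSeries ℤ) ^ (2*(m-k)) with hv
    set g := G (2*k+2) with hgg
    linear_combination (A * B * v) * hg
  · rw [qb_self, qb_of_gt (by omega), qb_self, Nat.sub_self]
    simp
  · rw [qb_of_gt (by omega), qb_of_gt (by omega), qb_of_gt (by omega)]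
    simp

theorem pascal₂ (m k : ℕ) :
    qb (m+1) (k+1) = qb m k + X ^ (2*(k+1)) * qb m (k+1) := by
  rcases lt_trichotomy k m with hk | rfl | hk
  · have hsub : m + 1 - (k+1) = m - k := by omega
    rw [qb, if_pos (by omega), hsub, qb, if_pos (by omega), qb, if_pos (by omega)]
    have hsub2 : m - (k+1) = (m - k - 1) := by omega
    rw [hsub2]
    rw [Finset.prod_Ico_succ_top (by omega : m - k ≤ m)]
    rw [Finset.prod_eq_prod_Ico_succ_bot (by omega : m - k - 1 < m)]
    have hstep : m - k - 1 + 1 = m - k := by omega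
    rw [hstep]
    rw [Finset.prod_range_succ]
    have hg : (1 - (X : PowerSeries ℤ) ^ (2*k+2)) * G (2*k+2) = 1 :=
      one_sub_X_pow_mul_G _ (by omega)
    have hx : (X : PowerSeries ℤ) ^ (2*m+2) = X ^ (2*(m-k)) * X ^ (2*k+2) := by
      rw [← pow_add]; congr 1; omega
    have he : 2*(m-k-1)+2 = 2*(m-k) := by omega
    have he2 : 2*(k+1) = 2*k+2 := by omega
    rw [he, hx, he2]
    set A := ∏ i ∈ Ico (m-k) m, (1 - (X : PowerSeries ℤ) ^ (2*i+2)) with hA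
    set B := ∏ i ∈ range k, G (2*i+2) with hB
    set u := (X : PowerSeries ℤ) ^ (2*k+2) with hu
    set v := (X : PowerSeries ℤ) ^ (2*(m-k)) with hv
    set g := G (2*k+2) with hgg
    linear_combination (A * B) * hg
  · rw [qb_self, qb_self, qb_of_gt (Nat.lt_succ_self k)]
    simp
  · rw [qb_of_gt (by omega), qb_of_gt (by omega), qb_of_gt (by omega)]
    simp

theorem gauss (M : ℕ) :
    Od M = ∑ k ∈ range (M+1), (-1 : PowerSeries ℤ)^k * X^(k*k) * qb M k := by
  induction M with
  | zero => simp [Od, qb_zero]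
  | succ M ih =>
    have hOd : Od (M+1) = Od M * (1 - X^(2*M+1)) := by
      rw [Od, Od, Finset.prod_range_succ]
    rw [hOd, ih]
    rw [Finset.sum_range_succ' _ (M+1)]
    have hterm : ∀ t ∈ range (M+1),
        (-1 : PowerSeries ℤ)^(t+1) * X^((t+1)*(t+1)) * qb (M+1) (t+1) =
          (-1 : PowerSeries ℤ)^(t+1) * X^((t+1)*(t+1)) * qb M (t+1)
            - X^(2*M+1) * ((-1 : PowerSeries ℤ)^t * X^(t*t) * qb M t) := by
      intro t ht
      rw [Finset.mem_range] at ht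
      rw [pascal₁]
      have h1 : ((-1 : PowerSeries ℤ))^(t+1) = -(-1 : PowerSeries ℤ)^t := by
        rw [pow_succ]; ring
      have h2 : (X : PowerSeries ℤ)^((t+1)*(t+1)) * X^(2*(M-t)) = X^(2*M+1) * X^(t*t) := by
        rw [← pow_add, ← pow_add]
        congr 1
        have e : (t+1)*(t+1) = t*t+2*t+1 := by ring
        omega
      calc (-1 : PowerSeries ℤ)^(t+1) * X^((t+1)*(t+1)) * (qb M (t+1) + X^(2*(M-t)) * qb M t)
          = (-1 : PowerSeries ℤ)^(t+1) * X^((t+1)*(t+1)) * qb M (t+1)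
            + ((-1 : PowerSeries ℤ)^(t+1)) * (X^((t+1)*(t+1)) * X^(2*(M-t))) * qb M t := by
            ring
        _ = _ := by rw [h1, h2]; ring
    rw [Finset.sum_congr rfl hterm, Finset.sum_sub_distrib, ← Finset.mul_sum]
    have h4 := Finset.sum_range_succ' (fun k => (-1 : PowerSeries ℤ)^k * X^(k*k) * qb M k) (M+1)
    rw [Finset.sum_range_succ (fun k => (-1 : PowerSeries ℤ)^k * X^(k*k) * qb M k) (M+1)] at h4
    rw [qb_of_gt (Nat.lt_succ_self M)] at h4
    simp only [pow_zero, mul_one, mul_zero, add_zero, one_mul, qb_zero] at h4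
    simp only [pow_zero, one_mul, mul_one, qb_zero]
    linear_combination h4

theorem one_sub_X_pow_ne_zero (t : ℕ) : (1 - (X : PowerSeries ℤ) ^ (t+1)) ≠ 0 := by
  intro hc
  have h := congrArg (coeff 0) hc
  rw [map_sub, coeff_X_pow, coeff_one] at h
  simp at h

theorem qb_symm {m k : ℕ} (h : k ≤ m) : qb m k = qb m (m - k) := by
  rw [qb, if_pos h, qb, if_pos (Nat.sub_le m k), Nat.sub_sub_self h]
  have hfne : ∀ j : ℕ, (∏ i ∈ range j, (1 - (X : PowerSeries ℤ) ^ (2*i+2))) ≠ 0 := by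
    intro j
    rw [Finset.prod_ne_zero_iff]
    intro i _
    have := one_sub_X_pow_ne_zero (2*i+1)
    simpa [show 2*i+1+1 = 2*i+2 by omega] using this
  apply mul_right_cancel₀ (b := (∏ i ∈ range k, (1 - (X : PowerSeries ℤ) ^ (2*i+2))) *
    (∏ i ∈ range (m-k), (1 - (X : PowerSeries ℤ) ^ (2*i+2)))) (mul_ne_zero (hfne k) (hfne (m-k)))
  have e1 : (∏ i ∈ range k, G (2*i+2)) *
      (∏ i ∈ range k, (1 - (X : PowerSeries ℤ) ^ (2*i+2))) = 1 := by
    rw [← Finset.prod_mul_distrib]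
    exact Finset.prod_eq_one fun i _ => by
      rw [mul_comm]; exact one_sub_X_pow_mul_G _ (by omega)
  have e2 : (∏ i ∈ range (m-k), G (2*i+2)) *
      (∏ i ∈ range (m-k), (1 - (X : PowerSeries ℤ) ^ (2*i+2))) = 1 := by
    rw [← Finset.prod_mul_distrib]
    exact Finset.prod_eq_one fun i _ => by
      rw [mul_comm]; exact one_sub_X_pow_mul_G _ (by omega)
  have e3 : (∏ i ∈ range (m-k), (1 - (X : PowerSeries ℤ) ^ (2*i+2))) *
      (∏ i ∈ Ico (m-k) m, (1 - (X : PowerSeries ℤ) ^ (2*i+2))) =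
      ∏ i ∈ range m, (1 - (X : PowerSeries ℤ) ^ (2*i+2)) := by
    rw [Finset.range_eq_Ico, Finset.range_eq_Ico]
    exact Finset.prod_Ico_consecutive _ (Nat.zero_le _) (Nat.sub_le m k)
  have e4 : (∏ i ∈ range k, (1 - (X : PowerSeries ℤ) ^ (2*i+2))) *
      (∏ i ∈ Ico k m, (1 - (X : PowerSeries ℤ) ^ (2*i+2))) =
      ∏ i ∈ range m, (1 - (X : PowerSeries ℤ) ^ (2*i+2)) := by
    rw [Finset.range_eq_Ico, Finset.range_eq_Ico]
    exact Finset.prod_Ico_consecutive _ (Nat.zero_le _) h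
  set Ak := ∏ i ∈ Ico (m-k) m, (1 - (X : PowerSeries ℤ) ^ (2*i+2))
  set A' := ∏ i ∈ Ico k m, (1 - (X : PowerSeries ℤ) ^ (2*i+2))
  set Pk := ∏ i ∈ range k, G (2*i+2)
  set Pmk := ∏ i ∈ range (m-k), G (2*i+2)
  set Dk := ∏ i ∈ range k, (1 - (X : PowerSeries ℤ) ^ (2*i+2))
  set Dmk := ∏ i ∈ range (m-k), (1 - (X : PowerSeries ℤ) ^ (2*i+2))
  linear_combination (Ak * Dmk) * e1 - (A' * Dk) * e2 + e3 - e4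

theorem vandermonde (a b k : ℕ) :
    qb (a + b) k =
      ∑ j ∈ range (k+1), qb a j * qb b (k - j) * X ^ (2*(j*(b + j - k))) := by
  induction a generalizing k with
  | zero =>
    rw [zero_add, Finset.sum_eq_single 0]
    · simp [qb_zero]
    · intro j _ hj0
      rw [qb_of_gt (by omega : (0:ℕ) < j), zero_mul, zero_mul]
    · intro hnot
      exact absurd (Finset.mem_range.mpr (by omega)) hnot
  | succ a iha =>
    cases k with
    | zero =>
      rw [Finset.sum_range_one]
      simp [qb_zero]
    | succ t =>
      have hL : a + 1 + b = (a + b) + 1 := by omega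
      rw [hL, pascal₁ (a+b) t, iha (t+1), iha t]
      rw [Finset.sum_range_succ'
        (fun j => qb a j * qb b (t+1 - j) * X ^ (2*(j*(b + j - (t+1))))) (t+1)]
      rw [Finset.sum_range_succ'
        (fun j => qb (a+1) j * qb b (t+1 - j) * X ^ (2*(j*(b + j - (t+1))))) (t+1)]
      simp only [qb_zero, one_mul, Nat.zero_mul, Nat.mul_zero, pow_zero, mul_one,
        Nat.sub_zero, Nat.succ_sub_succ, Nat.add_succ]
      rw [Finset.mul_sum]
      have key : ∀ i ∈ range (t+1),
          qb (a+1) (i+1) * qb b (t - i) * X ^ (2*((i+1)*(b + i - t))) =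
            qb a (i+1) * qb b (t - i) * X ^ (2*((i+1)*(b + i - t)))
              + X ^ (2*((a+b)-t)) * (qb a i * qb b (t - i) * X ^ (2*(i*(b + i - t)))) := by
        intro i hi
        rw [pascal₁ a i]
        by_cases hia : i ≤ a
        · by_cases hbt : t ≤ b + i
          · have hexp : (X : PowerSeries ℤ)^(2*((a+b)-t)) =
                X^(2*(a-i)) * X^(2*(b+i-t)) := by
              rw [← pow_add]
              congr 1
              omega
            have hmul : (X : PowerSeries ℤ) ^ (2*((i+1)*(b + i - t))) =
                X ^ (2*(i*(b + i - t))) * X ^ (2*(b+i-t)) := by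
              rw [← pow_add]
              congr 1
              ring
            rw [hmul, hexp]
            ring
          · rw [qb_of_gt (show b < t - i by omega)]
            ring
        · rw [qb_of_gt (show a < i by omega), qb_of_gt (show a < i+1 by omega)]
          ring
      rw [Finset.sum_congr rfl key, Finset.sum_add_distrib]
      ring

theorem square_split (n : ℕ) (f : ℕ → ℕ → PowerSeries ℤ) (hsymm : ∀ k l, f k l = f l k) :
    ∑ k ∈ range n, ∑ l ∈ range n, f k l =
      ∑ k ∈ range n, f k k + 2 * ∑ l ∈ range n, ∑ k ∈ range l, f k l := by
  induction n with
  | zero => simp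
  | succ n ih =>
    simp only [Finset.sum_range_succ]
    rw [Finset.sum_add_distrib, ih]
    have hs : ∑ l ∈ range n, f n l = ∑ l ∈ range n, f l n :=
      Finset.sum_congr rfl fun l _ => hsymm n l
    rw [hs]
    ring

theorem inner_sum (M j : ℕ) (hj : j ≤ M) :
    X ^ (j*j) * qb (2*M) (M+j) =
      ∑ i ∈ Ico j (M+1), X ^ ((i-j)*(i-j) + i*i) * (qb M (i-j) * qb M i) := by
  have h2M : 2*M = M + M := by omega
  rw [h2M, vandermonde M M (M+j), Finset.mul_sum]
  have hsub : Ico j (M+1) ⊆ range (M+j+1) := by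
    intro x hx
    rw [Finset.mem_Ico] at hx
    rw [Finset.mem_range]
    omega
  have hzero : ∀ x ∈ range (M+j+1), x ∉ Ico j (M+1) →
      (X : PowerSeries ℤ)^(j*j) *
        (qb M x * qb M (M + j - x) * X^(2*(x*(M + x - (M+j))))) = 0 := by
    intro x hx hnot
    rw [Finset.mem_range] at hx
    rw [Finset.mem_Ico] at hnot
    push_neg at hnot
    by_cases hxj : x < j
    · rw [qb_of_gt (show M < M + j - x by omega)]
      simp
    · have hMx : M < x := by omega
      rw [qb_of_gt hMx]
      simp
  rw [← Finset.sum_subset hsub hzero]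
  refine Finset.sum_congr rfl fun i hi => ?_
  rw [Finset.mem_Ico] at hi
  obtain ⟨d, rfl⟩ : ∃ d, i = j + d := ⟨i - j, by omega⟩
  have e1 : M + j - (j + d) = M - d := by omega
  have e2 : M + (j + d) - (M + j) = d := by omega
  have e4 : j + d - j = d := by omega
  rw [e1, e2, e4]
  have e3 : qb M (M - d) = qb M d := (qb_symm (show d ≤ M by omega)).symm
  rw [e3]
  have e5 : (X : PowerSeries ℤ)^(j*j) * X^(2*((j+d)*d)) = X^(d*d + (j+d)*(j+d)) := by
    rw [← pow_add]; congr 1; ring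
  linear_combination (qb M (j+d) * qb M d) * e5

theorem sq_gauss (M : ℕ) :
    (Od M)^2 = ∑ j ∈ range (M+1),
      (if j = 0 then 1 else 2 * (-1 : PowerSeries ℤ)^j) * (X^(j*j) * qb (2*M) (M+j)) := by
  have hdiag : ∑ k ∈ range (M+1),
      ((-1 : PowerSeries ℤ)^k * X^(k*k) * qb M k) * ((-1 : PowerSeries ℤ)^k * X^(k*k) * qb M k)
        = X^(0*0) * qb (2*M) (M+0) := by
    rw [inner_sum M 0 (Nat.zero_le M)]
    rw [Nat.Ico_zero_eq_range]
    refine Finset.sum_congr rfl fun i _ => ?_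
    simp only [Nat.sub_zero]
    have hneg : ((-1 : PowerSeries ℤ)^i) * ((-1 : PowerSeries ℤ)^i) = 1 := by
      rw [← pow_add]
      exact Even.neg_one_pow ⟨i, rfl⟩
    have hX : (X : PowerSeries ℤ)^(i*i) * X^(i*i) = X^(i*i+i*i) := (pow_add _ _ _).symm
    calc ((-1 : PowerSeries ℤ)^i * X^(i*i) * qb M i) * ((-1 : PowerSeries ℤ)^i * X^(i*i) * qb M i)
        = (((-1 : PowerSeries ℤ)^i) * ((-1 : PowerSeries ℤ)^i)) *
            ((X : PowerSeries ℤ)^(i*i) * X^(i*i)) * (qb M i * qb M i) := by ring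
      _ = X^(i*i+i*i) * (qb M i * qb M i) := by rw [hneg, hX]; ring
  have htri : ∑ l ∈ range (M+1), ∑ k ∈ range l,
      ((-1 : PowerSeries ℤ)^k * X^(k*k) * qb M k) * ((-1 : PowerSeries ℤ)^l * X^(l*l) * qb M l)
        = ∑ j ∈ range M, (-1 : PowerSeries ℤ)^(j+1) * (X^((j+1)*(j+1)) * qb (2*M) (M+(j+1))) := by
    have hj : ∀ j ∈ range M,
        (-1 : PowerSeries ℤ)^(j+1) * (X^((j+1)*(j+1)) * qb (2*M) (M+(j+1))) =
          ∑ i ∈ Ico (j+1) (M+1), (-1 : PowerSeries ℤ)^(j+1) *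
            (X^((i-(j+1))*(i-(j+1)) + i*i) * (qb M (i-(j+1)) * qb M i)) := by
      intro j hjm
      rw [Finset.mem_range] at hjm
      rw [inner_sum M (j+1) (by omega), Finset.mul_sum]
    rw [Finset.sum_congr rfl hj]
    rw [Finset.sum_sigma', Finset.sum_sigma']
    refine Finset.sum_nbij' (fun p => ⟨p.1 - p.2 - 1, p.1⟩) (fun p => ⟨p.2, p.2 - (p.1 + 1)⟩)
      ?_ ?_ ?_ ?_ ?_
    · rintro ⟨l, k⟩ hp
      simp only [Finset.mem_sigma, Finset.mem_range, Finset.mem_Ico] at hp ⊢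
      omega
    · rintro ⟨j, i⟩ hp
      simp only [Finset.mem_sigma, Finset.mem_range, Finset.mem_Ico] at hp ⊢
      omega
    · rintro ⟨l, k⟩ hp
      simp only [Finset.mem_sigma, Finset.mem_range] at hp
      refine Sigma.ext ?_ ?_
      · try simp only
        try omega
      · try simp only
        try rw [heq_iff_eq]
        try omega
    · rintro ⟨j, i⟩ hp
      simp only [Finset.mem_sigma, Finset.mem_range, Finset.mem_Ico] at hp
      refine Sigma.ext ?_ ?_
      · try simp only
        try omega
      · try simp only
        try rw [heq_iff_eq]
        try omega
    · rintro ⟨l, k⟩ hp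
      simp only [Finset.mem_sigma, Finset.mem_range] at hp
      obtain ⟨hl, hk⟩ := hp
      obtain ⟨d, rfl⟩ : ∃ d, l = k + 1 + d := ⟨l - k - 1, by omega⟩
      simp only
      have e1 : k + 1 + d - k - 1 = d := by omega
      have e2 : k + 1 + d - (d + 1) = k := by omega
      rw [e1, e2]
      have hsgn : (-1 : PowerSeries ℤ)^k * (-1 : PowerSeries ℤ)^(k+1+d) =
          (-1 : PowerSeries ℤ)^(d+1) := by
        rw [← pow_add]
        have : k + (k+1+d) = (d+1) + 2*k := by omega
        rw [this, pow_add, pow_mul, neg_one_sq, one_pow, mul_one]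
      have hXp : (X : PowerSeries ℤ)^(k*k) * X^((k+1+d)*(k+1+d)) = X^(k*k + (k+1+d)*(k+1+d)) :=
        (pow_add _ _ _).symm
      calc ((-1 : PowerSeries ℤ)^k * X^(k*k) * qb M k) *
            ((-1 : PowerSeries ℤ)^(k+1+d) * X^((k+1+d)*(k+1+d)) * qb M (k+1+d))
          = ((-1 : PowerSeries ℤ)^k * (-1 : PowerSeries ℤ)^(k+1+d)) *
            ((X : PowerSeries ℤ)^(k*k) * X^((k+1+d)*(k+1+d))) * (qb M k * qb M (k+1+d)) := by
            ring
        _ = (-1 : PowerSeries ℤ)^(d+1) *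
            (X^(k*k + (k+1+d)*(k+1+d)) * (qb M k * qb M (k+1+d))) := by
            rw [hsgn, hXp]; ring
  rw [sq, gauss M, Finset.sum_mul_sum]
  rw [square_split (M+1)
    (fun k l => ((-1 : PowerSeries ℤ)^k * X^(k*k) * qb M k) *
      ((-1 : PowerSeries ℤ)^l * X^(l*l) * qb M l)) (fun k l => by ring)]
  rw [hdiag, htri]
  rw [Finset.sum_range_succ'
    (fun j => (if j = 0 then 1 else 2 * (-1 : PowerSeries ℤ)^j) * (X^(j*j) * qb (2*M) (M+j))) M]
  rw [Finset.mul_sum]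
  have hcong : ∀ j ∈ range M,
      2 * ((-1 : PowerSeries ℤ)^(j+1) * (X^((j+1)*(j+1)) * qb (2*M) (M+(j+1)))) =
        (if j+1 = 0 then 1 else 2 * (-1 : PowerSeries ℤ)^(j+1)) *
          (X^((j+1)*(j+1)) * qb (2*M) (M+(j+1))) := by
    intro j _
    rw [if_neg (Nat.succ_ne_zero j)]
    ring
  rw [Finset.sum_congr rfl hcong, if_pos rfl, one_mul, add_comm]

theorem MEq.congr {n : ℕ} {A B A' B' : PowerSeries ℤ} (h : MEq n A B)
    (hA : A = A') (hB : B = B') : MEq n A' B' := hA ▸ hB ▸ h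

theorem qb_MEq_PK {n m k : ℕ} (hk : k ≤ m) (hn : n < 2*(m-k)+2) :
    MEq n (qb m k) (PK k) := by
  rw [qb, if_pos hk]
  have hPK : (∏ i ∈ range k, G (2*i+2)) = PK k := rfl
  rw [hPK]
  have h1 : MEq n (∏ i ∈ Ico (m-k) m, (1 - (X : PowerSeries ℤ)^(2*i+2))) 1 :=
    MEq_prod_one _ _ fun i hi =>
      MEq_one_sub_X_pow (by rw [Finset.mem_Ico] at hi; omega)
  have h2 := h1.mul_right (PK k)
  rwa [one_mul] at h2

theorem PK_MEq {n w a : ℕ} (hwa : w ≤ a) (hn : n < 2*w+2) :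
    MEq n (PK a) (PK w) := by
  have hsplit : PK a = PK w * ∏ i ∈ Ico w a, G (2*i+2) := by
    rw [PK, PK, Finset.range_eq_Ico,
      ← Finset.prod_Ico_consecutive _ (Nat.zero_le w) hwa, Finset.range_eq_Ico]
  rw [hsplit]
  have htail : MEq n (∏ i ∈ Ico w a, G (2*i+2)) 1 :=
    MEq_prod_one _ _ fun i hi => MEq_G_one (by rw [Finset.mem_Ico] at hi; omega)
  have h2 := ((MEq.refl (n := n) (PK w)).mul htail)
  rwa [mul_one] at h2

/-- the truncated theta series `1 + 2 ∑ (-1)^j X^(j^2)` -/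
def Th (M : ℕ) : PowerSeries ℤ :=
  ∑ j ∈ range (M+1), (if j = 0 then 1 else 2 * (-1 : PowerSeries ℤ)^j) * X^(j*j)

theorem claim1 {n M : ℕ} (hM : 2*n+2 ≤ M) :
    MEq n (Th M * PK M) ((Od M)^2) := by
  rw [sq_gauss M, Th, Finset.sum_mul]
  refine MEq.sum _ _ _ fun j hj => ?_
  rw [Finset.mem_range] at hj
  by_cases hjn : j*j ≤ n
  · have hjle : j ≤ n := by nlinarith
    have hq1 : MEq n (qb (2*M) (M+j)) (PK (M+j)) :=
      qb_MEq_PK (by omega) (by omega)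
    have hq2 : MEq n (PK (M+j)) (PK M) := PK_MEq (by omega) (by omega)
    have hq := hq1.trans hq2
    have h2 := (hq.symm.mul_right ((if j = 0 then 1 else 2 * (-1 : PowerSeries ℤ)^j) * X^(j*j)))
    exact h2.congr (by ring) (by ring)
  · have hA : MEq n ((if j = 0 then 1 else 2 * (-1 : PowerSeries ℤ)^j) * X^(j*j) * PK M) 0 :=
      (MEq.X_pow_mul (t := j*j) (by omega)
        ((if j = 0 then 1 else 2 * (-1 : PowerSeries ℤ)^j) * PK M)).congr
        (by ring) rfl
    have hB : MEq n ((if j = 0 then 1 else 2 * (-1 : PowerSeries ℤ)^j) *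
        (X^(j*j) * qb (2*M) (M+j))) 0 :=
      (MEq.X_pow_mul (t := j*j) (by omega)
        ((if j = 0 then 1 else 2 * (-1 : PowerSeries ℤ)^j) *
        qb (2*M) (M+j))).congr (by ring) rfl
    exact hA.trans hB.symm

theorem key_chain {n M : ℕ} (hM : 2*n+2 ≤ M) :
    MEq n (Th M * (DD M * PP M)) 1 := by
  have t0 : Th M * (DD M * PP M) = (Th M * PK M) * (E2 M * (DD M * PP M)) := by
    linear_combination (-(Th M * (DD M * PP M))) * E2_mul_PK M
  have hc1 := (claim1 hM).mul_right (E2 M * (DD M * PP M))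
  have h3 : (Od M)^2 * (E2 M * (DD M * PP M)) = (Od M * DD M)^2 := by
    have hde : DD M * E M = E2 M := DD_mul_E M
    have hep : E M * PP M = 1 := E_mul_PP M
    linear_combination (-((Od M)^2 * DD M * PP M)) * hde +
      ((Od M)^2 * (DD M)^2) * hep
  have h4 : Od M * DD M = ∏ i ∈ range M, (1 - (X : PowerSeries ℤ)^(M+(i+1))) := by
    have ho : Od M * E2 M = E (2*M) := Od_mul_E2 M
    have hde : DD M * E M = E2 M := DD_mul_E M
    have hep : E M * PP M = 1 := E_mul_PP M
    have hsplit : E (2*M) = E M * ∏ i ∈ range M, (1 - (X : PowerSeries ℤ)^(M+(i+1))) := by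
      rw [E, show 2*M = M + M by omega, Finset.prod_range_add]
      rfl
    -- Od * DD = Od * DD * (E * PP) = (Od * E2) * PP = E(2M) * PP = Tail * (E * PP) = Tail
    have step1 : Od M * DD M = E (2*M) * PP M := by
      calc Od M * DD M = Od M * DD M * (E M * PP M) := by rw [hep, mul_one]
        _ = (Od M * (DD M * E M)) * PP M := by ring
        _ = (Od M * E2 M) * PP M := by rw [hde]
        _ = E (2*M) * PP M := by rw [ho]
    rw [step1, hsplit]
    calc E M * (∏ i ∈ range M, (1 - (X : PowerSeries ℤ)^(M+(i+1)))) * PP M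
        = (∏ i ∈ range M, (1 - (X : PowerSeries ℤ)^(M+(i+1)))) * (E M * PP M) := by ring
      _ = _ := by rw [hep, mul_one]
  have h6 : MEq n (∏ i ∈ range M, (1 - (X : PowerSeries ℤ)^(M+(i+1)))) 1 :=
    MEq_prod_one _ _ fun i _ => MEq_one_sub_X_pow (by omega)
  have h7 : MEq n ((Od M * DD M)^2) 1 := by
    rw [h4]
    have := h6.mul h6
    rw [one_mul] at this
    exact this.congr (sq _).symm rfl
  rw [t0]
  exact (hc1.trans (h3 ▸ h7)).congr rfl rfl

end

end Overpart

theorem overpartition_recurrence (n : ℕ) (hn : 1 ≤ n) :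
    pbar n + 2 * ∑' j : ℕ, (-1 : ℤ) ^ (j + 1) * pbar ((n : ℤ) - ((j : ℤ) + 1) ^ 2) = 0 := by
  classical
  have key := Overpart.key_chain (n := n) (M := 2*n+2) le_rfl
  have h0 := key n le_rfl
  rw [PowerSeries.coeff_one, if_neg (by omega)] at h0
  rw [Overpart.Th, Finset.sum_mul, map_sum] at h0
  have hterm : ∀ j ∈ Finset.range (2*n+2+1),
      (PowerSeries.coeff n) ((if j = 0 then 1 else 2 * (-1 : PowerSeries ℤ)^j) *
          PowerSeries.X ^ (j*j) * (Overpart.DD (2*n+2) * Overpart.PP (2*n+2))) =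
        (if j = 0 then 1 else 2 * (-1 : ℤ)^j) *
          (if j*j ≤ n then (overpartitionCount (n - j*j) : ℤ) else 0) := by
    intro j _
    have hc : (if j = 0 then 1 else 2 * (-1 : PowerSeries ℤ)^j) =
        PowerSeries.C (if j = 0 then 1 else 2 * (-1 : ℤ)^j) := by
      split
      · simp
      · rw [map_mul, map_pow, map_neg, map_one, map_ofNat]
    rw [hc, mul_assoc, PowerSeries.coeff_C_mul]
    congr 1
    rw [PowerSeries.coeff_X_pow_mul']
    split
    · exact (Overpart.coeff_DD_mul_PP (n - j*j) (2*n+2) (by omega))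
    · rfl
  rw [Finset.sum_congr rfl hterm] at h0
  rw [Finset.sum_range_succ' (fun j => (if j = 0 then 1 else 2 * (-1 : ℤ)^j) *
      (if j*j ≤ n then (overpartitionCount (n - j*j) : ℤ) else 0)) (2*n+2)] at h0
  simp only [if_pos rfl, Nat.zero_le, Nat.sub_zero, Nat.mul_zero, Nat.zero_mul, one_mul,
    Nat.succ_ne_zero, if_true, if_false, eq_self_iff_true, iff_false] at h0
  -- h0 : ∑ j ∈ range (2n+2), 2*(-1)^(j+1) * (if (j+1)*(j+1) ≤ n then ↑overpartitionCount (n - (j+1)*(j+1)) else 0)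
  --        + ↑(overpartitionCount n) = 0
  have hpbar : ∀ j : ℕ, pbar ((n:ℤ) - ((j:ℤ)+1)^2) =
      (if (j+1)*(j+1) ≤ n then (overpartitionCount (n - (j+1)*(j+1)) : ℤ) else 0) := by
    intro j
    have hcast : ((j:ℤ)+1)^2 = (((j+1)*(j+1) : ℕ) : ℤ) := by push_cast; ring
    rw [pbar, hcast]
    by_cases h : (j+1)*(j+1) ≤ n
    · rw [if_pos (by omega : (0:ℤ) ≤ (n:ℤ) - (((j+1)*(j+1) : ℕ) : ℤ)), if_pos h]
      have ht : ((n:ℤ) - (((j+1)*(j+1) : ℕ) : ℤ)).toNat = n - (j+1)*(j+1) := by omega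
      rw [ht]
    · rw [if_neg (by omega : ¬ (0:ℤ) ≤ (n:ℤ) - (((j+1)*(j+1) : ℕ) : ℤ)), if_neg h]
  have htsum : ∑' j : ℕ, (-1 : ℤ)^(j+1) * pbar ((n:ℤ) - ((j:ℤ)+1)^2) =
      ∑ j ∈ Finset.range (2*n+2), (-1 : ℤ)^(j+1) * pbar ((n:ℤ) - ((j:ℤ)+1)^2) := by
    apply tsum_eq_sum
    intro j hj
    rw [Finset.mem_range, not_lt] at hj
    have hneg : (n:ℤ) - ((j:ℤ)+1)^2 < 0 := by
      have : (n:ℤ) < ((j:ℤ)+1)^2 := by nlinarith [Int.ofNat_le.mpr hj]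
      omega
    rw [pbar, if_neg (by omega)]
    ring
  have hpn : pbar (n : ℤ) = (overpartitionCount n : ℤ) := by
    rw [pbar, if_pos (by positivity), Int.toNat_natCast]
  rw [htsum, hpn, Finset.mul_sum]
  have hmatch : ∀ j ∈ Finset.range (2*n+2),
      2 * ((-1 : ℤ)^(j+1) * pbar ((n:ℤ) - ((j:ℤ)+1)^2)) =
        2 * (-1 : ℤ)^(j+1) *
          (if (j+1)*(j+1) ≤ n then (overpartitionCount (n - (j+1)*(j+1)) : ℤ) else 0) := by
    intro j _
    rw [hpbar j]
    ring
  rw [Finset.sum_congr rfl hmatch]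
  linarith [h0]
end

section
/- The function p_od satisfies, for all n ≥ 1: ∑_{j=0}^{∞} (-1)^j ( p_od(n - j(2j+1)) - p_od(n - (j+1)(2j+1)) ) = 0, where p_od(m) = 0 for m < 0 (the sum is finite). -/
/-- number of partitions of `n` in which the odd parts are distinct -/
def podCount (n : ℕ) : ℕ :=
  (Finset.univ.filter
    (fun l : Nat.Partition n => (l.parts.filter (fun i => i % 2 = 1)).Nodup)).card

/-- `podCount` extended by `0` on negative integers -/
def pod (m : ℤ) : ℤ := if 0 ≤ m then podCount m.toNat else 0

open PowerSeries

namespace PodAux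

noncomputable section

variable {α : Type*}

open Finset

open scoped Classical

universe u
variable {ι : Type u}

/-- A convenience constructor for the power series whose coefficients indicate a subset. -/
def indicatorSeries (α : Type*) [Semiring α] (s : Set ℕ) : PowerSeries α :=
  PowerSeries.mk fun n => if n ∈ s then 1 else 0

theorem coeff_indicator (s : Set ℕ) [Semiring α] (n : ℕ) :
    coeff n (indicatorSeries α s) = if n ∈ s then 1 else 0 :=
  coeff_mk _ _

theorem coeff_indicator_pos (s : Set ℕ) [Semiring α] (n : ℕ) (h : n ∈ s) :
    coeff n (indicatorSeries α s) = 1 := by rw [coeff_indicator, if_pos h]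

theorem coeff_indicator_neg (s : Set ℕ) [Semiring α] (n : ℕ) (h : n ∉ s) :
    coeff n (indicatorSeries α s) = 0 := by rw [coeff_indicator, if_neg h]

theorem constantCoeff_indicator (s : Set ℕ) [Semiring α] :
    constantCoeff (indicatorSeries α s) = if 0 ∈ s then 1 else 0 :=
  rfl

theorem two_series (i : ℕ) [Semiring α] :
    1 + (X : PowerSeries α) ^ i.succ = indicatorSeries α {0, i.succ} := by
  ext n
  simp only [coeff_indicator, coeff_one, coeff_X_pow, Set.mem_insert_iff, Set.mem_singleton_iff,
    map_add]
  cases' n with d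
  · simp [(Nat.succ_ne_zero i).symm]
  · simp [Nat.succ_ne_zero d]

theorem num_series' [Field α] (i : ℕ) :
    (1 - (X : PowerSeries α) ^ (i + 1))⁻¹ = indicatorSeries α {k | i + 1 ∣ k} := by
  rw [PowerSeries.inv_eq_iff_mul_eq_one]
  · ext n
    cases n with
    | zero => simp [mul_sub, zero_pow, constantCoeff_indicator]
    | succ n =>
      simp only [coeff_one, if_false, mul_sub, mul_one, coeff_indicator,
        LinearMap.map_sub, reduceCtorEq]
      simp_rw [coeff_mul, coeff_X_pow, coeff_indicator, @boole_mul _ _ _ _]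
      erw [@sum_ite _ _ _ _ _ (fun x => Classical.propDecidable _), sum_ite]
      simp_rw [@filter_filter _ _ _ _ _, sum_const_zero, add_zero, sum_const, nsmul_eq_mul, mul_one,
        sub_eq_iff_eq_add, zero_add]
      symm
      split_ifs with h
      · suffices #{a ∈ antidiagonal (n + 1) | i + 1 ∣ a.fst ∧ a.snd = i + 1} = 1 by
          simp only [Set.mem_setOf_eq]; convert congr_arg ((↑) : ℕ → α) this; norm_cast
        rw [card_eq_one]
        cases' h with p hp
        refine ⟨((i + 1) * (p - 1), i + 1), ?_⟩
        ext ⟨a₁, a₂⟩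
        simp only [mem_filter, Prod.mk.injEq, HasAntidiagonal.mem_antidiagonal, mem_singleton]
        constructor
        · rintro ⟨a_left, ⟨a, rfl⟩, rfl⟩
          refine ⟨?_, rfl⟩
          rw [Nat.mul_sub_left_distrib, ← hp, ← a_left, mul_one, Nat.add_sub_cancel]
        · rintro ⟨rfl, rfl⟩
          match p with
          | 0 => rw [mul_zero] at hp; cases hp
          | p + 1 => rw [hp]; simp [mul_add]
      · suffices #{a ∈ antidiagonal (n + 1) | i + 1 ∣ a.fst ∧ a.snd = i + 1} = 0 by
          simp only [Set.mem_setOf_eq]; convert congr_arg ((↑) : ℕ → α) this; norm_cast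
        rw [card_eq_zero]
        apply eq_empty_of_forall_notMem
        simp only [Prod.forall, mem_filter, not_and, HasAntidiagonal.mem_antidiagonal]
        rintro _ h₁ h₂ ⟨a, rfl⟩ rfl
        apply h
        simp [← h₂]
  · simp [zero_pow]

-- The main workhorse.
theorem partialGF_prop (α : Type*) [CommSemiring α] (n : ℕ) (s : Finset ℕ) (hs : ∀ i ∈ s, 0 < i)
    (c : ℕ → Set ℕ) (hc : ∀ i, i ∉ s → 0 ∈ c i) :
    #{p : n.Partition | (∀ j, p.parts.count j ∈ c j) ∧ ∀ j ∈ p.parts, j ∈ s} =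
      coeff n (∏ i ∈ s, indicatorSeries α ((· * i) '' c i)) := by
  simp_rw [coeff_prod, coeff_indicator, prod_boole, sum_boole]
  apply congr_arg
  simp only [mem_univ, forall_true_left, not_and, not_forall, exists_prop,
    Set.mem_image, not_exists]
  set φ : (a : Nat.Partition n) →
    a ∈ filter (fun p ↦ (∀ (j : ℕ), Multiset.count j p.parts ∈ c j) ∧ ∀ j ∈ p.parts, j ∈ s) univ →
    ℕ →₀ ℕ := fun p _ => {
      toFun := fun i => Multiset.count i p.parts • i
      support := Finset.filter (fun i => i ≠ 0) p.parts.toFinset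
      mem_support_toFun := fun a => by
        simp only [smul_eq_mul, ne_eq, mul_eq_zero, Multiset.count_eq_zero]
        rw [not_or, not_not]
        simp only [Multiset.mem_toFinset, not_not, mem_filter] }
  refine Finset.card_bij φ ?_ ?_ ?_
  · intro a ha
    simp only [φ, not_forall, not_exists, not_and, exists_prop, mem_filter]
    rw [mem_finsuppAntidiag]
    dsimp only [ne_eq, smul_eq_mul, id_eq, eq_mpr_eq_cast, le_eq_subset, Finsupp.coe_mk]
    simp only [mem_univ, forall_true_left, not_and, not_forall, exists_prop,
      mem_filter, true_and] at ha
    refine ⟨⟨?_, fun i ↦ ?_⟩, fun i _ ↦ ⟨a.parts.count i, ha.1 i, rfl⟩⟩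
    · conv_rhs => simp [← a.parts_sum]
      rw [sum_multiset_count_of_subset _ s]
      · simp only [smul_eq_mul]
      · intro i
        simp only [Multiset.mem_toFinset, not_not, mem_filter]
        apply ha.2
    · simp only [ne_eq, Multiset.mem_toFinset, not_not, mem_filter, and_imp]
      exact fun hi _ ↦ ha.2 i hi
  · intro p₁ hp₁ p₂ hp₂ h
    apply Nat.Partition.ext
    simp only [true_and, mem_univ, mem_filter] at hp₁ hp₂
    ext i
    simp only [φ, ne_eq, Multiset.mem_toFinset, not_not, smul_eq_mul, Finsupp.mk.injEq] at h
    by_cases hi : i = 0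
    · rw [hi]
      rw [Multiset.count_eq_zero_of_notMem]
      · rw [Multiset.count_eq_zero_of_notMem]
        intro a; exact Nat.lt_irrefl 0 (hs 0 (hp₂.2 0 a))
      intro a; exact Nat.lt_irrefl 0 (hs 0 (hp₁.2 0 a))
    · rw [← mul_left_inj' hi]
      rw [funext_iff] at h
      exact h.2 i
  · simp only [φ, mem_filter, mem_finsuppAntidiag, mem_univ, exists_prop, true_and, and_assoc]
    rintro f ⟨hf, hf₃, hf₄⟩
    have hf' : f ∈ finsuppAntidiag s n := mem_finsuppAntidiag.mpr ⟨hf, hf₃⟩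
    simp only [mem_finsuppAntidiag] at hf'
    refine ⟨⟨∑ i ∈ s, Multiset.replicate (f i / i) i, ?_, ?_⟩, ?_, ?_, ?_⟩
    · intro i hi
      simp only [exists_prop, Multiset.mem_sum, mem_map, Function.Embedding.coeFn_mk] at hi
      rcases hi with ⟨t, ht, z⟩
      apply hs
      rwa [Multiset.eq_of_mem_replicate z]
    · simp_rw [Multiset.sum_sum, Multiset.sum_replicate, Nat.nsmul_eq_mul]
      rw [← hf'.1]
      refine sum_congr rfl fun i hi => Nat.div_mul_cancel ?_
      rcases hf₄ i hi with ⟨w, _, hw₂⟩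
      rw [← hw₂]
      exact dvd_mul_left _ _
    · intro i
      simp_rw [Multiset.count_sum', Multiset.count_replicate, sum_ite_eq']
      split_ifs with h
      · rcases hf₄ i h with ⟨w, hw₁, hw₂⟩
        rwa [← hw₂, Nat.mul_div_cancel _ (hs i h)]
      · exact hc _ h
    · intro i hi
      rw [Multiset.mem_sum] at hi
      rcases hi with ⟨j, hj₁, hj₂⟩
      rwa [Multiset.eq_of_mem_replicate hj₂]
    · ext i
      simp_rw [Multiset.count_sum', Multiset.count_replicate, sum_ite_eq']
      simp only [ne_eq, Multiset.mem_toFinset, not_not, smul_eq_mul, ite_mul,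
        zero_mul, Finsupp.coe_mk]
      split_ifs with h
      · apply Nat.div_mul_cancel
        rcases hf₄ i h with ⟨w, _, hw₂⟩
        apply Dvd.intro_left _ hw₂
      · apply symm
        rw [← Finsupp.notMem_support_iff]
        exact notMem_mono hf'.2 h

end

end PodAux

namespace PodAux

open Finset

variable {R : Type*} [CommRing R] (q : R)

/-- Gaussian binomial coefficients via the Pascal recurrence. -/
def gb (q : R) : ℕ → ℕ → R
  | 0, 0 => 1
  | 0, _+1 => 0
  | n+1, 0 => gb q n 0
  | n+1, k+1 => gb q n k + q^(k+1) * gb q n (k+1)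

@[simp] lemma gb_zero_right (n : ℕ) : gb q n 0 = 1 := by
  induction n with
  | zero => rfl
  | succ n ih => simpa [gb] using ih

lemma gb_succ_succ (n k : ℕ) : gb q (n+1) (k+1) = gb q n k + q^(k+1) * gb q n (k+1) := rfl

lemma gb_of_lt (n k : ℕ) (h : n < k) : gb q n k = 0 := by
  induction n generalizing k with
  | zero => match k, h with | k+1, _ => rfl
  | succ n ih =>
    match k, h with
    | k+1, h => rw [gb_succ_succ, ih k (by omega), ih (k+1) (by omega), mul_zero, add_zero]

lemma gb_diag (n : ℕ) : gb q n n = 1 := by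
  induction n with
  | zero => rfl
  | succ n ih => rw [gb_succ_succ, ih, gb_of_lt q n (n+1) (by omega), mul_zero, add_zero]

lemma gb_one (n : ℕ) : gb q n 1 = ∑ i ∈ range n, q ^ i := by
  induction n with
  | zero => simp [gb_of_lt]
  | succ n ih =>
    rw [show (1:ℕ) = 0 + 1 from rfl, gb_succ_succ, gb_zero_right, ih, geom_sum_succ]
    ring

lemma gb_pascal2 (n k : ℕ) : gb q (n+1) (k+1) = gb q n (k+1) + q^(n-k) * gb q n k := by
  induction n generalizing k with
  | zero =>
    cases k with
    | zero => simp [gb_succ_succ, gb_of_lt]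
    | succ j => simp [gb_succ_succ, gb_of_lt]
  | succ n ih =>
    rcases le_or_gt k n with hk | hk
    · cases k with
      | zero =>
        rw [gb_succ_succ, gb_zero_right, gb_one]
        have h1 := geom_sum_succ (x := q) (n := n+1)
        have h2 := geom_sum_succ' (x := q) (n := n+1)
        simp only [Nat.sub_zero, pow_one, zero_add, mul_one]
        linear_combination h2 - h1
      | succ j =>
        have hj : j + 1 ≤ n := hk
        have E0 : gb q (n+1+1) (j+1+1) = gb q (n+1) (j+1) + q^(j+1+1) * gb q (n+1) (j+1+1) :=
          gb_succ_succ q (n+1) (j+1)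
        have E1 : gb q (n+1) (j+1) = gb q n (j+1) + q^(n-j) * gb q n j := ih j
        have E2 : gb q (n+1) (j+1+1) = gb q n (j+1+1) + q^(n-(j+1)) * gb q n (j+1) := ih (j+1)
        have E3 : gb q (n+1) (j+1+1) = gb q n (j+1) + q^(j+1+1) * gb q n (j+1+1) :=
          gb_succ_succ q n (j+1)
        have E4 : gb q (n+1) (j+1) = gb q n j + q^(j+1) * gb q n (j+1) := gb_succ_succ q n j
        have P : q^(j+1+1) * q^(n-(j+1)) = q^(n-j) * q^(j+1) := by
          rw [← pow_add, ← pow_add]; congr 1; omega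
        simp only [Nat.succ_sub_succ]
        linear_combination E0 + E1 + q^(j+1+1) * E2 - E3 - q^(n-j) * E4 + gb q n (j+1) * P
    · by_cases hk2 : k = n + 1
      · subst hk2
        rw [gb_diag q (n+1+1), gb_of_lt q (n+1) (n+1+1) (by omega), gb_diag q (n+1)]
        simp
      · rw [gb_of_lt q (n+1+1) (k+1) (by omega), gb_of_lt q (n+1) (k+1) (by omega),
          gb_of_lt q (n+1) k (by omega)]
        simp

@[simp] lemma gb_zero_zero : gb q 0 0 = 1 := rfl

theorem qbinom (n : ℕ) (y z : R) :
    ∏ i ∈ range n, (y + z * q^i) =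
      ∑ k ∈ range (n+1), z^k * y^(n-k) * q^(Nat.choose k 2) * gb q n k := by
  induction n with
  | zero => simp
  | succ n ih =>
    have choose2 : ∀ i : ℕ, (i+1).choose 2 = i + i.choose 2 := fun i => by
      rw [Nat.choose_succ_succ, Nat.choose_one_right]
    have hA : (∑ k ∈ range (n+1), z^k * y^(n+1-k) * q^(Nat.choose k 2) * gb q n k)
        = (∑ i ∈ range (n+1), z^(i+1) * y^(n-i) * q^(Nat.choose (i+1) 2) * gb q n (i+1))
            + y^(n+1) := by
      rw [Finset.sum_range_succ' (fun k => z^k * y^(n+1-k) * q^(Nat.choose k 2) * gb q n k) n]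
      rw [Finset.sum_range_succ
        (fun i => z^(i+1) * y^(n-i) * q^(Nat.choose (i+1) 2) * gb q n (i+1)) n]
      rw [gb_of_lt q n (n+1) (by omega), mul_zero, add_zero]
      have h0 : Nat.choose 0 2 = 0 := rfl
      simp only [pow_zero, one_mul, Nat.sub_zero, gb_zero_right, h0, mul_one]
      congr 1
      refine Finset.sum_congr rfl fun i hi => ?_
      have h1 : n + 1 - (i+1) = n - i := by omega
      rw [h1]
    rw [Finset.prod_range_succ, ih]
    calc (∑ k ∈ range (n+1), z^k * y^(n-k) * q^(Nat.choose k 2) * gb q n k) * (y + z * q^n)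
        = (∑ k ∈ range (n+1), z^k * y^(n+1-k) * q^(Nat.choose k 2) * gb q n k)
            + ∑ i ∈ range (n+1), z^(i+1) * y^(n-i) * q^(Nat.choose (i+1) 2 + (n-i)) * gb q n i := by
          rw [mul_add, Finset.sum_mul, Finset.sum_mul]
          congr 1
          · refine Finset.sum_congr rfl fun k hk => ?_
            have h1 : n + 1 - k = (n - k) + 1 := by
              have := Finset.mem_range.mp hk; omega
            rw [h1, pow_succ]; ring
          · refine Finset.sum_congr rfl fun i hi => ?_
            have hi' := Finset.mem_range.mp hi
            have h2 : (i+1).choose 2 + (n-i) = i.choose 2 + n := by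
              rw [choose2]; omega
            rw [h2, pow_add]; ring
      _ = ∑ k ∈ range (n+1+1), z^k * y^(n+1-k) * q^(Nat.choose k 2) * gb q (n+1) k := by
          rw [Finset.sum_range_succ'
            (fun k => z^k * y^(n+1-k) * q^(Nat.choose k 2) * gb q (n+1) k) (n+1)]
          rw [hA]
          have hsplit : ∀ i ∈ range (n+1),
              z^(i+1) * y^(n+1-(i+1)) * q^(Nat.choose (i+1) 2) * gb q (n+1) (i+1)
              = z^(i+1) * y^(n-i) * q^(Nat.choose (i+1) 2) * gb q n (i+1)
                + z^(i+1) * y^(n-i) * q^(Nat.choose (i+1) 2 + (n-i)) * gb q n i := by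
            intro i hi
            have h1 : n + 1 - (i+1) = n - i := by omega
            rw [h1, gb_pascal2, pow_add]; ring
          rw [Finset.sum_congr rfl hsplit, Finset.sum_add_distrib]
          simp only [pow_zero, one_mul, Nat.sub_zero, gb_zero_right, Nat.choose_zero_right]
          have : q ^ Nat.choose 0 2 = 1 := by norm_num
          rw [this]
          ring

def poch (q : R) (m : ℕ) : R := ∏ i ∈ range m, (1 - q^(i+1))

@[simp] lemma poch_zero : poch q 0 = 1 := rfl

lemma poch_succ (m : ℕ) : poch q (m+1) = poch q m * (1 - q^(m+1)) := Finset.prod_range_succ _ _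

theorem gb_mul_poch : ∀ n k : ℕ, k ≤ n → gb q n k * (poch q k * poch q (n-k)) = poch q n := by
  intro n
  induction n with
  | zero => intro k hk; interval_cases k; simp
  | succ n ih =>
    intro k hk
    cases k with
    | zero => simp
    | succ j =>
      by_cases hj : j + 1 ≤ n
      · have E1 : gb q n j * (poch q j * poch q (n-j)) = poch q n := ih j (by omega)
        have E2 : gb q n (j+1) * (poch q (j+1) * poch q (n-(j+1))) = poch q n := ih (j+1) hj
        rw [gb_succ_succ]
        have hs : n + 1 - (j+1) = n - j := by omega
        rw [hs]
        have hnj : n - j = (n - (j+1)) + 1 := by omega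
        rw [hnj] at E1 ⊢
        rw [poch_succ q (n-(j+1))] at E1 ⊢
        rw [poch_succ q j] at E2 ⊢
        rw [poch_succ q n]
        have hq : q^(j+1) * q^((n-(j+1))+1) = q^(n+1) := by
          rw [← pow_add]; congr 1; omega
        linear_combination (1 - q^(j+1)) * E1 + q^(j+1) * (1 - q^((n-(j+1))+1)) * E2
          - poch q n * hq
      · have : j = n := by omega
        subst this
        rw [gb_diag]
        simp [Nat.sub_self]

end PodAux

namespace PodAux

open Finset PowerSeries

noncomputable section

abbrev PS := PowerSeries ℚ

def Q4 : PS := (X : PS)^4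

/-- exponent `|k-m|(2|k-m| ± 1)`: generalized "triangular" exponents. -/
def tri (k m : ℕ) : ℕ := if m ≤ k then (k-m)*(2*(k-m)+1) else (m-k)*(2*(m-k)-1)

lemma two_choose_two (k : ℕ) : 2 * Nat.choose k 2 = k * (k-1) := by
  induction k with
  | zero => rfl
  | succ j ih =>
    rw [Nat.choose_succ_succ, Nat.choose_one_right, Nat.mul_add, ih]
    cases j with
    | zero => rfl
    | succ i => simp only [Nat.add_sub_cancel]; ring

lemma exp_eq (m k : ℕ) (hk : k ≤ 2*m) :
    3*k + 4*m*(2*m-k) + 4 * Nat.choose k 2 = 6*m*m + m + tri k m := by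
  have h4 : 4 * Nat.choose k 2 = 2 * (k*k - k) := by
    have h2 := two_choose_two k
    have hk1 : k*(k-1) = k*k - k := by
      cases k with
      | zero => rfl
      | succ j =>
        have e : (j+1)*(j+1) = (j+1)*j + (j+1) := by ring
        rw [Nat.succ_sub_one]
        omega
    omega
  have hkk : k ≤ k*k := by
    rcases Nat.eq_zero_or_pos k with rfl | h
    · simp
    · exact Nat.le_mul_of_pos_left k h
  rw [h4, tri]
  rcases le_or_gt m k with h | h
  · rw [if_pos h]
    zify [h, hk, hkk]
    ring
  · rw [if_neg (by omega)]
    have h1 : 1 ≤ 2*(m-k) := by omega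
    zify [hk, le_of_lt h, hkk, h1]
    ring

lemma prod_range_two_mul {M : Type*} [CommMonoid M] (f : ℕ → M) (m : ℕ) :
    ∏ a ∈ range (2*m), f a = ∏ i ∈ range m, (f (2*i) * f (2*i+1)) := by
  induction m with
  | zero => rfl
  | succ m ih =>
    have h : 2*(m+1) = (2*m)+1+1 := by ring
    rw [h, prod_range_succ, prod_range_succ, ih, prod_range_succ]
    rw [mul_assoc]

lemma sum_4i3 (m : ℕ) : ∑ i ∈ range m, (4*i+3) = 2*m*m + m := by
  induction m with
  | zero => rfl
  | succ m ih => rw [Finset.sum_range_succ, ih]; ring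

lemma X_pow_ne_zero (e : ℕ) : (X : PS)^e ≠ 0 := pow_ne_zero _ X_ne_zero

theorem main_jtp (m : ℕ) :
    ∏ a ∈ range (2*m), (1 - (X:PS)^(2*a+1)) =
      ∑ k ∈ range (2*m+1), (-1)^(k+m) * (X:PS)^(tri k m) * gb Q4 (2*m) k := by
  have h := qbinom Q4 (2*m) ((X:PS)^(4*m)) (-(X:PS)^3)
  -- rewrite LHS of h
  have hL : ∏ i ∈ range (2*m), ((X:PS)^(4*m) + (-(X:PS)^3) * Q4^i)
      = (-1)^m * (X:PS)^(6*m*m+m) * ∏ a ∈ range (2*m), (1 - (X:PS)^(2*a+1)) := by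
    have hfac : ∀ i ∈ range (2*m), ((X:PS)^(4*m) + (-(X:PS)^3) * Q4^i)
        = (X:PS)^(4*m) - (X:PS)^(4*i+3) := by
      intro i _
      have : ((X:PS)^3) * Q4^i = (X:PS)^(4*i+3) := by
        rw [Q4, ← pow_mul, ← pow_add]; congr 1; ring
      rw [neg_mul, ← this]; ring
    rw [Finset.prod_congr rfl hfac]
    have h2m : 2*m = m + m := by ring
    conv_lhs => rw [h2m, Finset.prod_range_add]
    have hA1 : ∏ i ∈ range m, ((X:PS)^(4*m) - (X:PS)^(4*i+3))
        = ((-1)^m * (X:PS)^(2*m*m+m)) * ∏ i ∈ range m, (1 - (X:PS)^(4*i+1)) := by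
      have hfac2 : ∀ i ∈ range m, ((X:PS)^(4*m) - (X:PS)^(4*i+3))
          = (-1) * (X:PS)^(4*i+3) * (1 - (X:PS)^(4*(m-i)-3)) := by
        intro i hi
        have hi' := Finset.mem_range.mp hi
        have hpow : (X:PS)^(4*i+3) * (X:PS)^(4*(m-i)-3) = (X:PS)^(4*m) := by
          rw [← pow_add]; congr 1; omega
        linear_combination - hpow
      rw [Finset.prod_congr rfl hfac2]
      rw [Finset.prod_mul_distrib, Finset.prod_mul_distrib]
      rw [Finset.prod_const, Finset.prod_pow_eq_pow_sum, sum_4i3]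
      simp only [Finset.card_range]
      have hrefl : ∏ i ∈ range m, (1 - (X:PS)^(4*(m-i)-3))
          = ∏ i ∈ range m, (1 - (X:PS)^(4*i+1)) := by
        rw [← Finset.prod_range_reflect (fun i => 1 - (X:PS)^(4*i+1)) m]
        refine Finset.prod_congr rfl fun i hi => ?_
        have hi' := Finset.mem_range.mp hi
        congr 2
        omega
      rw [hrefl]
    have hA2 : ∏ i ∈ range m, ((X:PS)^(4*m) - (X:PS)^(4*(m+i)+3))
        = (X:PS)^(4*m*m) * ∏ i ∈ range m, (1 - (X:PS)^(4*i+3)) := by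
      have hfac3 : ∀ i ∈ range m, ((X:PS)^(4*m) - (X:PS)^(4*(m+i)+3))
          = (X:PS)^(4*m) * (1 - (X:PS)^(4*i+3)) := by
        intro i _
        have hpow : (X:PS)^(4*m) * (X:PS)^(4*i+3) = (X:PS)^(4*(m+i)+3) := by
          rw [← pow_add]; congr 1; ring
        linear_combination - hpow
      rw [Finset.prod_congr rfl hfac3, Finset.prod_mul_distrib, Finset.prod_const, ← pow_mul]
      simp only [Finset.card_range]
    rw [hA1, hA2]
    rw [prod_range_two_mul (fun a => 1 - (X:PS)^(2*a+1)) m]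
    have hpair : ∏ i ∈ range m, ((1 - (X:PS)^(2*(2*i)+1)) * (1 - (X:PS)^(2*(2*i+1)+1)))
        = (∏ i ∈ range m, (1 - (X:PS)^(4*i+1))) * ∏ i ∈ range m, (1 - (X:PS)^(4*i+3)) := by
      rw [← Finset.prod_mul_distrib]
      refine Finset.prod_congr rfl fun i _ => ?_
      congr 3 <;> ring
    rw [hpair]
    have hXc : (X:PS)^(2*m*m+m) * (X:PS)^(4*m*m) = (X:PS)^(6*m*m+m) := by
      rw [← pow_add]; congr 1; ring
    rw [← hXc]
    ring
  -- rewrite RHS of h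
  have hR : ∑ k ∈ range (2*m+1), (-(X:PS)^3)^k * ((X:PS)^(4*m))^(2*m-k) * Q4^(Nat.choose k 2)
        * gb Q4 (2*m) k
      = (-1)^m * (X:PS)^(6*m*m+m) *
        ∑ k ∈ range (2*m+1), (-1)^(k+m) * (X:PS)^(tri k m) * gb Q4 (2*m) k := by
    rw [Finset.mul_sum]
    refine Finset.sum_congr rfl fun k hk => ?_
    have hk' : k ≤ 2*m := by have := Finset.mem_range.mp hk; omega
    have h1 : (-(X:PS)^3)^k = (-1)^k * (X:PS)^(3*k) := by
      rw [neg_pow, ← pow_mul]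
    have h2 : ((X:PS)^(4*m))^(2*m-k) = (X:PS)^(4*m*(2*m-k)) := by
      rw [← pow_mul]
    have h3 : (Q4 : PS)^(Nat.choose k 2) = (X:PS)^(4 * Nat.choose k 2) := by
      rw [Q4, ← pow_mul]
    have hsign : ((-1:PS))^k = (-1)^m * (-1)^(k+m) := by
      rw [← pow_add, show m+(k+m) = k + 2*m from by ring, pow_add, pow_mul]
      norm_num
    have hX : (X:PS)^(3*k) * (X:PS)^(4*m*(2*m-k)) * (X:PS)^(4*Nat.choose k 2)
        = (X:PS)^(6*m*m+m) * (X:PS)^(tri k m) := by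
      rw [← pow_add, ← pow_add, exp_eq m k hk', ← pow_add]
    calc (-(X:PS)^3)^k * ((X:PS)^(4*m))^(2*m-k) * Q4^(Nat.choose k 2) * gb Q4 (2*m) k
        = ((-1)^k : PS) * ((X:PS)^(3*k) * (X:PS)^(4*m*(2*m-k)) * (X:PS)^(4*Nat.choose k 2))
            * gb Q4 (2*m) k := by rw [h1, h2, h3]; ring
      _ = ((-1)^k : PS) * ((X:PS)^(6*m*m+m) * (X:PS)^(tri k m)) * gb Q4 (2*m) k := by
            rw [hX]
      _ = (-1)^m * (X:PS)^(6*m*m+m) * ((-1)^(k+m) * (X:PS)^(tri k m) * gb Q4 (2*m) k) := by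
            rw [hsign]; ring
  rw [hL, hR] at h
  have hne : ((-1:PS))^m * (X:PS)^(6*m*m+m) ≠ 0 :=
    mul_ne_zero (pow_ne_zero _ (by norm_num)) (X_pow_ne_zero _)
  exact mul_left_cancel₀ hne h

lemma constCoeff_poch4 (m : ℕ) : constantCoeff (poch Q4 m) = 1 := by
  rw [poch, map_prod]
  apply Finset.prod_eq_one
  intro i _
  have h0 : constantCoeff (Q4^(i+1)) = 0 := by
    rw [Q4, ← pow_mul, map_pow, constantCoeff_X]
    exact zero_pow (by omega)
  rw [map_sub, map_one, h0, sub_zero]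

def Im (m : ℕ) : PS := (poch Q4 m)⁻¹

lemma poch4_mul_Im (m : ℕ) : poch Q4 m * Im m = 1 :=
  PowerSeries.mul_inv_cancel _ (by rw [constCoeff_poch4]; norm_num)

lemma dvd_prod_one_sub (N : ℕ) (s : Finset ℕ) (c : ℕ → ℕ) (hc : ∀ i ∈ s, N ≤ c i) :
    (X:PS)^N ∣ (∏ i ∈ s, (1 - (X:PS)^(c i))) - 1 := by
  classical
  induction s using Finset.induction_on with
  | empty => simp
  | @insert a s' ha ih =>
    rw [Finset.prod_insert ha]
    have h1 : (X:PS)^N ∣ (∏ i ∈ s', (1 - (X:PS)^(c i))) - 1 :=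
      ih (fun i hi => hc i (Finset.mem_insert_of_mem hi))
    have h2 : (X:PS)^N ∣ (X:PS)^(c a) := pow_dvd_pow _ (hc a (Finset.mem_insert_self a s'))
    have hr : (1 - (X:PS)^(c a)) * ∏ i ∈ s', (1 - (X:PS)^(c i)) - 1
        = ((∏ i ∈ s', (1 - (X:PS)^(c i))) - 1) - (X:PS)^(c a) * ∏ i ∈ s', (1 - (X:PS)^(c i)) := by
      ring
    rw [hr]
    exact dvd_sub h1 (h2.mul_right _)

lemma poch4_sub_dvd (s t : ℕ) (hst : s ≤ t) : (X:PS)^(4*s+4) ∣ poch Q4 t - poch Q4 s := by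
  obtain ⟨d, rfl⟩ := Nat.exists_eq_add_of_le hst
  have hsplit : poch Q4 (s+d) = poch Q4 s * ∏ i ∈ range d, (1 - (X:PS)^(4*(s+i)+4)) := by
    rw [poch, poch, Finset.prod_range_add]
    congr 1
    refine Finset.prod_congr rfl fun i _ => ?_
    have he : 4*(s+i+1) = 4*(s+i)+4 := by ring
    rw [Q4, ← pow_mul, he]
  rw [hsplit]
  have hr : poch Q4 s * ∏ i ∈ range d, (1 - (X:PS)^(4*(s+i)+4)) - poch Q4 s
      = poch Q4 s * ((∏ i ∈ range d, (1 - (X:PS)^(4*(s+i)+4))) - 1) := by ring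
  rw [hr]
  exact Dvd.dvd.mul_left (dvd_prod_one_sub (4*s+4) (range d) (fun i => 4*(s+i)+4)
    (fun i _ => by show (4*s+4 : ℕ) ≤ 4*(s+i)+4; omega)) _

lemma dvd_mul_sub_mul {N : ℕ} {a b c d : PS} (h1 : (X:PS)^N ∣ a - b) (h2 : (X:PS)^N ∣ c - d) :
    (X:PS)^N ∣ a*c - b*d := by
  have hr : a*c - b*d = a*(c-d) + d*(a-b) := by ring
  rw [hr]
  exact dvd_add (h2.mul_left a) (h1.mul_left d)

lemma gb_sub_Im (m k : ℕ) (hk : k ≤ 2*m) :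
    (X:PS)^(4*(min k (2*m-k))+4) ∣ gb Q4 (2*m) k - Im m := by
  set s := min k (2*m-k) with hs
  have hsk : s ≤ k := min_le_left _ _
  have hs2 : s ≤ 2*m-k := min_le_right _ _
  have hsm : s ≤ m := by omega
  have hU : (poch Q4 k * poch Q4 (2*m-k) * poch Q4 m) * (gb Q4 (2*m) k - Im m)
      = poch Q4 (2*m) * poch Q4 m - poch Q4 k * poch Q4 (2*m-k) := by
    have h1 := gb_mul_poch Q4 (2*m) k hk
    have h2 := poch4_mul_Im m
    linear_combination poch Q4 m * h1 - poch Q4 k * poch Q4 (2*m-k) * h2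
  have hV : (X:PS)^(4*s+4) ∣ poch Q4 (2*m) * poch Q4 m - poch Q4 k * poch Q4 (2*m-k) := by
    have d1 : (X:PS)^(4*s+4) ∣ poch Q4 (2*m) * poch Q4 m - poch Q4 s * poch Q4 s :=
      dvd_mul_sub_mul (poch4_sub_dvd s (2*m) (by omega)) (poch4_sub_dvd s m hsm)
    have d2 : (X:PS)^(4*s+4) ∣ poch Q4 k * poch Q4 (2*m-k) - poch Q4 s * poch Q4 s :=
      dvd_mul_sub_mul (poch4_sub_dvd s k hsk) (poch4_sub_dvd s (2*m-k) hs2)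
    have hr : poch Q4 (2*m) * poch Q4 m - poch Q4 k * poch Q4 (2*m-k)
        = (poch Q4 (2*m) * poch Q4 m - poch Q4 s * poch Q4 s)
          - (poch Q4 k * poch Q4 (2*m-k) - poch Q4 s * poch Q4 s) := by ring
    rw [hr]
    exact dvd_sub d1 d2
  set U := poch Q4 k * poch Q4 (2*m-k) * poch Q4 m with hUdef
  have hUc : constantCoeff U ≠ 0 := by
    rw [hUdef]
    simp [map_mul, constCoeff_poch4]
  have hUi : U⁻¹ * U = 1 := by
    rw [mul_comm]
    exact PowerSeries.mul_inv_cancel _ hUc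
  have hgoal : gb Q4 (2*m) k - Im m = U⁻¹ * (U * (gb Q4 (2*m) k - Im m)) := by
    rw [← mul_assoc, hUi, one_mul]
  rw [hgoal, hU]
  exact Dvd.dvd.mul_left hV _

end

end PodAux

open PowerSeries



namespace PodAux

open Finset

open scoped Classical

noncomputable section

def mkO : ℕ ↪ ℕ := ⟨fun i => 2*i+1, fun x y h => by have : 2*x+1 = 2*y+1 := h; omega⟩
def mkE : ℕ ↪ ℕ := ⟨fun i => 2*i+2, fun x y h => by have : 2*x+2 = 2*y+2 := h; omega⟩

def podGF (M : ℕ) : PS :=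
  (∏ i ∈ range M, (1 + (X:PS)^(2*i+1))) * ∏ i ∈ range M, (1 - (X:PS)^(2*i+2))⁻¹

def cset : ℕ → Set ℕ := fun j => if j % 2 = 1 then ({0,1} : Set ℕ) else Set.univ

theorem podCount_coeff (n M : ℕ) (h : n ≤ 2*M) :
    (podCount n : ℚ) = coeff n (podGF M) := by
  set s : Finset ℕ := ((range M).map mkO) ∪ ((range M).map mkE) with hs_def
  have hdisj : Disjoint ((range M).map mkO) ((range M).map mkE) := by
    simp only [Finset.disjoint_left, Finset.mem_map, Finset.mem_range, mkO, mkE,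
      Function.Embedding.coeFn_mk, DFunLike.coe]
    rintro a ⟨i, hi, rfl⟩ ⟨j, hj, hj2⟩
    omega
  have hs : ∀ i ∈ s, 0 < i := by
    intro i hi
    simp only [hs_def, Finset.mem_union, Finset.mem_map, Finset.mem_range, mkO, mkE,
      Function.Embedding.coeFn_mk, DFunLike.coe] at hi
    rcases hi with ⟨j, _, rfl⟩ | ⟨j, _, rfl⟩ <;> omega
  have hc : ∀ i, i ∉ s → 0 ∈ cset i := by
    intro i _
    by_cases hodd : i % 2 = 1 <;> simp [cset, hodd]
  have hGF := partialGF_prop ℚ n s hs cset hc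
  -- identify the partition sets
  have hkey : ∀ p : n.Partition,
      ((p.parts.filter (fun i => i % 2 = 1)).Nodup)
        ↔ ((∀ j, p.parts.count j ∈ cset j) ∧ ∀ j ∈ p.parts, j ∈ s) := by
    intro p
    have hmem : ∀ j ∈ p.parts, j ∈ s := by
      intro j hj
      have hj0 : 0 < j := p.parts_pos hj
      have hjn : j ≤ n := by
        simpa [p.parts_sum] using Multiset.single_le_sum (fun _ _ => Nat.zero_le _) _ hj
      simp only [hs_def, Finset.mem_union, Finset.mem_map, Finset.mem_range, mkO, mkE,
        Function.Embedding.coeFn_mk, DFunLike.coe]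
      rcases Nat.even_or_odd j with he | ho
      · right
        obtain ⟨t, rfl⟩ := he
        exact ⟨t - 1, by omega, by omega⟩
      · left
        obtain ⟨t, rfl⟩ := ho
        exact ⟨t, by omega, by omega⟩
    constructor
    · intro hnd
      refine ⟨fun j => ?_, hmem⟩
      by_cases hodd : j % 2 = 1
      · simp only [cset, if_pos hodd, Set.mem_insert_iff, Set.mem_singleton_iff]
        have h1 := Multiset.nodup_iff_count_le_one.mp hnd j
        rw [Multiset.count_filter, if_pos hodd] at h1
        omega
      · simp [cset, if_neg hodd]
    · rintro ⟨h1, _⟩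
      rw [Multiset.nodup_iff_count_le_one]
      intro a
      rw [Multiset.count_filter]
      split_ifs with ha
      · have h2 := h1 a
        simp only [cset, if_pos ha, Set.mem_insert_iff, Set.mem_singleton_iff] at h2
        omega
      · exact Nat.zero_le _
  have hcard : podCount n
      = #{p : n.Partition | (∀ j, p.parts.count j ∈ cset j) ∧ ∀ j ∈ p.parts, j ∈ s} := by
    rw [podCount]
    apply Finset.card_bij (fun p _ => p)
    · intro p hp
      simp only [Finset.mem_filter, Finset.mem_univ, true_and, Set.mem_setOf_eq] at hp ⊢
      exact (hkey p).mp hp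
    · intro p q _ _ hpq
      exact hpq
    · intro p hp
      refine ⟨p, ?_, rfl⟩
      simp only [Finset.mem_filter, Finset.mem_univ, true_and, Set.mem_setOf_eq] at hp ⊢
      exact (hkey p).mpr hp
  -- identify the product
  have hprod : (∏ i ∈ s, indicatorSeries ℚ ((· * i) '' cset i)) = podGF M := by
    rw [hs_def, Finset.prod_union hdisj, Finset.prod_map, Finset.prod_map, podGF]
    congr 1
    · refine Finset.prod_congr rfl fun i _ => ?_
      have hodd : (mkO i) % 2 = 1 := by simp only [mkO, Function.Embedding.coeFn_mk, DFunLike.coe]; omega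
      have himg : ((· * (mkO i)) '' cset (mkO i)) = {0, 2*i+1} := by
        rw [cset, if_pos hodd]
        rw [Set.image_pair]
        simp [mkO, DFunLike.coe]
      rw [himg]
      rw [← two_series (2*i)]
    · refine Finset.prod_congr rfl fun i _ => ?_
      have heven : ¬ ((mkE i) % 2 = 1) := by simp only [mkE, Function.Embedding.coeFn_mk, DFunLike.coe]; omega
      have himg : ((· * (mkE i)) '' cset (mkE i)) = {k | 2*i+2 ∣ k} := by
        rw [cset, if_neg heven]
        ext k
        simp only [Set.image_univ, Set.mem_range, Set.mem_setOf_eq, mkE,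
          Function.Embedding.coeFn_mk, DFunLike.coe]
        constructor
        · rintro ⟨a, rfl⟩
          exact Dvd.intro_left a rfl
        · rintro ⟨a, rfl⟩
          exact ⟨a, mul_comm _ _⟩
      rw [himg]
      rw [← num_series' (2*i+1)]
  rw [hcard, hGF, hprod]

end

end PodAux

open PowerSeries



namespace PodAux

open Finset

noncomputable section

def Theta (m : ℕ) : PS := ∑ k ∈ range (2*m+1), (-1)^(k+m) * (X:PS)^(tri k m)

lemma theta_Im (m n : ℕ) (hn : n + 1 ≤ 4*m) :
    (X:PS)^(n+1) ∣ (∏ a ∈ range (2*m), (1 - (X:PS)^(2*a+1))) - Theta m * Im m := by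
  rw [main_jtp m, Theta, Finset.sum_mul, ← Finset.sum_sub_distrib]
  apply Finset.dvd_sum
  intro k hk
  have hk' : k ≤ 2*m := by have := mem_range.mp hk; omega
  have hterm : (-1)^(k+m) * (X:PS)^(tri k m) * gb Q4 (2*m) k
      - (-1)^(k+m) * (X:PS)^(tri k m) * Im m
      = ((-1)^(k+m) : PS) * ((X:PS)^(tri k m) * (gb Q4 (2*m) k - Im m)) := by ring
  rw [hterm]
  apply Dvd.dvd.mul_left
  have hd := gb_sub_Im m k hk'
  have hbound : n + 1 ≤ tri k m + (4*(min k (2*m-k))+4) := by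
    have hb : 4*m ≤ tri k m + (4*(min k (2*m-k))+4) := by
      rw [tri]
      rcases le_or_gt m k with h | h
      · obtain ⟨j, rfl⟩ : ∃ j, k = m + j := ⟨k-m, by omega⟩
        have hjm : j ≤ m := by omega
        have hmin : min (m+j) (2*m-(m+j)) = m - j := by omega
        rw [if_pos (by omega), hmin]
        have h1 : m + j - m = j := by omega
        rw [h1]
        zify [hjm]
        nlinarith [sq_nonneg ((j:ℤ) - 1)]
      · have hmin : min k (2*m-k) = k := by omega
        rw [if_neg (by omega), hmin]
        have h1 : 1 ≤ 2*(m-k) := by omega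
        zify [le_of_lt h, h1]
        nlinarith [sq_nonneg (2*((m:ℤ)-(k:ℤ)) - 3)]
    omega
  calc (X:PS)^(n+1) ∣ (X:PS)^(tri k m + (4*(min k (2*m-k))+4)) := pow_dvd_pow _ hbound
    _ = (X:PS)^(tri k m) * (X:PS)^(4*(min k (2*m-k))+4) := by rw [pow_add]
    _ ∣ (X:PS)^(tri k m) * (gb Q4 (2*m) k - Im m) := mul_dvd_mul_left _ hd

lemma om_poch_podGF (m : ℕ) :
    (∏ a ∈ range (2*m), (1 - (X:PS)^(2*a+1))) * poch Q4 m * podGF (2*m)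
      = ∏ a ∈ range m, (1 - (X:PS)^(4*(m+a)+2)) := by
  have hE : (∏ i ∈ range (2*m), (1 - (X:PS)^(2*i+2)))
      = (∏ a ∈ range m, (1 - (X:PS)^(4*a+2))) * poch Q4 m := by
    rw [prod_range_two_mul (fun i => 1 - (X:PS)^(2*i+2)) m, Finset.prod_mul_distrib]
    congr 1
    · exact Finset.prod_congr rfl fun i _ => by
        rw [show 2*(2*i)+2 = 4*i+2 from by ring]
    · rw [poch]
      exact Finset.prod_congr rfl fun i _ => by
        rw [Q4, ← pow_mul, show 4*(i+1) = 2*(2*i+1)+2 from by ring]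
  have hEinv : (∏ i ∈ range (2*m), (1 - (X:PS)^(2*i+2)))
      * (∏ i ∈ range (2*m), (1 - (X:PS)^(2*i+2))⁻¹) = 1 := by
    rw [← Finset.prod_mul_distrib]
    apply Finset.prod_eq_one
    intro i _
    apply PowerSeries.mul_inv_cancel
    rw [map_sub, map_one, map_pow, constantCoeff_X, zero_pow (by omega), sub_zero]
    norm_num
  have hOD : (∏ a ∈ range (2*m), (1 - (X:PS)^(2*a+1)))
        * (∏ i ∈ range (2*m), (1 + (X:PS)^(2*i+1)))
      = ∏ a ∈ range (2*m), (1 - (X:PS)^(4*a+2)) := by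
    rw [← Finset.prod_mul_distrib]
    refine Finset.prod_congr rfl fun a _ => ?_
    have hp : (X:PS)^(2*a+1) * (X:PS)^(2*a+1) = (X:PS)^(4*a+2) := by
      rw [← pow_add]; congr 1; ring
    linear_combination - hp
  have hsplit : ∏ a ∈ range (2*m), (1 - (X:PS)^(4*a+2))
      = (∏ a ∈ range m, (1 - (X:PS)^(4*a+2))) * ∏ a ∈ range m, (1 - (X:PS)^(4*(m+a)+2)) := by
    rw [show 2*m = m + m from by ring, Finset.prod_range_add]
  rw [podGF]
  calc (∏ a ∈ range (2*m), (1 - (X:PS)^(2*a+1))) * poch Q4 m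
        * ((∏ i ∈ range (2*m), (1 + (X:PS)^(2*i+1)))
          * ∏ i ∈ range (2*m), (1 - (X:PS)^(2*i+2))⁻¹)
      = ((∏ a ∈ range (2*m), (1 - (X:PS)^(2*a+1)))
          * (∏ i ∈ range (2*m), (1 + (X:PS)^(2*i+1)))) * poch Q4 m
          * ∏ i ∈ range (2*m), (1 - (X:PS)^(2*i+2))⁻¹ := by ring
    _ = ((∏ a ∈ range m, (1 - (X:PS)^(4*a+2))) * ∏ a ∈ range m, (1 - (X:PS)^(4*(m+a)+2)))
          * poch Q4 m * ∏ i ∈ range (2*m), (1 - (X:PS)^(2*i+2))⁻¹ := by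
        rw [hOD, hsplit]
    _ = ((∏ i ∈ range (2*m), (1 - (X:PS)^(2*i+2)))
          * ∏ i ∈ range (2*m), (1 - (X:PS)^(2*i+2))⁻¹) * ∏ a ∈ range m, (1 - (X:PS)^(4*(m+a)+2)) := by
        rw [hE]; ring
    _ = ∏ a ∈ range m, (1 - (X:PS)^(4*(m+a)+2)) := by rw [hEinv, one_mul]

theorem coeff_theta_podGF (n : ℕ) (hn : 1 ≤ n) :
    coeff n (Theta (n+1) * podGF (2*(n+1))) = 0 := by
  set m := n + 1 with hm
  have h1 : (X:PS)^(n+1) ∣ (∏ a ∈ range (2*m), (1 - (X:PS)^(2*a+1))) - Theta m * Im m :=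
    theta_Im m n (by omega)
  have h2 : (X:PS)^(n+1) ∣ ((∏ a ∈ range (2*m), (1 - (X:PS)^(2*a+1))) - Theta m * Im m)
      * (poch Q4 m * podGF (2*m)) := h1.mul_right _
  have hImPoch : Im m * poch Q4 m = 1 := by rw [mul_comm]; exact poch4_mul_Im m
  have hexp : ((∏ a ∈ range (2*m), (1 - (X:PS)^(2*a+1))) - Theta m * Im m)
        * (poch Q4 m * podGF (2*m))
      = ((∏ a ∈ range (2*m), (1 - (X:PS)^(2*a+1))) * poch Q4 m * podGF (2*m))
        - Theta m * podGF (2*m) := by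
    linear_combination (-(Theta m * podGF (2*m))) * hImPoch
  rw [hexp, om_poch_podGF m] at h2
  have h3 : (X:PS)^(n+1) ∣ (∏ a ∈ range m, (1 - (X:PS)^(4*(m+a)+2))) - 1 := by
    apply dvd_trans (pow_dvd_pow (X:PS) (show n+1 ≤ 4*m+2 by omega))
    exact dvd_prod_one_sub (4*m+2) (range m) (fun a => 4*(m+a)+2)
      (fun a _ => by show (4*m+2 : ℕ) ≤ 4*(m+a)+2; omega)
  have h4 : (X:PS)^(n+1) ∣ Theta m * podGF (2*m) - 1 := by
    have hr : Theta m * podGF (2*m) - 1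
        = ((∏ a ∈ range m, (1 - (X:PS)^(4*(m+a)+2))) - 1)
          - ((∏ a ∈ range m, (1 - (X:PS)^(4*(m+a)+2))) - Theta m * podGF (2*m)) := by ring
    rw [hr]
    exact dvd_sub h3 h2
  have h5 := (PowerSeries.X_pow_dvd_iff.mp h4) n (by omega)
  rw [map_sub] at h5
  have h6 : coeff n (1:PS) = 0 := by
    rw [coeff_one, if_neg (by omega)]
  rw [h6] at h5
  linarith [h5]

theorem sum_pod_eq (n : ℕ) (hn : 1 ≤ n) :
    ∑ k ∈ range (2*(n+1)+1), (-1:ℤ)^(k+(n+1)) * pod ((n:ℤ) - (tri k (n+1) : ℤ)) = 0 := by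
  set m := n + 1 with hm
  have hcast : ((∑ k ∈ range (2*m+1), (-1:ℤ)^(k+m) * pod ((n:ℤ) - (tri k m : ℤ)) : ℤ) : ℚ)
      = coeff n (Theta m * podGF (2*m)) := by
    rw [Theta, Finset.sum_mul, map_sum]
    push_cast
    refine Finset.sum_congr rfl fun k hk => ?_
    have hC : ((-1:PS))^(k+m) * (X:PS)^(tri k m) * podGF (2*m)
        = PowerSeries.C (R := ℚ) ((-1)^(k+m)) * ((X:PS)^(tri k m) * podGF (2*m)) := by
      rw [map_pow, map_neg, map_one, mul_assoc]
    rw [hC, PowerSeries.coeff_C_mul]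
    rcases le_or_gt (tri k m) n with he | he
    · have hpod : pod ((n:ℤ) - (tri k m : ℤ)) = (podCount (n - tri k m) : ℤ) := by
        rw [pod, if_pos (by omega)]
        have ht : ((n:ℤ) - (tri k m : ℤ)).toNat = n - tri k m := by omega
        rw [ht]
      have hco : coeff n ((X:PS)^(tri k m) * podGF (2*m))
          = coeff (n - tri k m) (podGF (2*m)) := by
        rw [show n = (n - tri k m) + (tri k m) from by omega]
        rw [PowerSeries.coeff_X_pow_mul]
        rw [show (n - tri k m) + (tri k m) - tri k m = n - tri k m from by omega]
      rw [hco, ← podCount_coeff (n - tri k m) (2*m) (by omega), hpod]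
      push_cast
      ring
    · have hpod : pod ((n:ℤ) - (tri k m : ℤ)) = 0 := by
        rw [pod, if_neg (by omega)]
      have hco : coeff n ((X:PS)^(tri k m) * podGF (2*m)) = 0 := by
        have hdvd : (X:PS)^(tri k m) ∣ (X:PS)^(tri k m) * podGF (2*m) := Dvd.intro _ rfl
        exact (PowerSeries.X_pow_dvd_iff.mp hdvd) n he
      rw [hco, hpod]
      push_cast
      ring
  have := coeff_theta_podGF n hn
  rw [← hcast] at this
  exact_mod_cast this

end

end PodAux

open PodAux Finset

theorem pod_recurrence (n : ℕ) (hn : 1 ≤ n) :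
    ∑' j : ℕ, (-1 : ℤ) ^ j *
      (pod ((n : ℤ) - (j : ℤ) * (2 * (j : ℤ) + 1)) -
        pod ((n : ℤ) - ((j : ℤ) + 1) * (2 * (j : ℤ) + 1))) = 0 := by
  have hzero : ∀ x : ℤ, x < 0 → pod x = 0 := by
    intro x hx
    rw [pod, if_neg (by omega)]
  set m := n + 1 with hm
  have hfin : ∀ j : ℕ, j ∉ Finset.range (m+1) →
      (-1 : ℤ) ^ j * (pod ((n : ℤ) - (j : ℤ) * (2 * (j : ℤ) + 1)) -
        pod ((n : ℤ) - ((j : ℤ) + 1) * (2 * (j : ℤ) + 1))) = 0 := by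
    intro j hj
    have hj' : (n:ℤ) + 2 ≤ (j:ℤ) := by
      have := Finset.mem_range.not.mp hj
      push_cast
      omega
    have h1 : pod ((n : ℤ) - (j : ℤ) * (2 * (j : ℤ) + 1)) = 0 := by
      apply hzero
      nlinarith
    have h2 : pod ((n : ℤ) - ((j : ℤ) + 1) * (2 * (j : ℤ) + 1)) = 0 := by
      apply hzero
      nlinarith
    rw [h1, h2]
    ring
  rw [tsum_eq_sum hfin]
  have hsplit : ∀ j ∈ Finset.range (m+1),
      (-1 : ℤ) ^ j * (pod ((n : ℤ) - (j : ℤ) * (2 * (j : ℤ) + 1)) -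
        pod ((n : ℤ) - ((j : ℤ) + 1) * (2 * (j : ℤ) + 1)))
      = (-1 : ℤ) ^ j * pod ((n : ℤ) - (j : ℤ) * (2 * (j : ℤ) + 1))
        - (-1 : ℤ) ^ j * pod ((n : ℤ) - ((j : ℤ) + 1) * (2 * (j : ℤ) + 1)) := by
    intro j _
    ring
  rw [Finset.sum_congr rfl hsplit, Finset.sum_sub_distrib]
  have key := sum_pod_eq n hn
  rw [show 2*(n+1)+1 = m + (m+1) from by omega, Finset.sum_range_add] at key
  have hS1 : ∑ i ∈ Finset.range (m+1), (-1:ℤ)^(m+i+m) * pod ((n:ℤ) - (tri (m+i) m : ℤ))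
      = ∑ j ∈ Finset.range (m+1), (-1 : ℤ) ^ j * pod ((n : ℤ) - (j : ℤ) * (2 * (j : ℤ) + 1)) := by
    refine Finset.sum_congr rfl fun i _ => ?_
    have h1 : tri (m+i) m = i*(2*i+1) := by
      rw [tri, if_pos (by omega)]
      have h2 : m + i - m = i := by omega
      rw [h2]
    have hsgn : ((-1:ℤ))^(m+i+m) = (-1)^i := by
      rw [show m+i+m = i+2*m from by omega, pow_add, pow_mul]
      norm_num
    have harg : ((n:ℤ) - ((i*(2*i+1) : ℕ) : ℤ)) = (n:ℤ) - (i:ℤ)*(2*(i:ℤ)+1) := by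
      push_cast
      ring
    rw [h1, hsgn, harg]
  have hS2 : ∑ k ∈ Finset.range m, (-1:ℤ)^(k+m) * pod ((n:ℤ) - (tri k m : ℤ))
      = - ∑ j ∈ Finset.range m, (-1 : ℤ) ^ j
          * pod ((n : ℤ) - ((j : ℤ) + 1) * (2 * (j : ℤ) + 1)) := by
    rw [← Finset.sum_range_reflect
      (fun k => (-1:ℤ)^(k+m) * pod ((n:ℤ) - (tri k m : ℤ))) m]
    rw [← Finset.sum_neg_distrib]
    refine Finset.sum_congr rfl fun j hj => ?_
    have hjm : j < m := Finset.mem_range.mp hj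
    have h1 : tri (m-1-j) m = (j+1)*(2*j+1) := by
      rw [tri, if_neg (by omega)]
      have h2 : m - (m-1-j) = j + 1 := by omega
      rw [h2]
      have h3 : 2*(j+1)-1 = 2*j+1 := by omega
      rw [h3]
    have hsgn : ((-1:ℤ))^(m-1-j+m) = -((-1:ℤ))^j := by
      rcases Nat.even_or_odd j with ⟨t, ht⟩ | ⟨t, ht⟩
      · have ho : Odd (m-1-j+m) := ⟨m-t-1, by omega⟩
        rw [ho.neg_one_pow, (by exact ⟨t, ht⟩ : Even j).neg_one_pow]
      · have he : Even (m-1-j+m) := ⟨m-t-1, by omega⟩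
        rw [he.neg_one_pow, (by exact ⟨t, ht⟩ : Odd j).neg_one_pow]
        norm_num
    have harg : ((n:ℤ) - (((j+1)*(2*j+1) : ℕ) : ℤ)) = (n:ℤ) - ((j:ℤ)+1)*(2*(j:ℤ)+1) := by
      push_cast
      ring
    rw [h1, hsgn, harg]
    ring
  rw [hS1, hS2] at key
  have hlast : ∑ j ∈ Finset.range (m+1), (-1 : ℤ) ^ j
      * pod ((n : ℤ) - ((j : ℤ) + 1) * (2 * (j : ℤ) + 1))
      = ∑ j ∈ Finset.range m, (-1 : ℤ) ^ j
        * pod ((n : ℤ) - ((j : ℤ) + 1) * (2 * (j : ℤ) + 1)) := by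
    rw [Finset.sum_range_succ]
    have h0 : pod ((n : ℤ) - ((m : ℤ) + 1) * (2 * (m : ℤ) + 1)) = 0 := by
      apply hzero
      have : (n:ℤ) < ((m:ℤ)+1) := by omega
      nlinarith [(show (0:ℤ) ≤ (m:ℤ) from by positivity)]
    rw [h0]
    ring
  rw [hlast]
  linarith [key]
end

section
/- For all n ≥ 1, p̄(n) - 2p̄(n-1) + 2p̄(n-4) ≥ 0, where p̄(m) = 0 for m < 0. -/
namespace OPartIneq
noncomputable section
open PowerSeries Finset
open scoped Classical

variable {α : Type*}


/-- partial distinct GF -/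
def partialDistinctGF (m : ℕ) [CommSemiring α] :=
  ∏ i ∈ Finset.range m, (1 + (PowerSeries.X : PowerSeries α) ^ (i + 1))

/-- A convenience constructor for the power series whose coefficients indicate a subset. -/
def indicatorSeries (α : Type*) [Semiring α] (s : Set ℕ) : PowerSeries α :=
  PowerSeries.mk fun n => if n ∈ s then 1 else 0

theorem coeff_indicator (s : Set ℕ) [Semiring α] (n : ℕ) :
    coeff (R := α) n (indicatorSeries _ s) = if n ∈ s then 1 else 0 :=
  coeff_mk _ _

theorem coeff_indicator_pos (s : Set ℕ) [Semiring α] (n : ℕ) (h : n ∈ s) :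
    coeff (R := α) n (indicatorSeries _ s) = 1 := by rw [coeff_indicator, if_pos h]

theorem coeff_indicator_neg (s : Set ℕ) [Semiring α] (n : ℕ) (h : n ∉ s) :
    coeff (R := α) n (indicatorSeries _ s) = 0 := by rw [coeff_indicator, if_neg h]

theorem constantCoeff_indicator (s : Set ℕ) [Semiring α] :
    constantCoeff (R := α) (indicatorSeries _ s) = if 0 ∈ s then 1 else 0 :=
  rfl

theorem two_series (i : ℕ) [Semiring α] :
    1 + (X : PowerSeries α) ^ i.succ = indicatorSeries α {0, i.succ} := by
  ext n
  simp only [coeff_indicator, coeff_one, coeff_X_pow, Set.mem_insert_iff, Set.mem_singleton_iff,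
    map_add]
  cases' n with d
  · simp [(Nat.succ_ne_zero i).symm]
  · simp [Nat.succ_ne_zero d]

def mkOdd : ℕ ↪ ℕ :=
  ⟨fun i => 2 * i + 1, fun x y h => by linarith⟩

-- The main workhorse of the partition theorem proof.
theorem partialGF_prop (α : Type*) [CommSemiring α] (n : ℕ) (s : Finset ℕ) (hs : ∀ i ∈ s, 0 < i)
    (c : ℕ → Set ℕ) (hc : ∀ i, i ∉ s → 0 ∈ c i) :
    #{p : n.Partition | (∀ j, p.parts.count j ∈ c j) ∧ ∀ j ∈ p.parts, j ∈ s} =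
      coeff (R := α) n (∏ i ∈ s, indicatorSeries α ((· * i) '' c i)) := by
  simp_rw [coeff_prod, coeff_indicator, prod_boole, sum_boole]
  apply congr_arg
  simp only [mem_univ, forall_true_left, not_and, not_forall, exists_prop,
    Set.mem_image, not_exists]
  set φ : (a : Nat.Partition n) →
    a ∈ filter (fun p ↦ (∀ (j : ℕ), Multiset.count j p.parts ∈ c j) ∧ ∀ j ∈ p.parts, j ∈ s) univ →
    ℕ →₀ ℕ := fun p _ => {
      toFun := fun i => Multiset.count i p.parts • i
      support := Finset.filter (fun i => i ≠ 0) p.parts.toFinset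
      mem_support_toFun := fun a => by
        simp only [smul_eq_mul, ne_eq, mul_eq_zero, Multiset.count_eq_zero]
        rw [not_or, not_not]
        simp only [Multiset.mem_toFinset, not_not, mem_filter] }
  refine Finset.card_bij φ ?_ ?_ ?_
  · intro a ha
    simp only [φ, not_forall, not_exists, not_and, exists_prop, mem_filter]
    rw [mem_finsuppAntidiag]
    dsimp only [ne_eq, smul_eq_mul, id_eq, eq_mpr_eq_cast, le_eq_subset, Finsupp.coe_mk]
    simp only [mem_univ, forall_true_left, not_and, not_forall, exists_prop,
      mem_filter, true_and] at ha
    refine ⟨⟨?_, fun i ↦ ?_⟩, fun i _ ↦ ⟨a.parts.count i, ha.1 i, rfl⟩⟩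
    · conv_rhs => simp [← a.parts_sum]
      rw [sum_multiset_count_of_subset _ s]
      · simp only [smul_eq_mul]
      · intro i
        simp only [Multiset.mem_toFinset, not_not, mem_filter]
        apply ha.2
    · simp only [ne_eq, Multiset.mem_toFinset, not_not, mem_filter, and_imp]
      exact fun hi _ ↦ ha.2 i hi
  · intro p₁ hp₁ p₂ hp₂ h
    apply Nat.Partition.ext
    simp only [true_and, mem_univ, mem_filter] at hp₁ hp₂
    ext i
    simp only [φ, ne_eq, Multiset.mem_toFinset, not_not, smul_eq_mul, Finsupp.mk.injEq] at h
    by_cases hi : i = 0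
    · rw [hi]
      rw [Multiset.count_eq_zero_of_notMem]
      · rw [Multiset.count_eq_zero_of_notMem]
        intro a; exact Nat.lt_irrefl 0 (hs 0 (hp₂.2 0 a))
      intro a; exact Nat.lt_irrefl 0 (hs 0 (hp₁.2 0 a))
    · rw [← mul_left_inj' hi]
      rw [funext_iff] at h
      exact h.2 i
  · simp only [φ, mem_filter, mem_finsuppAntidiag, mem_univ, exists_prop, true_and, and_assoc]
    rintro f ⟨hf, hf₃, hf₄⟩
    have hf' : f ∈ finsuppAntidiag s n := mem_finsuppAntidiag.mpr ⟨hf, hf₃⟩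
    simp only [mem_finsuppAntidiag] at hf'
    refine ⟨⟨∑ i ∈ s, Multiset.replicate (f i / i) i, ?_, ?_⟩, ?_, ?_, ?_⟩
    · intro i hi
      simp only [exists_prop, Multiset.mem_sum, mem_map, Function.Embedding.coeFn_mk] at hi
      rcases hi with ⟨t, ht, z⟩
      apply hs
      rwa [Multiset.eq_of_mem_replicate z]
    · simp_rw [Multiset.sum_sum, Multiset.sum_replicate, Nat.nsmul_eq_mul]
      rw [← hf'.1]
      refine sum_congr rfl fun i hi => Nat.div_mul_cancel ?_
      rcases hf₄ i hi with ⟨w, _, hw₂⟩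
      rw [← hw₂]
      exact dvd_mul_left _ _
    · intro i
      simp_rw [Multiset.count_sum', Multiset.count_replicate, sum_ite_eq']
      split_ifs with h
      · rcases hf₄ i h with ⟨w, hw₁, hw₂⟩
        rwa [← hw₂, Nat.mul_div_cancel _ (hs i h)]
      · exact hc _ h
    · intro i hi
      rw [Multiset.mem_sum] at hi
      rcases hi with ⟨j, hj₁, hj₂⟩
      rwa [Multiset.eq_of_mem_replicate hj₂]
    · ext i
      simp_rw [Multiset.count_sum', Multiset.count_replicate, sum_ite_eq']
      simp only [ne_eq, Multiset.mem_toFinset, not_not, smul_eq_mul, ite_mul,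
        zero_mul, Finsupp.coe_mk]
      split_ifs with h
      · apply Nat.div_mul_cancel
        rcases hf₄ i h with ⟨w, _, hw₂⟩
        apply Dvd.intro_left _ hw₂
      · apply symm
        rw [← Finsupp.notMem_support_iff]
        exact notMem_mono hf'.2 h

theorem partialDistinctGF_prop [CommSemiring α] (n m : ℕ) :
    #{p : n.Partition |
        p.parts.Nodup ∧ ∀ j ∈ p.parts, j ∈ (range m).map ⟨Nat.succ, Nat.succ_injective⟩} =
      coeff (R := α) n (partialDistinctGF m) := by
  rw [partialDistinctGF]
  convert partialGF_prop α n
    ((range m).map ⟨Nat.succ, Nat.succ_injective⟩) _ (fun _ => {0, 1}) (fun _ _ => Or.inl rfl)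
    using 2
  · congr! with p
    rw [Multiset.nodup_iff_count_le_one]
    congr! 1 with i
    rcases Multiset.count i p.parts with (_ | _ | ms) <;> simp
  · simp_rw [Finset.prod_map, two_series]
    congr with i
    simp [Set.image_pair]
  · simp only [mem_map, Function.Embedding.coeFn_mk]
    rintro i ⟨_, _, rfl⟩
    apply Nat.succ_pos

/-- If m is big enough, the partial product's coefficient counts the number of distinct partitions
-/
theorem distinctGF_prop [CommSemiring α] (n m : ℕ) (h : n < m + 1) :
    #(Nat.Partition.distincts n) = coeff (R := α) n (partialDistinctGF m) := by
  rw [← partialDistinctGF_prop, Nat.Partition.distincts]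
  congr with p
  apply (and_iff_left _).symm
  intro i hi
  have : i ≤ n := by
    simpa [p.parts_sum] using Multiset.single_le_sum (fun _ _ => Nat.zero_le _) _ hi
  simp only [mkOdd, exists_prop, mem_range, Function.Embedding.coeFn_mk, mem_map]
  refine ⟨i - 1, ?_, Nat.succ_pred_eq_of_pos (p.parts_pos hi)⟩
  rw [tsub_lt_iff_right (Nat.one_le_iff_ne_zero.mpr (p.parts_pos hi).ne')]
  exact lt_of_le_of_lt this h


/-- partial generating function for all partitions -/
def partialPGF (m : ℕ) : PowerSeries ℤ :=
  ∏ i ∈ range m, indicatorSeries ℤ {k | (i + 1) ∣ k}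

theorem partialPGF_prop (n m : ℕ) (h : n ≤ m) :
    (Fintype.card (Nat.Partition n) : ℤ) = coeff (R := ℤ) n (partialPGF m) := by
  have := partialGF_prop ℤ n ((range m).map ⟨Nat.succ, Nat.succ_injective⟩)
    (fun i hi => by
      simp only [mem_map, Function.Embedding.coeFn_mk] at hi
      obtain ⟨a, -, rfl⟩ := hi; exact Nat.succ_pos a)
    (fun _ => Set.univ) (fun _ _ => trivial)
  rw [Finset.prod_map] at this
  have h2 : ∀ i : ℕ, ((· * (Nat.succ i)) '' Set.univ) = {k | (i + 1) ∣ k} := by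
    intro i
    ext k
    simp only [Set.mem_image, Set.mem_univ, true_and, Set.mem_setOf_eq]
    constructor
    · rintro ⟨p, rfl⟩; exact Dvd.intro_left p rfl
    · rintro ⟨c, rfl⟩; exact ⟨c, mul_comm _ _⟩
  simp only [Function.Embedding.coeFn_mk] at this
  simp_rw [h2] at this
  rw [partialPGF]
  rw [← this]
  norm_cast
  rw [Fintype.card]
  congr 1
  rw [eq_comm, Finset.filter_true_of_mem]
  intro p _
  constructor
  · intro j; trivial
  · intro j hj
    simp only [mem_map, mem_range, Function.Embedding.coeFn_mk]
    have hj1 : 0 < j := p.parts_pos hj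
    have hjn : j ≤ n := by
      simpa [p.parts_sum] using Multiset.single_le_sum (fun _ _ => Nat.zero_le _) _ hj
    exact ⟨j - 1, by omega, by omega⟩

theorem geom_mul (i : ℕ) :
    (1 - (X : PowerSeries ℤ) ^ (i + 1)) * indicatorSeries ℤ {k | (i + 1) ∣ k} = 1 := by
  ext n
  rw [sub_mul, one_mul, map_sub, coeff_X_pow_mul']
  simp only [coeff_indicator, Set.mem_setOf_eq, coeff_one]
  rcases Nat.eq_zero_or_pos n with rfl | hn
  · norm_num
  · rw [if_neg hn.ne']
    split_ifs with h1 h2 h3 h4 <;> try ring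
    · exact absurd (Nat.dvd_sub h1 dvd_rfl) h3
    · exact absurd (Nat.le_of_dvd hn h1) h2
    · exfalso
      apply h1
      have : n = (n - (i+1)) + (i+1) := by omega
      rw [this]
      exact dvd_add (by assumption) dvd_rfl
/-! ### Gaussian binomials in `X^2`, defined by a Pascal recursion -/

def gb : ℕ → ℕ → PowerSeries ℤ
  | _, 0 => 1
  | 0, _ + 1 => 0
  | m + 1, r + 1 => gb m (r + 1) + X ^ (2 * (m - r)) * gb m r

@[simp] lemma gb_zero_right (m : ℕ) : gb m 0 = 1 := by cases m <;> rfl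

@[simp] lemma gb_zero_succ (r : ℕ) : gb 0 (r + 1) = 0 := rfl

lemma gb_succ_succ (m r : ℕ) :
    gb (m + 1) (r + 1) = gb m (r + 1) + X ^ (2 * (m - r)) * gb m r := rfl

lemma gb_eq_zero : ∀ m r : ℕ, m < r → gb m r = 0 := by
  intro m
  induction m with
  | zero => intro r hr; match r, hr with | r + 1, _ => rfl
  | succ m ih =>
    intro r hr
    match r, hr with
    | r + 1, hr =>
      rw [gb_succ_succ, ih (r + 1) (by omega), ih r (by omega), mul_zero, add_zero]

def Dful (r : ℕ) : PowerSeries ℤ := ∏ i ∈ range r, (1 - X ^ (2 * (i + 1)))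

def Shift (m r : ℕ) : PowerSeries ℤ := ∏ i ∈ range r, (1 - X ^ (2 * (m - r + i + 1)))

lemma Dful_succ (r : ℕ) : Dful (r + 1) = Dful r * (1 - X ^ (2 * (r + 1))) := by
  rw [Dful, prod_range_succ, Dful]

lemma gb_mul_Dful : ∀ m r : ℕ, r ≤ m → gb m r * Dful r = Shift m r := by
  intro m
  induction m with
  | zero =>
    intro r hr
    interval_cases r
    simp [Dful, Shift]
  | succ m ih =>
    intro r hr
    rcases r with _ | r
    · simp [Dful, Shift]
    rcases Nat.lt_or_ge r m with hrm | hrm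
    · -- r + 1 ≤ m
      have h1 : gb m (r + 1) * Dful (r + 1) = Shift m (r + 1) := ih (r + 1) hrm
      have h2 : gb m r * Dful r = Shift m r := ih r (by omega)
      have hfront : Shift m (r + 1) = Shift m r * (1 - X ^ (2 * (m - r))) := by
        rw [Shift, prod_range_succ', Shift]
        congr 1
        · apply Finset.prod_congr rfl; intro i _; congr 3; omega
        · congr 3; omega
      have htarget : Shift (m + 1) (r + 1) = Shift m r * (1 - X ^ (2 * (m + 1))) := by
        rw [Shift, prod_range_succ, Shift]
        congr 1
        · apply Finset.prod_congr rfl; intro i _; congr 3; omega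
        · congr 3; omega
      have hexp : (2 * (m - r)) + (2 * (r + 1)) = 2 * (m + 1) := by omega
      calc gb (m + 1) (r + 1) * Dful (r + 1)
          = gb m (r + 1) * Dful (r + 1)
            + X ^ (2 * (m - r)) * ((gb m r * Dful r) * (1 - X ^ (2 * (r + 1)))) := by
            rw [gb_succ_succ, Dful_succ]; ring
        _ = Shift m r * (1 - X ^ (2 * (m - r)))
            + X ^ (2 * (m - r)) * (Shift m r * (1 - X ^ (2 * (r + 1)))) := by
            rw [h1, h2, hfront]
        _ = Shift m r * (1 - X ^ (2 * (m - r)) * X ^ (2 * (r + 1))) := by ring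
        _ = Shift (m + 1) (r + 1) := by rw [← pow_add, hexp, htarget]
    · -- r = m
      have hrm' : r = m := by omega
      subst hrm'
      have h2 : gb r r * Dful r = Shift r r := ih r le_rfl
      have hS : Shift r r = Dful r := by
        rw [Shift, Dful]
        apply Finset.prod_congr rfl
        intro i _
        congr 3
        omega
      have htarget : Shift (r + 1) (r + 1) = Dful r * (1 - X ^ (2 * (r + 1))) := by
        rw [Shift, prod_range_succ, Dful]
        congr 1
        · apply Finset.prod_congr rfl; intro i _; congr 3; omega
        · congr 3; omega
      calc gb (r + 1) (r + 1) * Dful (r + 1)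
          = (gb r (r + 1) + X ^ (2 * (r - r)) * gb r r) * Dful (r + 1) := by rw [gb_succ_succ]
        _ = gb r r * Dful (r + 1) := by
            rw [gb_eq_zero r (r + 1) (by omega), Nat.sub_self, mul_zero, pow_zero]; ring
        _ = (gb r r * Dful r) * (1 - X ^ (2 * (r + 1))) := by rw [Dful_succ]; ring
        _ = Shift (r + 1) (r + 1) := by rw [h2, hS, htarget]

lemma constantCoeff_one_sub_pow (k : ℕ) (hk : 0 < k) :
    constantCoeff (R := ℤ) (1 - X ^ k) = 1 := by
  rw [map_sub, map_pow, constantCoeff_one, constantCoeff_X, zero_pow hk.ne', sub_zero]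

lemma Dful_ne_zero (r : ℕ) : Dful r ≠ 0 := by
  intro h
  have : constantCoeff (R := ℤ) (Dful r) = 1 := by
    rw [Dful, map_prod]
    rw [Finset.prod_eq_one]
    intro i _
    exact constantCoeff_one_sub_pow _ (by omega)
  rw [h, map_zero] at this
  exact one_ne_zero this.symm

lemma Shift_mul_Dful (m r : ℕ) (h : r ≤ m) : Dful (m - r) * Shift m r = Dful m := by
  rw [Dful, Shift, ← prod_range_add (fun i => 1 - X ^ (2 * (i + 1)))]
  rw [show m - r + r = m by omega]
  rfl

lemma gb_symm (m r : ℕ) (h : r ≤ m) : gb m r = gb m (m - r) := by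
  have h1 := gb_mul_Dful m r h
  have h2 := gb_mul_Dful m (m - r) (by omega)
  have e1 : gb m r * (Dful r * Dful (m - r)) = Dful m := by
    rw [← mul_assoc, h1, mul_comm, Shift_mul_Dful m r h]
  have e2 : gb m (m - r) * (Dful r * Dful (m - r)) = Dful m := by
    have h3 := Shift_mul_Dful m (m - r) (by omega)
    rw [show m - (m - r) = r from by omega] at h3
    calc gb m (m - r) * (Dful r * Dful (m - r))
        = Dful r * (gb m (m - r) * Dful (m - r)) := by ring
      _ = Dful r * Shift m (m - r) := by rw [h2]
      _ = Dful m := h3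
  have hne : Dful r * Dful (m - r) ≠ 0 := mul_ne_zero (Dful_ne_zero r) (Dful_ne_zero (m - r))
  exact mul_right_cancel₀ hne (e1.trans e2.symm)

/-! ### Finite Gauss identity -/

def fgE (N m r : ℕ) : ℕ := r * r + 2 * N * (m - r)

lemma finite_gauss (N : ℕ) : ∀ m : ℕ,
    ∏ i ∈ range m, ((X : PowerSeries ℤ) ^ (2 * N) - X ^ (2 * i + 1)) =
      ∑ r ∈ range (m + 1), (-1 : PowerSeries ℤ) ^ r * X ^ (fgE N m r) * gb m r := by
  intro m
  induction m with
  | zero => simp [fgE]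
  | succ m ih =>
    rw [prod_range_succ, ih]
    have key : ∀ s ∈ range (m + 1),
        (-1 : PowerSeries ℤ) ^ (s + 1) * X ^ (fgE N (m + 1) (s + 1)) * gb (m + 1) (s + 1) =
        ((-1 : PowerSeries ℤ) ^ (s + 1) * X ^ (fgE N (m + 1) (s + 1)) * gb m (s + 1))
          - X ^ (2 * m + 1) * ((-1 : PowerSeries ℤ) ^ s * X ^ (fgE N m s) * gb m s) := by
      intro s hs
      rw [mem_range] at hs
      have hs' : s ≤ m := by omega
      have hexp : fgE N (m + 1) (s + 1) + 2 * (m - s) = fgE N m s + (2 * m + 1) := by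
        unfold fgE
        have h1 : m + 1 - (s + 1) = m - s := by omega
        rw [h1]
        nlinarith [Nat.sub_add_cancel hs']
      rw [gb_succ_succ]
      calc (-1 : PowerSeries ℤ) ^ (s + 1) * X ^ (fgE N (m + 1) (s + 1)) *
          (gb m (s + 1) + X ^ (2 * (m - s)) * gb m s)
          = ((-1 : PowerSeries ℤ) ^ (s + 1) * X ^ (fgE N (m + 1) (s + 1)) * gb m (s + 1))
            + (-1 : PowerSeries ℤ) ^ (s + 1) *
              (X ^ (fgE N (m + 1) (s + 1) + 2 * (m - s))) * gb m s := by
            rw [pow_add]; ring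
        _ = ((-1 : PowerSeries ℤ) ^ (s + 1) * X ^ (fgE N (m + 1) (s + 1)) * gb m (s + 1))
            - X ^ (2 * m + 1) * ((-1 : PowerSeries ℤ) ^ s * X ^ (fgE N m s) * gb m s) := by
            rw [hexp, pow_add, pow_succ]
            ring
    have keyG : ∀ r ∈ range (m + 1),
        (-1 : PowerSeries ℤ) ^ r * X ^ (fgE N (m + 1) r) * gb m r =
          X ^ (2 * N) * ((-1 : PowerSeries ℤ) ^ r * X ^ (fgE N m r) * gb m r) := by
      intro r hr
      rw [mem_range] at hr
      have : fgE N (m + 1) r = 2 * N + fgE N m r := by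
        unfold fgE
        have h1 : m + 1 - r = (m - r) + 1 := by omega
        rw [h1, Nat.mul_add, mul_one]
        omega
      rw [this, pow_add]
      ring
    symm
    calc ∑ r ∈ range (m + 1 + 1),
          (-1 : PowerSeries ℤ) ^ r * X ^ (fgE N (m + 1) r) * gb (m + 1) r
        = ∑ s ∈ range (m + 1),
            (-1 : PowerSeries ℤ) ^ (s + 1) * X ^ (fgE N (m + 1) (s + 1)) * gb (m + 1) (s + 1)
          + (-1 : PowerSeries ℤ) ^ 0 * X ^ (fgE N (m + 1) 0) * gb (m + 1) 0 :=
          sum_range_succ' _ _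
      _ = (∑ s ∈ range (m + 1),
            ((-1 : PowerSeries ℤ) ^ (s + 1) * X ^ (fgE N (m + 1) (s + 1)) * gb m (s + 1)
              - X ^ (2 * m + 1) * ((-1 : PowerSeries ℤ) ^ s * X ^ (fgE N m s) * gb m s)))
          + (-1 : PowerSeries ℤ) ^ 0 * X ^ (fgE N (m + 1) 0) * gb m 0 := by
          rw [Finset.sum_congr rfl key]
          simp
      _ = (∑ s ∈ range (m + 1),
            (-1 : PowerSeries ℤ) ^ (s + 1) * X ^ (fgE N (m + 1) (s + 1)) * gb m (s + 1)
          + (-1 : PowerSeries ℤ) ^ 0 * X ^ (fgE N (m + 1) 0) * gb m 0)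
          - X ^ (2 * m + 1) *
            ∑ s ∈ range (m + 1), (-1 : PowerSeries ℤ) ^ s * X ^ (fgE N m s) * gb m s := by
          rw [Finset.sum_sub_distrib, Finset.mul_sum]
          ring
      _ = (∑ r ∈ range (m + 1 + 1), (-1 : PowerSeries ℤ) ^ r * X ^ (fgE N (m + 1) r) * gb m r)
          - X ^ (2 * m + 1) *
            ∑ s ∈ range (m + 1), (-1 : PowerSeries ℤ) ^ s * X ^ (fgE N m s) * gb m s := by
          rw [sum_range_succ' (fun r => (-1 : PowerSeries ℤ) ^ r * X ^ (fgE N (m + 1) r) * gb m r)]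
      _ = (∑ r ∈ range (m + 1), (-1 : PowerSeries ℤ) ^ r * X ^ (fgE N (m + 1) r) * gb m r)
          - X ^ (2 * m + 1) *
            ∑ s ∈ range (m + 1), (-1 : PowerSeries ℤ) ^ s * X ^ (fgE N m s) * gb m s := by
          rw [sum_range_succ, gb_eq_zero m (m + 1) (by omega), mul_zero, add_zero]
      _ = X ^ (2 * N) *
            (∑ r ∈ range (m + 1), (-1 : PowerSeries ℤ) ^ r * X ^ (fgE N m r) * gb m r)
          - X ^ (2 * m + 1) *
            ∑ s ∈ range (m + 1), (-1 : PowerSeries ℤ) ^ s * X ^ (fgE N m s) * gb m s := by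
          rw [Finset.sum_congr rfl keyG, ← Finset.mul_sum]
      _ = (∑ r ∈ range (m + 1), (-1 : PowerSeries ℤ) ^ r * X ^ (fgE N m r) * gb m r) *
            (X ^ (2 * N) - X ^ (2 * m + 1)) := by ring

/-! ### Products -/

def OddP (N : ℕ) : PowerSeries ℤ := ∏ i ∈ range N, (1 - X ^ (2 * i + 1))
def Aprod (K : ℕ) : PowerSeries ℤ := ∏ i ∈ range K, (1 + X ^ (i + 1))
def Eprod (K : ℕ) : PowerSeries ℤ := ∏ i ∈ range K, (1 - X ^ (i + 1))

lemma sum_odds (N : ℕ) : ∑ i ∈ range N, (2 * i + 1) = N ^ 2 := by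
  induction N with
  | zero => simp
  | succ N ih => rw [sum_range_succ, ih]; ring

lemma lhs_factor (N : ℕ) :
    ∏ i ∈ range (2 * N), ((X : PowerSeries ℤ) ^ (2 * N) - X ^ (2 * i + 1)) =
      (-1) ^ N * X ^ (3 * N ^ 2) * OddP N ^ 2 := by
  have hsplit := prod_range_add (fun i => (X : PowerSeries ℤ) ^ (2 * N) - X ^ (2 * i + 1)) N N
  rw [show N + N = 2 * N by ring] at hsplit
  rw [hsplit]
  have h1 : ∏ i ∈ range N, ((X : PowerSeries ℤ) ^ (2 * N) - X ^ (2 * i + 1)) =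
      (-1) ^ N * X ^ (N ^ 2) * OddP N := by
    have hterm : ∀ i ∈ range N, ((X : PowerSeries ℤ) ^ (2 * N) - X ^ (2 * i + 1)) =
        (-1) * (X ^ (2 * i + 1) * (1 - X ^ (2 * (N - 1 - i) + 1))) := by
      intro i hi
      rw [mem_range] at hi
      have he : (2 * i + 1) + (2 * (N - 1 - i) + 1) = 2 * N := by omega
      rw [mul_sub, mul_one, ← pow_add, he]
      ring
    rw [Finset.prod_congr rfl hterm, Finset.prod_mul_distrib, Finset.prod_mul_distrib,
      Finset.prod_const, Finset.prod_pow_eq_pow_sum, sum_odds, card_range,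
      prod_range_reflect (fun j => 1 - (X : PowerSeries ℤ) ^ (2 * j + 1)) N, ← OddP]
    ring
  have h2 : ∏ i ∈ range N, ((X : PowerSeries ℤ) ^ (2 * N) - X ^ (2 * (N + i) + 1)) =
      X ^ (2 * N ^ 2) * OddP N := by
    have hterm : ∀ i ∈ range N, ((X : PowerSeries ℤ) ^ (2 * N) - X ^ (2 * (N + i) + 1)) =
        X ^ (2 * N) * (1 - X ^ (2 * i + 1)) := by
      intro i _
      rw [mul_sub, mul_one, ← pow_add]
      congr 2
      ring
    rw [Finset.prod_congr rfl hterm, Finset.prod_mul_distrib, Finset.prod_const, card_range,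
      ← pow_mul, OddP]
    congr 2
    ring
  rw [h1, h2, show 3 * N ^ 2 = N ^ 2 + 2 * N ^ 2 by ring, pow_add]
  ring

lemma dist_sq_add (N r : ℕ) (h : r ≤ 2 * N) :
    fgE N (2 * N) r = (Nat.dist r N) ^ 2 + 3 * N ^ 2 := by
  rcases le_or_gt r N with hr | hr
  · rw [Nat.dist_eq_sub_of_le hr]
    unfold fgE
    rw [show 2 * N - r = (N - r) + N by omega]
    zify [hr]
    ring
  · obtain ⟨a, rfl⟩ : ∃ a, r = N + a := ⟨r - N, by omega⟩
    have ha : a ≤ N := by omega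
    rw [show Nat.dist (N + a) N = a by rw [Nat.dist_eq_sub_of_le_right (by omega : N ≤ N + a)]; omega]
    unfold fgE
    rw [show 2 * N - (N + a) = N - a by omega]
    zify [ha]
    ring

lemma gauss_S (N : ℕ) :
    ∑ r ∈ range (2 * N + 1),
        (-1 : PowerSeries ℤ) ^ (r + N) * X ^ ((Nat.dist r N) ^ 2) * gb (2 * N) r =
      OddP N ^ 2 := by
  have hfg := finite_gauss N (2 * N)
  rw [lhs_factor] at hfg
  have hterm : ∀ r ∈ range (2 * N + 1),
      (-1 : PowerSeries ℤ) ^ r * X ^ (fgE N (2 * N) r) * gb (2 * N) r =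
        X ^ (3 * N ^ 2) * ((-1 : PowerSeries ℤ) ^ r * X ^ ((Nat.dist r N) ^ 2) * gb (2 * N) r) := by
    intro r hr
    rw [mem_range] at hr
    rw [dist_sq_add N r (by omega), pow_add]
    ring
  rw [Finset.sum_congr rfl hterm, ← Finset.mul_sum] at hfg
  have hX : (X : PowerSeries ℤ) ^ (3 * N ^ 2) ≠ 0 := pow_ne_zero _ X_ne_zero
  have hS : (∑ r ∈ range (2 * N + 1),
      (-1 : PowerSeries ℤ) ^ r * X ^ ((Nat.dist r N) ^ 2) * gb (2 * N) r) =
      (-1) ^ N * OddP N ^ 2 :=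
    mul_left_cancel₀ hX (by rw [← hfg]; ring)
  have hNN : (-1 : PowerSeries ℤ) ^ N * (-1 : PowerSeries ℤ) ^ N = 1 := by
    rw [← pow_add]
    exact Even.neg_one_pow ⟨N, rfl⟩
  calc ∑ r ∈ range (2 * N + 1),
        (-1 : PowerSeries ℤ) ^ (r + N) * X ^ ((Nat.dist r N) ^ 2) * gb (2 * N) r
      = (-1) ^ N * ∑ r ∈ range (2 * N + 1),
          (-1 : PowerSeries ℤ) ^ r * X ^ ((Nat.dist r N) ^ 2) * gb (2 * N) r := by
        rw [Finset.mul_sum]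
        apply Finset.sum_congr rfl
        intro r _
        rw [pow_add]
        ring
    _ = (-1) ^ N * ((-1) ^ N * OddP N ^ 2) := by rw [hS]
    _ = OddP N ^ 2 := by rw [← mul_assoc, hNN, one_mul]

/-! ### congruence lemmas -/

lemma dvd_prod_sub_one {ι : Type*} (s : Finset ι) (f : ι → ℕ) (B : ℕ)
    (h : ∀ i ∈ s, B ≤ f i) :
    (X : PowerSeries ℤ) ^ B ∣ (∏ i ∈ s, (1 - X ^ (f i))) - 1 := by
  induction s using Finset.cons_induction with
  | empty => simp
  | cons a s ha ih =>
    rw [Finset.prod_cons]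
    have h1 : (1 - (X : PowerSeries ℤ) ^ (f a)) * ∏ i ∈ s, (1 - X ^ (f i)) - 1 =
        ((∏ i ∈ s, (1 - X ^ (f i))) - 1) - X ^ (f a) * ∏ i ∈ s, (1 - X ^ (f i)) := by
      ring
    rw [h1]
    apply dvd_sub
    · exact ih (fun i hi => h i (Finset.mem_cons_of_mem hi))
    · exact Dvd.dvd.mul_right (pow_dvd_pow X (h a (Finset.mem_cons_self a s))) _

lemma dvd_mul_sub_one {B : ℕ} {P Q : PowerSeries ℤ}
    (hP : (X : PowerSeries ℤ) ^ B ∣ P - 1) (hQ : (X : PowerSeries ℤ) ^ B ∣ Q - 1) :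
    (X : PowerSeries ℤ) ^ B ∣ P * Q - 1 := by
  have : P * Q - 1 = (P - 1) * Q + (Q - 1) := by ring
  rw [this]
  exact dvd_add (hP.mul_right _) hQ

lemma gb_Dful_near_one (N r : ℕ) (hr : r ≤ 2 * N) :
    (X : PowerSeries ℤ) ^ (2 * (min r (2 * N - r) + 1)) ∣ gb (2 * N) r * Dful N - 1 := by
  set a := min r (2 * N - r) with ha
  have haN : a ≤ N := by omega
  have hgba : gb (2 * N) r = gb (2 * N) a := by
    rcases le_or_gt r N with h | h
    · rw [show a = r by omega]
    · rw [gb_symm (2 * N) r hr, show a = 2 * N - r by omega]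
  have hDsplit : Dful N = Dful a * ∏ i ∈ range (N - a), (1 - X ^ (2 * (a + i + 1))) := by
    rw [Dful, Dful, ← prod_range_add (fun i => 1 - (X : PowerSeries ℤ) ^ (2 * (i + 1)))]
    rw [show a + (N - a) = N by omega]
  rw [hgba, hDsplit, ← mul_assoc, gb_mul_Dful (2 * N) a (by omega), Shift]
  apply dvd_mul_sub_one
  · apply dvd_prod_sub_one
    intro i hi
    rw [mem_range] at hi
    omega
  · apply dvd_prod_sub_one
    intro i hi
    rw [mem_range] at hi
    omega

/-! ### Euler-type product identities -/

lemma Eprod_split (M : ℕ) : Eprod (2 * M) = OddP M * Dful M := by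
  induction M with
  | zero => simp [Eprod, OddP, Dful]
  | succ M ih =>
    rw [show 2 * (M + 1) = 2 * M + 1 + 1 by ring]
    rw [Eprod, prod_range_succ, prod_range_succ, ← Eprod, ih]
    simp only [OddP, Dful]
    rw [prod_range_succ, prod_range_succ (fun i => 1 - (X : PowerSeries ℤ) ^ (2 * (i + 1)))]
    rw [show 2 * M + 1 + 1 = 2 * (M + 1) by omega]
    ring

lemma Aprod_mul_Eprod (K : ℕ) : Aprod K * Eprod K = Dful K := by
  rw [Aprod, Eprod, Dful, ← Finset.prod_mul_distrib]
  apply Finset.prod_congr rfl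
  intro i _
  have : (1 + (X : PowerSeries ℤ) ^ (i + 1)) * (1 - X ^ (i + 1)) = 1 - X ^ (i + 1) * X ^ (i + 1) := by
    ring
  rw [this, ← pow_add, show (i + 1) + (i + 1) = 2 * (i + 1) by ring]

lemma Aprod_mul_OddP (M : ℕ) :
    Aprod (2 * M) * OddP M = ∏ i ∈ range M, (1 - X ^ (2 * (M + i + 1))) := by
  have h1 : Aprod (2 * M) * OddP M * Dful M = (∏ i ∈ range M, (1 - X ^ (2 * (M + i + 1)))) * Dful M := by
    calc Aprod (2 * M) * OddP M * Dful M = Aprod (2 * M) * Eprod (2 * M) := by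
          rw [Eprod_split]; ring
      _ = Dful (2 * M) := Aprod_mul_Eprod _
      _ = (∏ i ∈ range M, (1 - X ^ (2 * (M + i + 1)))) * Dful M := by
          rw [Dful, show 2 * M = M + M by ring,
            prod_range_add (fun i => 1 - (X : PowerSeries ℤ) ^ (2 * (i + 1))), ← Dful]
          ring
  exact mul_right_cancel₀ (Dful_ne_zero M) h1

lemma Aprod_OddP_near_one (M : ℕ) :
    (X : PowerSeries ℤ) ^ (2 * M + 2) ∣ Aprod (2 * M) * OddP M - 1 := by
  rw [Aprod_mul_OddP]
  apply dvd_prod_sub_one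
  intro i hi
  omega

lemma Eprod_mul_P (K : ℕ) : Eprod K * partialPGF K = 1 := by
  rw [Eprod, partialPGF, ← Finset.prod_mul_distrib]
  apply Finset.prod_eq_one
  intro i _
  exact geom_mul i

/-! ### Assembly -/

def PBser : PowerSeries ℤ := PowerSeries.mk fun i => (overpartitionCount i : ℤ)

lemma coeff_conv (K m : ℕ) (h : m ≤ K) :
    coeff (R := ℤ) m (Aprod K * partialPGF K) = (overpartitionCount m : ℤ) := by
  rw [coeff_mul, overpartitionCount]
  push_cast
  apply Finset.sum_congr rfl
  intro p hp
  rw [Finset.HasAntidiagonal.mem_antidiagonal] at hp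
  have h1 : p.1 ≤ K := by omega
  have h2 : p.2 ≤ K := by omega
  rw [show Aprod K = (partialDistinctGF K : PowerSeries ℤ) from rfl,
    ← distinctGF_prop p.1 K (by omega), ← partialPGF_prop p.2 K h2]
  rfl

def Wser (N : ℕ) : PowerSeries ℤ :=
  ∑ r ∈ range (2 * N + 1), (-1 : PowerSeries ℤ) ^ (r + N) * X ^ ((Nat.dist r N) ^ 2)

lemma main_dvd (n : ℕ) :
    (X : PowerSeries ℤ) ^ (n + 1) ∣ Wser (n + 1) * PBser - 1 := by
  set N := n + 1 with hN
  -- claim A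
  have hA : (X : PowerSeries ℤ) ^ (n + 1) ∣
      (∑ r ∈ range (2 * N + 1),
        (-1 : PowerSeries ℤ) ^ (r + N) * X ^ ((Nat.dist r N) ^ 2) * gb (2 * N) r) * Dful N
        - Wser N := by
    rw [Finset.sum_mul, Wser, ← Finset.sum_sub_distrib]
    apply Finset.dvd_sum
    intro r hr
    rw [mem_range] at hr
    have hterm : (-1 : PowerSeries ℤ) ^ (r + N) * X ^ ((Nat.dist r N) ^ 2) * gb (2 * N) r * Dful N
        - (-1 : PowerSeries ℤ) ^ (r + N) * X ^ ((Nat.dist r N) ^ 2) =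
        (-1 : PowerSeries ℤ) ^ (r + N) *
          (X ^ ((Nat.dist r N) ^ 2) * (gb (2 * N) r * Dful N - 1)) := by ring
    rw [hterm]
    have hdvd := gb_Dful_near_one N r (by omega)
    apply Dvd.dvd.mul_left
    have hbig : (X : PowerSeries ℤ) ^ ((Nat.dist r N) ^ 2 + 2 * (min r (2 * N - r) + 1)) ∣
        X ^ ((Nat.dist r N) ^ 2) * (gb (2 * N) r * Dful N - 1) := by
      rw [pow_add]
      exact mul_dvd_mul_left _ hdvd
    apply dvd_trans _ hbig
    apply pow_dvd_pow
    -- n + 1 ≤ d^2 + 2(a+1), where d + a = N = n+1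
    have hda : Nat.dist r N + min r (2 * N - r) = N := by
      rcases le_or_gt r N with h | h
      · rw [Nat.dist_eq_sub_of_le h]; omega
      · rw [Nat.dist_eq_sub_of_le_right (le_of_lt h)]; omega
    nlinarith [sq_nonneg (Nat.dist r N - 1), Nat.sub_add_cancel (show 1 ≤ Nat.dist r N + 1 by omega)]
  rw [gauss_S N] at hA
  -- hA : X^(n+1) ∣ OddP N ^ 2 * Dful N - Wser N
  have h3 : (X : PowerSeries ℤ) ^ (n + 1) ∣ PBser - Aprod (2 * N) * partialPGF (2 * N) := by
    rw [X_pow_dvd_iff]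
    intro m hm
    rw [map_sub, coeff_conv (2 * N) m (by omega), PBser, coeff_mk, sub_self]
  have h4 : (X : PowerSeries ℤ) ^ (n + 1) ∣
      OddP N ^ 2 * Dful N * (Aprod (2 * N) * partialPGF (2 * N)) - 1 := by
    have hE : OddP N ^ 2 * Dful N * (Aprod (2 * N) * partialPGF (2 * N)) =
        Aprod (2 * N) * OddP N := by
      calc OddP N ^ 2 * Dful N * (Aprod (2 * N) * partialPGF (2 * N))
          = (Aprod (2 * N) * OddP N) * ((OddP N * Dful N) * partialPGF (2 * N)) := by ring
        _ = (Aprod (2 * N) * OddP N) * (Eprod (2 * N) * partialPGF (2 * N)) := by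
            rw [Eprod_split]
        _ = Aprod (2 * N) * OddP N := by rw [Eprod_mul_P, mul_one]
    rw [hE]
    exact dvd_trans (pow_dvd_pow X (by omega)) (Aprod_OddP_near_one N)
  have hsplit : Wser N * PBser - 1 =
      Wser N * (PBser - Aprod (2 * N) * partialPGF (2 * N))
      + (Wser N - OddP N ^ 2 * Dful N) * (Aprod (2 * N) * partialPGF (2 * N))
      + (OddP N ^ 2 * Dful N * (Aprod (2 * N) * partialPGF (2 * N)) - 1) := by ring
  rw [hsplit]
  exact dvd_add (dvd_add (h3.mul_left _) (Dvd.dvd.mul_right (dvd_sub_comm.mp hA) _)) h4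

lemma pbar_sub (n k : ℕ) :
    pbar ((n : ℤ) - (k : ℤ)) = if k ≤ n then (overpartitionCount (n - k) : ℤ) else 0 := by
  unfold pbar
  split_ifs with h1 h2 h2
  · have h3 : ((n : ℤ) - (k : ℤ)).toNat = n - k := by omega
    rw [h3]
  · omega
  · omega
  · rfl

lemma main_rec (n : ℕ) (hn : 1 ≤ n) :
    (overpartitionCount n : ℤ) =
      2 * ∑ j ∈ range (n + 1), (-1 : ℤ) ^ j * pbar ((n : ℤ) - ((j : ℤ) + 1) ^ 2) := by
  set N := n + 1 with hN
  have hdvd := main_dvd n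
  have hcoeff : coeff (R := ℤ) n (Wser N * PBser - 1) = 0 := by
    rw [X_pow_dvd_iff] at hdvd
    exact hdvd n (by omega)
  rw [map_sub, coeff_one, if_neg (by omega : ¬ n = 0), sub_zero, coeff_mul] at hcoeff
  -- compute coeff of Wser
  have hW : ∀ i : ℕ, coeff (R := ℤ) i (Wser N) =
      ∑ r ∈ range (2 * N + 1), (-1 : ℤ) ^ (r + N) * (if i = (Nat.dist r N) ^ 2 then 1 else 0) := by
    intro i
    rw [Wser, map_sum]
    apply Finset.sum_congr rfl
    intro r _
    have hC : ((-1 : PowerSeries ℤ) ^ (r + N)) = C ((-1 : ℤ) ^ (r + N)) := by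
      rw [map_pow, map_neg, map_one]
    rw [hC, coeff_C_mul, coeff_X_pow]
  simp_rw [hW, Finset.sum_mul, PBser, coeff_mk] at hcoeff
  rw [Finset.sum_comm] at hcoeff
  -- inner sums
  have hinner : ∀ r ∈ range (2 * N + 1),
      (∑ p ∈ antidiagonal n,
        (-1 : ℤ) ^ (r + N) * (if p.1 = (Nat.dist r N) ^ 2 then 1 else 0) *
          (overpartitionCount p.2 : ℤ)) =
      (-1 : ℤ) ^ (r + N) * pbar ((n : ℤ) - ((Nat.dist r N : ℤ)) ^ 2) := by
    intro r _
    rw [Finset.Nat.sum_antidiagonal_eq_sum_range_succ_mk]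
    have hterm : ∀ k ∈ range (n + 1),
        (-1 : ℤ) ^ (r + N) * (if k = (Nat.dist r N) ^ 2 then 1 else 0) *
          (overpartitionCount (n - k) : ℤ) =
        if k = (Nat.dist r N) ^ 2 then
          (-1 : ℤ) ^ (r + N) * (overpartitionCount (n - k) : ℤ) else 0 := by
      intro k _
      split_ifs <;> ring
    rw [Finset.sum_congr rfl hterm, Finset.sum_ite_eq' (range (n + 1))]
    have : ((Nat.dist r N : ℤ)) ^ 2 = ((Nat.dist r N ^ 2 : ℕ) : ℤ) := by push_cast; ring
    rw [this, pbar_sub n ((Nat.dist r N) ^ 2)]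
    simp only [mem_range]
    split_ifs with h1 h2 h2
    · rfl
    · exact (h2 (by omega)).elim
    · exact (h1 (by omega)).elim
    · ring
  rw [Finset.sum_congr rfl hinner] at hcoeff
  -- now split the sum over r
  have hsplit : ∑ r ∈ range (2 * N + 1), (-1 : ℤ) ^ (r + N) * pbar ((n : ℤ) - ((Nat.dist r N : ℤ)) ^ 2)
      = (∑ j ∈ range N, (-1 : ℤ) ^ (j + 1) * pbar ((n : ℤ) - ((j : ℤ) + 1) ^ 2))
        + ((∑ j ∈ range N, (-1 : ℤ) ^ (j + 1) * pbar ((n : ℤ) - ((j : ℤ) + 1) ^ 2)) + pbar (n : ℤ)) := by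
    conv_lhs => rw [range_eq_Ico]
    rw [← Finset.sum_Ico_consecutive _ (by omega : 0 ≤ N) (by omega : N ≤ 2 * N + 1)]
    congr 1
    · rw [← range_eq_Ico, ← Finset.sum_range_reflect]
      apply Finset.sum_congr rfl
      intro j hj
      rw [mem_range] at hj
      have hd : Nat.dist (N - 1 - j) N = j + 1 := by
        rw [Nat.dist_eq_sub_of_le (by omega : N - 1 - j ≤ N)]
        omega
      have hsign : (N - 1 - j) + N = (j + 1) + 2 * (N - 1 - j) := by omega
      rw [hd, hsign, pow_add, pow_mul, neg_one_sq, one_pow, mul_one]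
      push_cast
      ring_nf
    · rw [Finset.sum_Ico_eq_sum_range, show 2 * N + 1 - N = N + 1 by omega,
        sum_range_succ' (fun k => (-1 : ℤ) ^ ((N + k) + N) * pbar ((n : ℤ) - ((Nat.dist (N + k) N : ℤ)) ^ 2))]
      congr 1
      · apply Finset.sum_congr rfl
        intro k _
        have hd : Nat.dist (N + (k + 1)) N = k + 1 := by
          rw [Nat.dist_eq_sub_of_le_right (by omega : N ≤ N + (k + 1))]
          omega
        have hsign : (N + (k + 1)) + N = (k + 1) + 2 * N := by omega
        rw [hd, hsign, pow_add, pow_mul, neg_one_sq, one_pow, mul_one]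
        push_cast
        ring_nf
      · have hd : Nat.dist (N + 0) N = 0 := by
          rw [Nat.dist_eq_sub_of_le_right (by omega : N ≤ N + 0)]
          omega
        rw [hd, show (N + 0) + N = 2 * N by omega, pow_mul, neg_one_sq, one_pow, one_mul]
        norm_num
  rw [hsplit] at hcoeff
  have hpn : pbar ((n : ℤ)) = (overpartitionCount n : ℤ) := by
    have := pbar_sub n 0
    simp at this
    simpa using this
  rw [hpn] at hcoeff
  have : ∀ j ∈ range N, (-1:ℤ)^(j+1) * pbar ((n : ℤ) - ((j : ℤ) + 1) ^ 2)
      = -((-1:ℤ)^j * pbar ((n : ℤ) - ((j : ℤ) + 1) ^ 2)) := by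
    intro j _
    rw [pow_succ]
    ring
  rw [Finset.sum_congr rfl this, Finset.sum_neg_distrib] at hcoeff
  rw [hN] at hcoeff ⊢
  linarith [hcoeff]

/-! ### Monotonicity and the final inequality -/

lemma partitionCount_mono (m : ℕ) : partitionCount m ≤ partitionCount (m + 1) := by
  rw [partitionCount, partitionCount]
  let f : Nat.Partition m → Nat.Partition (m + 1) := fun p =>
    { parts := 1 ::ₘ p.parts
      parts_pos := by
        intro j hj
        rcases Multiset.mem_cons.mp hj with h | h
        · omega
        · exact p.parts_pos h
      parts_sum := by rw [Multiset.sum_cons, p.parts_sum, Nat.add_comm] }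
  apply Fintype.card_le_of_injective f
  intro p q h
  have hparts : (1 : ℕ) ::ₘ p.parts = 1 ::ₘ q.parts := congrArg Nat.Partition.parts h
  exact Nat.Partition.ext ((Multiset.cons_inj_right 1).mp hparts)

lemma overpartitionCount_mono (m : ℕ) : overpartitionCount m ≤ overpartitionCount (m + 1) := by
  rw [overpartitionCount, overpartitionCount,
    Finset.Nat.sum_antidiagonal_eq_sum_range_succ_mk, Finset.Nat.sum_antidiagonal_eq_sum_range_succ_mk]
  calc ∑ k ∈ range (m + 1), #(Nat.Partition.distincts k) * partitionCount (m - k)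
      ≤ ∑ k ∈ range (m + 1), #(Nat.Partition.distincts k) * partitionCount (m + 1 - k) := by
        apply Finset.sum_le_sum
        intro k hk
        rw [mem_range] at hk
        have h2 : m + 1 - k = (m - k) + 1 := by omega
        rw [h2]
        exact Nat.mul_le_mul_left _ (partitionCount_mono (m - k))
    _ ≤ ∑ k ∈ range (m + 1 + 1), #(Nat.Partition.distincts k) * partitionCount (m + 1 - k) :=
        Finset.sum_le_sum_of_subset (by apply Finset.range_subset_range.mpr; omega)

lemma overpartitionCount_mono' {a b : ℕ} (h : a ≤ b) :
    overpartitionCount a ≤ overpartitionCount b := by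
  induction b with
  | zero =>
    have : a = 0 := by omega
    rw [this]
  | succ b ih =>
    rcases Nat.lt_or_ge a (b + 1) with h1 | h1
    · exact le_trans (ih (by omega)) (overpartitionCount_mono b)
    · have h2 : a = b + 1 := by omega
      rw [h2]

lemma pbar_nonneg (a : ℤ) : 0 ≤ pbar a := by
  unfold pbar
  split_ifs
  · positivity
  · exact le_refl 0

lemma pbar_mono {a b : ℤ} (h : a ≤ b) : pbar a ≤ pbar b := by
  unfold pbar
  split_ifs with h1 h2 h2
  · exact_mod_cast overpartitionCount_mono' (by omega)
  · omega
  · positivity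
  · exact le_refl 0
lemma alt_sum_nonneg (g : ℕ → ℤ) (hmono : ∀ i j : ℕ, i ≤ j → g j ≤ g i)
    (hnn : ∀ i, 0 ≤ g i) (m : ℕ) : 0 ≤ ∑ t ∈ range m, (-1 : ℤ) ^ t * g t := by
  have key : ∀ k : ℕ, 0 ≤ ∑ t ∈ range (2 * k), (-1 : ℤ) ^ t * g t ∧
      0 ≤ ∑ t ∈ range (2 * k + 1), (-1 : ℤ) ^ t * g t := by
    intro k
    induction k with
    | zero => constructor <;> simp [hnn 0]
    | succ k ih =>
      have h2 : ∑ t ∈ range (2 * (k + 1)), (-1 : ℤ) ^ t * g t =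
          ∑ t ∈ range (2 * k), (-1 : ℤ) ^ t * g t + (g (2 * k) - g (2 * k + 1)) := by
        rw [show 2 * (k + 1) = (2 * k + 1) + 1 by ring, sum_range_succ, sum_range_succ]
        rw [pow_mul, neg_one_sq, one_pow, one_mul, pow_succ, pow_mul, neg_one_sq, one_pow, one_mul]
        ring
      constructor
      · rw [h2]
        have := hmono (2 * k) (2 * k + 1) (by omega)
        linarith [ih.1]
      · rw [sum_range_succ, h2]
        have h3 : (-1 : ℤ) ^ (2 * (k + 1)) = 1 := by
          rw [pow_mul, neg_one_sq, one_pow]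
        rw [h3, one_mul]
        have := hmono (2 * k) (2 * k + 1) (by omega)
        linarith [ih.1, hnn (2 * (k + 1))]
  rcases Nat.even_or_odd m with ⟨k, hk⟩ | ⟨k, hk⟩
  · rw [hk, show k + k = 2 * k by ring]
    exact (key k).1
  · rw [hk]
    exact (key k).2

lemma pbar_coe (n : ℕ) : pbar (n : ℤ) = (overpartitionCount n : ℤ) := by
  unfold pbar
  rw [if_pos (by omega : (0:ℤ) ≤ (n:ℤ)), Int.toNat_natCast]

end
end OPartIneq

theorem overpartition_ineq_k2 (n : ℕ) (hn : 1 ≤ n) :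
    0 ≤ pbar n - 2 * pbar ((n : ℤ) - 1) + 2 * pbar ((n : ℤ) - 4) := by
  obtain ⟨m, rfl⟩ : ∃ m, n = m + 1 := ⟨n - 1, by omega⟩
  have hrec := OPartIneq.main_rec (m + 1) (by omega)
  rw [← OPartIneq.pbar_coe] at hrec
  set F := fun (j : ℕ) => (-1 : ℤ) ^ j * pbar (((m + 1 : ℕ) : ℤ) - ((j : ℤ) + 1) ^ 2) with hF
  rw [Finset.sum_range_succ' F (m + 1),
    Finset.sum_range_succ' (fun j => F (j + 1)) m] at hrec
  have hF0 : F 0 = pbar (((m + 1 : ℕ) : ℤ) - 1) := by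
    rw [hF]
    norm_num
  have hF1 : F (0 + 1) = -pbar (((m + 1 : ℕ) : ℤ) - 4) := by
    rw [hF]
    norm_num
  have hsum : ∀ j ∈ Finset.range m,
      F (j + 1 + 1) = (-1 : ℤ) ^ j * pbar (((m + 1 : ℕ) : ℤ) - ((j : ℤ) + 3) ^ 2) := by
    intro j _
    simp only [hF]
    have h1 : ((-1 : ℤ)) ^ (j + 1 + 1) = (-1) ^ j := by
      rw [show j + 1 + 1 = j + 2 from rfl, pow_add, neg_one_sq, mul_one]
    rw [h1]
    push_cast
    ring_nf
  rw [Finset.sum_congr rfl hsum, hF0, hF1] at hrec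
  have halt : 0 ≤ ∑ j ∈ Finset.range m,
      (-1 : ℤ) ^ j * pbar (((m + 1 : ℕ) : ℤ) - ((j : ℤ) + 3) ^ 2) := by
    apply OPartIneq.alt_sum_nonneg
    · intro i j hij
      apply OPartIneq.pbar_mono
      have hij' : (i : ℤ) ≤ (j : ℤ) := by exact_mod_cast hij
      nlinarith
    · intro i
      exact OPartIneq.pbar_nonneg _
  linarith [hrec, halt]
end

section
/- For all n ≥ 1, p_od(n) - p_od(n-1) - p_od(n-3) + p_od(n-6) ≤ 0, where p_od(m) = 0 for m < 0. -/
open Finset Multiset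


/-- multisets of positive naturals with sum `n` and distinct odd parts -/
def Pods (n : ℕ) : Finset (Multiset ℕ) :=
  ((Finset.univ : Finset (Nat.Partition n)).filter
    (fun l => (l.parts.filter (fun i => i % 2 = 1)).Nodup)).image Nat.Partition.parts

lemma podCount_eq (n : ℕ) : podCount n = (Pods n).card := by
  rw [Pods, Finset.card_image_of_injOn, podCount]
  intro p _ q _ h
  ext1; rw [h]

lemma mem_Pods {n : ℕ} {m : Multiset ℕ} :
    m ∈ Pods n ↔ m.sum = n ∧ (∀ x ∈ m, 0 < x) ∧ (m.filter (fun i => i % 2 = 1)).Nodup := by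
  constructor
  · intro h
    simp only [Pods, Finset.mem_image, Finset.mem_filter] at h
    obtain ⟨l, ⟨-, hl⟩, rfl⟩ := h
    exact ⟨l.parts_sum, fun x hx => l.parts_pos hx, hl⟩
  · rintro ⟨h1, h2, h3⟩
    simp only [Pods, Finset.mem_image, Finset.mem_filter]
    exact ⟨⟨m, fun {x} hx => h2 x hx, h1⟩, ⟨Finset.mem_univ _, h3⟩, rfl⟩

/-- those whose parts are all `≥ 3` -/
def Ds (n : ℕ) : Finset (Multiset ℕ) := (Pods n).filter (fun m => ∀ x ∈ m, 3 ≤ x)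

lemma mem_Ds {n : ℕ} {m : Multiset ℕ} :
    m ∈ Ds n ↔ m.sum = n ∧ (∀ x ∈ m, 3 ≤ x) ∧ (m.filter (fun i => i % 2 = 1)).Nodup := by
  simp only [Ds, Finset.mem_filter, mem_Pods]
  constructor
  · rintro ⟨⟨h1, _, h3⟩, h4⟩; exact ⟨h1, h4, h3⟩
  · rintro ⟨h1, h2, h3⟩
    exact ⟨⟨h1, fun x hx => lt_of_lt_of_le (by norm_num) (h2 x hx), h3⟩, h2⟩

lemma oddnodup_le {m t : Multiset ℕ} (h : t ≤ m)
    (hm : (m.filter (fun i => i % 2 = 1)).Nodup) : (t.filter (fun i => i % 2 = 1)).Nodup :=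
  Multiset.nodup_of_le (Multiset.filter_le_filter _ h) hm

lemma count_le_of_oddnodup {m : Multiset ℕ} {a : ℕ}
    (hm : (m.filter (fun i => i % 2 = 1)).Nodup) (ha : a % 2 = 1) : m.count a ≤ 1 := by
  have := Multiset.nodup_iff_count_le_one.1 hm a
  rw [Multiset.count_filter] at this
  simpa [ha] using this

lemma not_mem_erase_of_oddnodup {m : Multiset ℕ} {a : ℕ}
    (hm : (m.filter (fun i => i % 2 = 1)).Nodup) (ha : a % 2 = 1) : a ∉ m.erase a := by
  have h1 := count_le_of_oddnodup hm ha
  rw [← Multiset.count_pos, Multiset.count_erase_self]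
  omega

lemma oddnodup_cons_odd {m : Multiset ℕ} {a : ℕ} (ha : a % 2 = 1) (hma : a ∉ m)
    (hm : (m.filter (fun i => i % 2 = 1)).Nodup) :
    ((a ::ₘ m).filter (fun i => i % 2 = 1)).Nodup := by
  rw [Multiset.filter_cons_of_pos (p := fun i => i % 2 = 1) _ ha, Multiset.nodup_cons]
  exact ⟨fun hc => hma (Multiset.mem_of_mem_filter hc), hm⟩

lemma oddnodup_cons_even {m : Multiset ℕ} {a : ℕ} (ha : ¬ (a % 2 = 1))
    (hm : (m.filter (fun i => i % 2 = 1)).Nodup) :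
    ((a ::ₘ m).filter (fun i => i % 2 = 1)).Nodup := by
  rwa [Multiset.filter_cons_of_neg (p := fun i => i % 2 = 1) _ ha]

lemma le_msum {a : ℕ} {m : Multiset ℕ} (h : a ∈ m) : a ≤ m.sum := by
  obtain ⟨t, rfl⟩ := Multiset.exists_cons_of_mem h
  simp

/-- Euler-style: pod(n+1) = pod(n) + d(n+1) -/
lemma podA (n : ℕ) : podCount (n+1) = podCount n + (Ds (n+1)).card := by
  classical
  rw [podCount_eq, podCount_eq]
  have hsplit := Finset.card_filter_add_card_filter_not
    (s := Pods (n+1)) (p := fun m => ∀ x ∈ m, 3 ≤ x)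
  rw [← Ds] at hsplit
  have hbij : ((Pods (n+1)).filter (fun m => ¬ ∀ x ∈ m, 3 ≤ x)).card = (Pods n).card := by
    refine Finset.card_bij' (fun m _ => if 1 ∈ m then m.erase 1 else 1 ::ₘ m.erase 2)
      (fun μ _ => if 1 ∈ μ then 2 ::ₘ μ.erase 1 else 1 ::ₘ μ) ?_ ?_ ?_ ?_
    · -- hi
      intro m hm
      rw [Finset.mem_filter, mem_Pods] at hm
      obtain ⟨⟨hsum, hpos, hodd⟩, hsmall⟩ := hm
      by_cases h1 : 1 ∈ m
      · rw [if_pos h1, mem_Pods]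
        obtain ⟨t, rfl⟩ := Multiset.exists_cons_of_mem h1
        rw [Multiset.erase_cons_head]
        refine ⟨by simp at hsum ⊢; omega, fun x hx => hpos x (by simp [hx]),
          oddnodup_le (Multiset.le_cons_self _ _) hodd⟩
      · have h2 : 2 ∈ m := by
          push_neg at hsmall
          obtain ⟨x, hx, hx3⟩ := hsmall
          have := hpos x hx
          interval_cases x
          · exact absurd hx h1
          · exact hx
        rw [if_neg h1, mem_Pods]
        obtain ⟨t, rfl⟩ := Multiset.exists_cons_of_mem h2
        rw [Multiset.erase_cons_head]
        refine ⟨by simp at hsum ⊢; omega, ?_, ?_⟩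
        · intro x hx
          rcases Multiset.mem_cons.1 hx with rfl | hx
          · norm_num
          · exact hpos x (by simp [hx])
        · apply oddnodup_cons_odd rfl (fun hc => h1 (by simp [hc]))
          exact oddnodup_le (Multiset.le_cons_self _ _) hodd
    · -- hj
      intro μ hμ
      rw [mem_Pods] at hμ
      obtain ⟨hsum, hpos, hodd⟩ := hμ
      rw [Finset.mem_filter, mem_Pods]
      by_cases h1 : 1 ∈ μ
      · rw [if_pos h1]
        obtain ⟨t, rfl⟩ := Multiset.exists_cons_of_mem h1
        rw [Multiset.erase_cons_head]
        refine ⟨⟨by simp at hsum ⊢; omega, ?_, ?_⟩, ?_⟩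
        · intro x hx
          rcases Multiset.mem_cons.1 hx with rfl | hx
          · norm_num
          · exact hpos x (by simp [hx])
        · exact oddnodup_cons_even (by norm_num) (oddnodup_le (Multiset.le_cons_self _ _) hodd)
        · intro hall
          have := hall 2 (Multiset.mem_cons_self _ _)
          omega
      · rw [if_neg h1]
        refine ⟨⟨by simp [hsum]; omega, ?_, oddnodup_cons_odd rfl h1 hodd⟩, ?_⟩
        · intro x hx
          rcases Multiset.mem_cons.1 hx with rfl | hx
          · norm_num
          · exact hpos x hx
        · intro hall
          have := hall 1 (Multiset.mem_cons_self _ _)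
          omega
    · -- left inverse
      intro m hm
      rw [Finset.mem_filter, mem_Pods] at hm
      obtain ⟨⟨hsum, hpos, hodd⟩, hsmall⟩ := hm
      by_cases h1 : 1 ∈ m
      · rw [if_pos h1, if_neg (not_mem_erase_of_oddnodup hodd rfl), Multiset.cons_erase h1]
      · rw [if_neg h1, if_pos (Multiset.mem_cons_self _ _), Multiset.erase_cons_head]
        have h2 : 2 ∈ m := by
          push_neg at hsmall
          obtain ⟨x, hx, hx3⟩ := hsmall
          have := hpos x hx
          interval_cases x
          · exact absurd hx h1
          · exact hx
        rw [Multiset.cons_erase h2]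
    · -- right inverse
      intro μ hμ
      rw [mem_Pods] at hμ
      obtain ⟨hsum, hpos, hodd⟩ := hμ
      by_cases h1 : 1 ∈ μ
      · rw [if_pos h1]
        have hne : (1:ℕ) ∉ (2 ::ₘ μ.erase 1) := by
          rw [Multiset.mem_cons]
          push_neg
          exact ⟨by norm_num, not_mem_erase_of_oddnodup hodd rfl⟩
        rw [if_neg hne, Multiset.erase_cons_head, Multiset.cons_erase h1]
      · rw [if_neg h1, if_pos (Multiset.mem_cons_self _ _), Multiset.erase_cons_head]
  omega

lemma filter_replicate_add (q a : ℕ) (t : Multiset ℕ) (p : ℕ → Prop) [DecidablePred p]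
    (h : ¬ p a) : (Multiset.replicate q a + t).filter p = t.filter p := by
  rw [Multiset.filter_add, Multiset.filter_eq_nil.2 (fun b hb => by
    rw [Multiset.eq_of_mem_replicate hb]; exact h)]
  exact zero_add _

def mmin (m : Multiset ℕ) : ℕ := if h : m.toFinset.Nonempty then m.toFinset.min' h else 0

lemma mmin_mem {m : Multiset ℕ} (h : m ≠ 0) : mmin m ∈ m := by
  have hne : m.toFinset.Nonempty := by
    rw [Multiset.toFinset_nonempty]; exact h
  rw [mmin, dif_pos hne]
  exact Multiset.mem_toFinset.1 (Finset.min'_mem _ hne)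

lemma mmin_le {m : Multiset ℕ} {x : ℕ} (hx : x ∈ m) : mmin m ≤ x := by
  have hne : m.toFinset.Nonempty := ⟨x, Multiset.mem_toFinset.2 hx⟩
  rw [mmin, dif_pos hne]
  exact Finset.min'_le _ _ (Multiset.mem_toFinset.2 hx)


lemma repl_mem_Ds (q : ℕ) {t : Multiset ℕ} (ht3 : ∀ x ∈ t, 3 ≤ x)
    (htodd : (t.filter (fun i => i % 2 = 1)).Nodup) :
    (Multiset.replicate q 4 + t) ∈ Ds (4*q + t.sum) := by
  rw [mem_Ds]
  refine ⟨by simp [Multiset.sum_replicate]; ring, ?_, ?_⟩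
  · intro x hx
    rcases Multiset.mem_add.1 hx with hx | hx
    · have := Multiset.eq_of_mem_replicate hx; omega
    · exact ht3 x hx
  · rw [filter_replicate_add _ _ _ _ (by omega)]
    exact htodd

lemma repl3_mem_Ds (q : ℕ) {t : Multiset ℕ} (ht3 : ∀ x ∈ t, 3 ≤ x)
    (htodd : (t.filter (fun i => i % 2 = 1)).Nodup) (h3t : 3 ∉ t) :
    (3 ::ₘ (Multiset.replicate q 4 + t)) ∈ Ds (3 + (4*q + t.sum)) := by
  have h := repl_mem_Ds q ht3 htodd
  rw [mem_Ds] at h ⊢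
  obtain ⟨h1, h2, h3⟩ := h
  refine ⟨by rw [Multiset.sum_cons, h1], ?_, ?_⟩
  · intro x hx
    rcases Multiset.mem_cons.1 hx with rfl | hx
    · omega
    · exact h2 x hx
  · refine oddnodup_cons_odd rfl ?_ h3
    intro hc
    rcases Multiset.mem_add.1 hc with hc | hc
    · have := Multiset.eq_of_mem_replicate hc; omega
    · exact h3t hc

lemma not3_repl {q : ℕ} {t : Multiset ℕ} (h3t : 3 ∉ t) :
    (3:ℕ) ∉ Multiset.replicate q 4 + t := by
  intro hc
  rcases Multiset.mem_add.1 hc with hc | hc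
  · have := Multiset.eq_of_mem_replicate hc; omega
  · exact h3t hc

lemma repl_count4 (q : ℕ) {t : Multiset ℕ} (h4t : 4 ∉ t) :
    (Multiset.replicate q 4 + t).count 4 = q := by
  simp [Multiset.count_add, Multiset.count_replicate, Multiset.count_eq_zero.2 h4t]

lemma repl_filter4 (q : ℕ) {t : Multiset ℕ} (h4t : 4 ∉ t) :
    (Multiset.replicate q 4 + t).filter (· ≠ 4) = t := by
  rw [Multiset.filter_add]
  have h1 : (Multiset.replicate q 4).filter (· ≠ 4) = 0 :=
    Multiset.filter_eq_nil.2 (fun b hb => by simp [Multiset.eq_of_mem_replicate hb])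
  have h2 : t.filter (· ≠ 4) = t :=
    Multiset.filter_eq_self.2 (fun a ha h => h4t (by rwa [h] at ha))
  rw [h1, h2]
  exact zero_add _

def fAux (s : ℕ) (t : Multiset ℕ) : ℕ × Multiset ℕ :=
  if s = 3 then (0, t)
  else if s = 4 then (1, t)
  else if s = 5 then (2, t)
  else if s = 6 then (0, 3 ::ₘ t)
  else if s % 4 = 2 then (0, 3 ::ₘ (Multiset.replicate ((s-6)/4) 4 + t))
  else if s % 4 = 3 then (1, 3 ::ₘ (Multiset.replicate ((s-7)/4) 4 + t))
  else if s % 4 = 1 then (2, Multiset.replicate ((s-5)/4) 4 + t)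
  else (2, 3 ::ₘ (Multiset.replicate ((s-8)/4) 4 + t))

def fInj (m : Multiset ℕ) : ℕ × Multiset ℕ := fAux (mmin m) (m.erase (mmin m))

def gRec (c : ℕ) (μ : Multiset ℕ) : Multiset ℕ :=
  if c = 0 then
    if 3 ∉ μ then 3 ::ₘ μ
    else if 4 ∉ μ then 6 ::ₘ μ.erase 3
    else (4 * μ.count 4 + 6) ::ₘ ((μ.erase 3).filter (· ≠ 4))
  else if c = 1 then
    if 3 ∉ μ then 4 ::ₘ μ
    else (4 * μ.count 4 + 7) ::ₘ ((μ.erase 3).filter (· ≠ 4))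
  else
    if 3 ∈ μ then (4 * μ.count 4 + 8) ::ₘ ((μ.erase 3).filter (· ≠ 4))
    else if 4 ∈ μ then (4 * μ.count 4 + 5) ::ₘ (μ.filter (· ≠ 4))
    else 5 ::ₘ μ

lemma key (k : ℕ) {m : Multiset ℕ} (hm : m ∈ Ds (k+6)) :
    ((fInj m).1 = 0 ∧ (fInj m).2 ∈ Ds (k+3) ∨
     (fInj m).1 = 1 ∧ (fInj m).2 ∈ Ds (k+2) ∨
     (fInj m).1 = 2 ∧ (fInj m).2 ∈ Ds (k+1)) ∧
    gRec (fInj m).1 (fInj m).2 = m := by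
  classical
  rw [mem_Ds] at hm
  obtain ⟨hsum, h3, hodd⟩ := hm
  have hne : m ≠ 0 := by
    intro h; rw [h] at hsum; simp at hsum
  set s := mmin m with hs'
  have hs : s ∈ m := mmin_mem hne
  have hmin : ∀ x ∈ m, s ≤ x := fun x hx => mmin_le hx
  have hs3 : 3 ≤ s := h3 _ hs
  set t := m.erase s with ht'
  have hmt : s ::ₘ t = m := Multiset.cons_erase hs
  have ht3 : ∀ x ∈ t, 3 ≤ x := fun x hx => h3 x (Multiset.mem_of_mem_erase hx)
  have htmin : ∀ x ∈ t, s ≤ x := fun x hx => hmin x (Multiset.mem_of_mem_erase hx)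
  have htsum : s + t.sum = k + 6 := by
    rw [← hsum, ← hmt, Multiset.sum_cons]
  have htodd : (t.filter (fun i => i % 2 = 1)).Nodup :=
    oddnodup_le (Multiset.erase_le _ _) hodd
  have hfInj : fInj m = fAux s t := rfl
  have hrecm : ∀ a : ℕ, a = s → a ::ₘ t = m := fun a ha => by rw [ha]; exact hmt
  -- break into cases
  have hcases : s = 3 ∨ s = 4 ∨ s = 5 ∨ s = 6 ∨ (10 ≤ s ∧ s % 4 = 2) ∨
      (7 ≤ s ∧ s % 4 = 3) ∨ (9 ≤ s ∧ s % 4 = 1) ∨ (8 ≤ s ∧ s % 4 = 0) := by omega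
  rcases hcases with h | h | h | h | h | h | h | h
  · -- s = 3 : tag 0, erase
    have hf : fInj m = (0, t) := by rw [hfInj, fAux, if_pos h]
    have h3t : 3 ∉ t := by
      rw [← h]; exact not_mem_erase_of_oddnodup hodd (by omega)
    rw [hf]
    dsimp only
    refine ⟨Or.inl ⟨rfl, mem_Ds.2 ⟨by omega, ht3, htodd⟩⟩, ?_⟩
    rw [gRec, if_pos rfl, if_pos h3t]
    exact hrecm _ h.symm
  · -- s = 4 : tag 1, erase
    have hf : fInj m = (1, t) := by rw [hfInj, fAux, if_neg (by omega), if_pos h]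
    have h3t : 3 ∉ t := fun hc => by have := htmin 3 hc; omega
    rw [hf]
    dsimp only
    refine ⟨Or.inr (Or.inl ⟨rfl, mem_Ds.2 ⟨by omega, ht3, htodd⟩⟩), ?_⟩
    rw [gRec, if_neg (by omega), if_pos rfl, if_pos h3t]
    exact hrecm _ h.symm
  · -- s = 5 : tag 2, erase
    have hf : fInj m = (2, t) := by
      rw [hfInj, fAux, if_neg (by omega), if_neg (by omega), if_pos h]
    have h3t : 3 ∉ t := fun hc => by have := htmin 3 hc; omega
    have h4t : 4 ∉ t := fun hc => by have := htmin 4 hc; omega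
    rw [hf]
    dsimp only
    refine ⟨Or.inr (Or.inr ⟨rfl, mem_Ds.2 ⟨by omega, ht3, htodd⟩⟩), ?_⟩
    rw [gRec, if_neg (by omega), if_neg (by omega), if_neg (by simpa using h3t),
      if_neg h4t]
    exact hrecm _ h.symm
  · -- s = 6 : tag 0, replace by 3
    have hf : fInj m = (0, 3 ::ₘ t) := by
      rw [hfInj, fAux, if_neg (by omega), if_neg (by omega), if_neg (by omega), if_pos h]
    have h3t : 3 ∉ t := fun hc => by have := htmin 3 hc; omega
    have h4t : 4 ∉ t := fun hc => by have := htmin 4 hc; omega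
    rw [hf]
    dsimp only
    constructor
    · refine Or.inl ⟨rfl, mem_Ds.2 ⟨by rw [Multiset.sum_cons]; omega, ?_, ?_⟩⟩
      · intro x hx
        rcases Multiset.mem_cons.1 hx with rfl | hx
        · omega
        · exact ht3 x hx
      · exact oddnodup_cons_odd rfl h3t htodd
    · have h3mem : (3:ℕ) ∈ (3 ::ₘ t) := Multiset.mem_cons_self _ _
      have h4mem : (4:ℕ) ∉ (3 ::ₘ t) := by
        rw [Multiset.mem_cons]; push_neg; exact ⟨by omega, h4t⟩
      rw [gRec, if_pos rfl, if_neg (by simpa using h3mem), if_pos h4mem,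
        Multiset.erase_cons_head]
      exact hrecm _ h.symm
  · -- s % 4 = 2, 10 ≤ s, tag 0, target k+3
    have h3t : 3 ∉ t := fun hc => by have := htmin 3 hc; omega
    have h4t : 4 ∉ t := fun hc => by have := htmin 4 hc; omega
    obtain ⟨q, hq, hq1⟩ : ∃ q, s = 4*q+6 ∧ 1 ≤ q := ⟨(s-6)/4, by omega, by omega⟩
    have hf : fInj m = (0, 3 ::ₘ (Multiset.replicate q 4 + t)) := by
      rw [hfInj, fAux, if_neg (by omega), if_neg (by omega), if_neg (by omega),
        if_neg (by omega), if_pos (show s % 4 = 2 by omega),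
        show (s-6)/4 = q from by omega]
    rw [hf]
    dsimp only
    constructor
    · refine Or.inl ⟨rfl, ?_⟩
      have := repl3_mem_Ds q ht3 htodd h3t
      rwa [show 3 + (4*q + t.sum) = k + 3 from by omega] at this
    · have h3mem : (3:ℕ) ∈ 3 ::ₘ (Multiset.replicate q 4 + t) :=
        Multiset.mem_cons_self _ _
      have h4mem : (4:ℕ) ∈ 3 ::ₘ (Multiset.replicate q 4 + t) :=
        Multiset.mem_cons.2 (Or.inr (Multiset.mem_add.2 (Or.inl
          (Multiset.mem_replicate.2 ⟨by omega, rfl⟩))))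
      rw [gRec, if_pos rfl, if_neg (by simpa using h3mem), if_neg (not_not_intro h4mem),
        Multiset.count_cons_of_ne (by omega), repl_count4 q h4t,
        Multiset.erase_cons_head, repl_filter4 q h4t]
      exact hrecm _ (by omega)
  · -- s % 4 = 3, 7 ≤ s, tag 1, target k+2
    have h3t : 3 ∉ t := fun hc => by have := htmin 3 hc; omega
    have h4t : 4 ∉ t := fun hc => by have := htmin 4 hc; omega
    obtain ⟨q, hq⟩ : ∃ q, s = 4*q+7 := ⟨(s-7)/4, by omega⟩
    have hf : fInj m = (1, 3 ::ₘ (Multiset.replicate q 4 + t)) := by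
      rw [hfInj, fAux, if_neg (by omega), if_neg (by omega), if_neg (by omega),
        if_neg (by omega), if_neg (by omega), if_pos (show s % 4 = 3 by omega),
        show (s-7)/4 = q from by omega]
    rw [hf]
    dsimp only
    constructor
    · refine Or.inr (Or.inl ⟨rfl, ?_⟩)
      have := repl3_mem_Ds q ht3 htodd h3t
      rwa [show 3 + (4*q + t.sum) = k + 2 from by omega] at this
    · have h3mem : (3:ℕ) ∈ 3 ::ₘ (Multiset.replicate q 4 + t) :=
        Multiset.mem_cons_self _ _
      rw [gRec, if_neg (by omega), if_pos rfl, if_neg (by simpa using h3mem),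
        Multiset.count_cons_of_ne (by omega), repl_count4 q h4t,
        Multiset.erase_cons_head, repl_filter4 q h4t]
      exact hrecm _ (by omega)
  · -- s % 4 = 1, 9 ≤ s, tag 2, target k+1
    have h3t : 3 ∉ t := fun hc => by have := htmin 3 hc; omega
    have h4t : 4 ∉ t := fun hc => by have := htmin 4 hc; omega
    obtain ⟨q, hq, hq1⟩ : ∃ q, s = 4*q+5 ∧ 1 ≤ q := ⟨(s-5)/4, by omega, by omega⟩
    have hf : fInj m = (2, Multiset.replicate q 4 + t) := by
      rw [hfInj, fAux, if_neg (by omega), if_neg (by omega), if_neg (by omega),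
        if_neg (by omega), if_neg (by omega), if_neg (by omega),
        if_pos (show s % 4 = 1 by omega), show (s-5)/4 = q from by omega]
    rw [hf]
    dsimp only
    constructor
    · refine Or.inr (Or.inr ⟨rfl, ?_⟩)
      have := repl_mem_Ds q ht3 htodd
      rwa [show 4*q + t.sum = k + 1 from by omega] at this
    · have h4mem : (4:ℕ) ∈ Multiset.replicate q 4 + t :=
        Multiset.mem_add.2 (Or.inl (Multiset.mem_replicate.2 ⟨by omega, rfl⟩))
      rw [gRec, if_neg (by omega), if_neg (by omega), if_neg (not3_repl h3t),
        if_pos h4mem, repl_count4 q h4t, repl_filter4 q h4t]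
      exact hrecm _ (by omega)
  · -- s % 4 = 0, 8 ≤ s, tag 2, target k+1
    have h3t : 3 ∉ t := fun hc => by have := htmin 3 hc; omega
    have h4t : 4 ∉ t := fun hc => by have := htmin 4 hc; omega
    obtain ⟨q, hq⟩ : ∃ q, s = 4*q+8 := ⟨(s-8)/4, by omega⟩
    have hf : fInj m = (2, 3 ::ₘ (Multiset.replicate q 4 + t)) := by
      rw [hfInj, fAux, if_neg (by omega), if_neg (by omega), if_neg (by omega),
        if_neg (by omega), if_neg (by omega), if_neg (by omega), if_neg (by omega),
        show (s-8)/4 = q from by omega]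
    rw [hf]
    dsimp only
    constructor
    · refine Or.inr (Or.inr ⟨rfl, ?_⟩)
      have := repl3_mem_Ds q ht3 htodd h3t
      rwa [show 3 + (4*q + t.sum) = k + 1 from by omega] at this
    · have h3mem : (3:ℕ) ∈ 3 ::ₘ (Multiset.replicate q 4 + t) :=
        Multiset.mem_cons_self _ _
      rw [gRec, if_neg (by omega), if_neg (by omega), if_pos h3mem,
        Multiset.count_cons_of_ne (by omega), repl_count4 q h4t,
        Multiset.erase_cons_head, repl_filter4 q h4t]
      exact hrecm _ (by omega)

lemma podB (k : ℕ) :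
    (Ds (k+6)).card ≤ (Ds (k+3)).card + (Ds (k+2)).card + (Ds (k+1)).card := by
  classical
  set T : Finset (ℕ × Multiset ℕ) :=
    ((Ds (k+3)).image (fun μ => (0, μ))) ∪ ((Ds (k+2)).image (fun μ => (1, μ))) ∪
    ((Ds (k+1)).image (fun μ => (2, μ))) with hT
  have h1 : (Ds (k+6)).card ≤ T.card := by
    apply Finset.card_le_card_of_injOn fInj
    · intro m hm
      have hkey := (key k hm).1
      rw [hT]
      simp only [Finset.mem_coe, Finset.mem_union, Finset.mem_image]
      rcases hkey with ⟨h0, hmem⟩ | ⟨h0, hmem⟩ | ⟨h0, hmem⟩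
      · exact Or.inl (Or.inl ⟨(fInj m).2, hmem, by rw [← h0]⟩)
      · exact Or.inl (Or.inr ⟨(fInj m).2, hmem, by rw [← h0]⟩)
      · exact Or.inr ⟨(fInj m).2, hmem, by rw [← h0]⟩
    · intro a ha b hb hab
      have h1 := (key k ha).2
      have h2 := (key k hb).2
      rw [← h1, ← h2, hab]
  have h2 : T.card ≤ (Ds (k+3)).card + (Ds (k+2)).card + (Ds (k+1)).card := by
    calc T.card ≤ (((Ds (k+3)).image (fun μ => ((0:ℕ), μ))) ∪
          ((Ds (k+2)).image (fun μ => (1, μ)))).card + ((Ds (k+1)).image (fun μ => ((2:ℕ), μ))).card :=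
            Finset.card_union_le _ _
      _ ≤ ((Ds (k+3)).image (fun μ => ((0:ℕ), μ))).card +
          ((Ds (k+2)).image (fun μ => ((1:ℕ), μ))).card + ((Ds (k+1)).image (fun μ => ((2:ℕ), μ))).card := by
            have := Finset.card_union_le ((Ds (k+3)).image (fun μ => ((0:ℕ), μ)))
              ((Ds (k+2)).image (fun μ => ((1:ℕ), μ)))
            omega
      _ ≤ (Ds (k+3)).card + (Ds (k+2)).card + (Ds (k+1)).card := by
            have a1 := Finset.card_image_le (s := Ds (k+3)) (f := fun μ => ((0:ℕ), μ))
            have a2 := Finset.card_image_le (s := Ds (k+2)) (f := fun μ => ((1:ℕ), μ))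
            have a3 := Finset.card_image_le (s := Ds (k+1)) (f := fun μ => ((2:ℕ), μ))
            omega
  omega

lemma Ds_card_zero {n : ℕ} (h1 : 1 ≤ n) (h2 : n ≤ 2) : (Ds n).card = 0 := by
  rw [Finset.card_eq_zero, Finset.eq_empty_iff_forall_notMem]
  intro m hm
  rw [mem_Ds] at hm
  obtain ⟨hsum, h3, -⟩ := hm
  have hne : m ≠ 0 := by intro h; rw [h] at hsum; simp at hsum; omega
  obtain ⟨a, ha⟩ := Multiset.exists_mem_of_ne_zero hne
  have := le_msum ha
  have := h3 a ha
  omega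

lemma Ds_card_le_one {n : ℕ} (h1 : 3 ≤ n) (h2 : n ≤ 5) : (Ds n).card ≤ 1 := by
  rw [Finset.card_le_one]
  have hsing : ∀ m ∈ Ds n, m = {n} := by
    intro m hm
    rw [mem_Ds] at hm
    obtain ⟨hsum, h3, -⟩ := hm
    have hne : m ≠ 0 := by intro h; rw [h] at hsum; simp at hsum; omega
    obtain ⟨a, t, rfl⟩ : ∃ a t, m = a ::ₘ t := by
      obtain ⟨a, ha⟩ := Multiset.exists_mem_of_ne_zero hne
      obtain ⟨t, ht⟩ := Multiset.exists_cons_of_mem ha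
      exact ⟨a, t, ht⟩
    have ht0 : t = 0 := by
      by_contra ht
      obtain ⟨b, hb⟩ := Multiset.exists_mem_of_ne_zero ht
      have h1 := h3 a (Multiset.mem_cons_self _ _)
      have h2 := h3 b (Multiset.mem_cons.2 (Or.inr hb))
      have := le_msum hb
      rw [Multiset.sum_cons] at hsum
      omega
    subst ht0
    rw [Multiset.sum_cons] at hsum
    simp at hsum ⊢
    omega
  intro a ha b hb
  rw [hsing a ha, hsing b hb]

lemma pods_nonempty {n : ℕ} (h : n ≤ 2) : 1 ≤ podCount n := by
  rw [podCount_eq, Nat.one_le_iff_ne_zero, ← Nat.pos_iff_ne_zero, Finset.card_pos]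
  interval_cases n
  · exact ⟨0, mem_Pods.2 ⟨rfl, by intro x hx; simp at hx, by decide⟩⟩
  · exact ⟨{1}, mem_Pods.2 ⟨rfl, by intro x hx; simp at hx; omega, by decide⟩⟩
  · exact ⟨{2}, mem_Pods.2 ⟨rfl, by intro x hx; simp at hx; omega, by decide⟩⟩

lemma pod_coe (a : ℕ) : pod (a:ℤ) = podCount a := by simp [pod]

lemma pod_neg {m : ℤ} (h : m < 0) : pod m = 0 := by rw [pod, if_neg (by omega)]

theorem pod_ineq_k1 (n : ℕ) (hn : 1 ≤ n) :
    pod n - pod ((n : ℤ) - 1) - pod ((n : ℤ) - 3) + pod ((n : ℤ) - 6) ≤ 0 := by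
  rcases lt_or_ge n 6 with h | h
  · interval_cases n
    · -- n = 1
      rw [show ((1:ℕ):ℤ) - 1 = ((0:ℕ):ℤ) by norm_num,
        show ((1:ℕ):ℤ) - 3 = (-2:ℤ) by norm_num,
        show ((1:ℕ):ℤ) - 6 = (-5:ℤ) by norm_num,
        pod_coe, pod_coe, pod_neg (by norm_num), pod_neg (by norm_num)]
      have e := podA 0
      norm_num at e
      have z := Ds_card_zero (n := 1) (by norm_num) (by norm_num)
      omega
    · -- n = 2
      rw [show ((2:ℕ):ℤ) - 1 = ((1:ℕ):ℤ) by norm_num,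
        show ((2:ℕ):ℤ) - 3 = (-1:ℤ) by norm_num,
        show ((2:ℕ):ℤ) - 6 = (-4:ℤ) by norm_num,
        pod_coe, pod_coe, pod_neg (by norm_num), pod_neg (by norm_num)]
      have e := podA 1
      norm_num at e
      have z := Ds_card_zero (n := 2) (by norm_num) (by norm_num)
      omega
    · -- n = 3
      rw [show ((3:ℕ):ℤ) - 1 = ((2:ℕ):ℤ) by norm_num,
        show ((3:ℕ):ℤ) - 3 = ((0:ℕ):ℤ) by norm_num,
        show ((3:ℕ):ℤ) - 6 = (-3:ℤ) by norm_num,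
        pod_coe, pod_coe, pod_coe, pod_neg (by norm_num)]
      have e := podA 2
      norm_num at e
      have z := Ds_card_le_one (n := 3) (by norm_num) (by norm_num)
      have w := pods_nonempty (n := 0) (by norm_num)
      omega
    · -- n = 4
      rw [show ((4:ℕ):ℤ) - 1 = ((3:ℕ):ℤ) by norm_num,
        show ((4:ℕ):ℤ) - 3 = ((1:ℕ):ℤ) by norm_num,
        show ((4:ℕ):ℤ) - 6 = (-2:ℤ) by norm_num,
        pod_coe, pod_coe, pod_coe, pod_neg (by norm_num)]
      have e := podA 3
      norm_num at e
      have z := Ds_card_le_one (n := 4) (by norm_num) (by norm_num)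
      have w := pods_nonempty (n := 1) (by norm_num)
      omega
    · -- n = 5
      rw [show ((5:ℕ):ℤ) - 1 = ((4:ℕ):ℤ) by norm_num,
        show ((5:ℕ):ℤ) - 3 = ((2:ℕ):ℤ) by norm_num,
        show ((5:ℕ):ℤ) - 6 = (-1:ℤ) by norm_num,
        pod_coe, pod_coe, pod_coe, pod_neg (by norm_num)]
      have e := podA 4
      norm_num at e
      have z := Ds_card_le_one (n := 5) (by norm_num) (by norm_num)
      have w := pods_nonempty (n := 2) (by norm_num)
      omega
  · obtain ⟨k, rfl⟩ : ∃ k, n = k + 6 := ⟨n - 6, by omega⟩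
    rw [show ((k+6:ℕ):ℤ) - 1 = ((k+5:ℕ):ℤ) by push_cast; ring,
      show ((k+6:ℕ):ℤ) - 3 = ((k+3:ℕ):ℤ) by push_cast; ring,
      show ((k+6:ℕ):ℤ) - 6 = ((k:ℕ):ℤ) by push_cast; ring,
      pod_coe, pod_coe, pod_coe, pod_coe]
    have e6 := podA (k+5)
    have e3 := podA (k+2)
    have e2 := podA (k+1)
    have e1 := podA k
    have hb := podB k
    have hnat : podCount (k+6) + podCount k ≤ podCount (k+5) + podCount (k+3) := by
      rw [show k+5+1 = k+6 from rfl] at e6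
      rw [show k+2+1 = k+3 from rfl] at e3
      rw [show k+1+1 = k+2 from rfl] at e2
      omega
    omega
end

section
/- For all n ≥ 1, p(n) - p(n-1) - p(n-2) + p(n-5) ≤ 0, where p(m) = 0 for m < 0. -/
open Finset

/-- the partition function extended by `0` on negative integers -/
def pp (m : ℤ) : ℤ := if 0 ≤ m then partitionCount m.toNat else 0

/-- number of partitions of `n` with all parts at least `k` -/
def hh (k n : ℕ) : ℕ :=
  (Finset.univ.filter fun p : Nat.Partition n => ∀ i ∈ p.parts, k ≤ i).card

lemma hh_one (n : ℕ) : hh 1 n = partitionCount n := by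
  unfold hh partitionCount
  rw [Finset.filter_true_of_mem, Finset.card_univ]
  intro p _ i hi
  exact p.parts_pos hi

lemma hh_zero_right (k : ℕ) : hh k 0 = 1 := by
  unfold hh
  rw [Finset.filter_true_of_mem, Finset.card_univ]
  · simp
  · intro p _ i hi
    simp at hi

lemma hh_eq_zero (k n : ℕ) (h1 : 1 ≤ n) (h2 : n < k) : hh k n = 0 := by
  unfold hh
  rw [Finset.card_eq_zero, Finset.filter_eq_empty_iff]
  intro p _ hall
  have hne : p.parts ≠ 0 := by
    intro h0
    have := p.parts_sum
    rw [h0] at this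
    simp at this
    omega
  obtain ⟨i, hi⟩ := Multiset.exists_mem_of_ne_zero hne
  have hik : k ≤ i := hall i hi
  have hle : i ≤ p.parts.sum := Multiset.le_sum_of_mem hi
  rw [p.parts_sum] at hle
  omega

lemma hh_mono (j k n : ℕ) (hjk : j ≤ k) : hh k n ≤ hh j n := by
  apply Finset.card_le_card
  intro p hp
  simp only [Finset.mem_filter] at hp ⊢
  exact ⟨hp.1, fun i hi => le_trans hjk (hp.2 i hi)⟩

lemma erase_sum {n k : ℕ} (p : Nat.Partition n) (h : k ∈ p.parts) :
    (p.parts.erase k).sum = n - k := by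
  have hc := Multiset.cons_erase h
  have hs : k + (p.parts.erase k).sum = n := by
    rw [← Multiset.sum_cons, hc, p.parts_sum]
  omega

lemma hh_rec (k n : ℕ) (hk : 1 ≤ k) (hkn : k ≤ n) :
    hh k n = hh (k + 1) n + hh k (n - k) := by
  classical
  have key := Finset.card_filter_add_card_filter_not
    (s := Finset.univ.filter fun p : Nat.Partition n => ∀ i ∈ p.parts, k ≤ i)
    (p := fun p => k ∉ p.parts)
  have e1 : (((Finset.univ.filter fun p : Nat.Partition n => ∀ i ∈ p.parts, k ≤ i)).filter
      fun p => k ∉ p.parts).card = hh (k + 1) n := by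
    unfold hh
    rw [Finset.filter_filter]
    congr 1
    apply Finset.filter_congr
    intro p _
    constructor
    · rintro ⟨hall, hknot⟩ i hi
      have h1 := hall i hi
      rcases Nat.lt_or_ge i (k + 1) with h | h
      · exfalso
        have : i = k := by omega
        exact hknot (this ▸ hi)
      · exact h
    · intro hall
      refine ⟨fun i hi => le_trans (Nat.le_succ k) (hall i hi), fun hk' => ?_⟩
      have := hall k hk'
      omega
  have e2 : (((Finset.univ.filter fun p : Nat.Partition n => ∀ i ∈ p.parts, k ≤ i)).filter
      fun p => ¬ k ∉ p.parts).card = hh k (n - k) := by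
    unfold hh
    refine Finset.card_bij'
      (fun p hp => ⟨p.parts.erase k,
        fun {i} hi => p.parts_pos (Multiset.mem_of_mem_erase hi),
        erase_sum p (not_not.mp (Finset.mem_filter.mp hp).2)⟩)
      (fun q hq => ⟨k ::ₘ q.parts,
        fun {i} hi => by
          rcases Multiset.mem_cons.mp hi with h | h
          · omega
          · exact q.parts_pos h,
        by rw [Multiset.sum_cons, q.parts_sum]; omega⟩)
      ?_ ?_ ?_ ?_
    · intro p hp
      simp only [Finset.mem_filter, Finset.mem_filter] at hp ⊢
      exact ⟨Finset.mem_univ _, fun i hi => hp.1.2 i (Multiset.mem_of_mem_erase hi)⟩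
    · intro q hq
      simp only [Finset.mem_filter] at hq ⊢
      refine ⟨⟨Finset.mem_univ _, fun i hi => ?_⟩, ?_⟩
      · rcases Multiset.mem_cons.mp hi with h | h
        · omega
        · exact hq.2 i h
      · simp
    · intro p hp
      have hmem : k ∈ p.parts := not_not.mp (Finset.mem_filter.mp hp).2
      ext1
      simp only
      exact Multiset.cons_erase hmem
    · intro q hq
      ext1
      simp only
      exact Multiset.erase_cons_head k q.parts
  unfold hh at *
  omega

/-- `hh` extended by zero to negative integers -/
def HH (k : ℕ) (m : ℤ) : ℤ := if 0 ≤ m then (hh k m.toNat : ℤ) else 0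

lemma HH_nonneg (k : ℕ) (m : ℤ) : 0 ≤ HH k m := by
  unfold HH
  split <;> positivity

lemma HH_mono (j k : ℕ) (m : ℤ) (hjk : j ≤ k) : HH k m ≤ HH j m := by
  unfold HH
  split
  · exact_mod_cast hh_mono j k _ hjk
  · exact le_rfl

lemma HH_rec (k : ℕ) (hk : 1 ≤ k) (m : ℤ) :
    HH k m = HH (k + 1) m + HH k (m - k) := by
  rcases lt_or_ge m 0 with hm | hm
  · unfold HH
    rw [if_neg (by omega), if_neg (by omega), if_neg (by omega)]
    ring
  · rcases le_or_gt (k : ℤ) m with hkm | hkm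
    · have h1 : (0:ℤ) ≤ m - k := by omega
      unfold HH
      rw [if_pos hm, if_pos hm, if_pos h1]
      have ht : (m - (k:ℤ)).toNat = m.toNat - k := by omega
      rw [ht]
      have := hh_rec k m.toNat hk (by omega)
      exact_mod_cast this
    · -- m < k, m ≥ 0
      have h1 : m - (k:ℤ) < 0 := by omega
      unfold HH
      rw [if_pos hm, if_pos hm, if_neg (by omega)]
      rcases Nat.eq_zero_or_pos m.toNat with h0 | h0
      · rw [h0, hh_zero_right, hh_zero_right]; ring
      · rw [hh_eq_zero k m.toNat h0 (by omega), hh_eq_zero (k+1) m.toNat h0 (by omega)]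
        ring


lemma keyA_base (k : ℕ) (hk : 3 ≤ k) (m : ℤ) (hm : 1 ≤ m) (hmk : m ≤ k) :
    HH k m ≤ HH 2 (m - k) + HH 2 (m - k - 1) := by
  rcases eq_or_lt_of_le hmk with he | hl
  · -- m = k
    have h1 : HH k m = 1 := by
      rw [HH_rec k (by omega) m]
      have hz : HH (k+1) m = 0 := by
        unfold HH
        rw [if_pos (by omega)]
        rw [hh_eq_zero (k+1) m.toNat (by omega) (by omega)]
        norm_num
      have hz2 : HH k (m - k) = 1 := by
        unfold HH
        rw [if_pos (by omega)]
        have : (m - (k:ℤ)).toNat = 0 := by omega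
        rw [this, hh_zero_right]
        norm_num
      rw [hz, hz2]; ring
    have h2 : HH 2 (m - k) = 1 := by
      unfold HH
      rw [if_pos (by omega)]
      have : (m - (k:ℤ)).toNat = 0 := by omega
      rw [this, hh_zero_right]
      norm_num
    have h3 : HH 2 (m - k - 1) = 0 := by
      unfold HH
      rw [if_neg (by omega)]
    rw [h1, h2, h3]; norm_num
  · -- m < k
    have h1 : HH k m = 0 := by
      unfold HH
      rw [if_pos (by omega)]
      rw [hh_eq_zero k m.toNat (by omega) (by omega)]
      norm_num
    rw [h1]
    have := HH_nonneg 2 (m - k)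
    have := HH_nonneg 2 (m - k - 1)
    omega

lemma keyA : ∀ t : ℕ, ∀ k : ℕ, 3 ≤ k → ∀ m : ℤ, 1 ≤ m → (m - k).toNat ≤ t →
    HH k m ≤ HH 2 (m - k) + HH 2 (m - k - 1) := by
  intro t
  induction t with
  | zero =>
    intro k hk m hm ht
    exact keyA_base k hk m hm (by omega)
  | succ t ih =>
    intro k hk m hm ht
    rcases le_or_gt m (k : ℤ) with hmk | hmk
    · exact keyA_base k hk m hm hmk
    · -- m > k
      have step1 : HH k m = HH (k+1) m + HH k (m - k) := HH_rec k (by omega) m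
      have step2 : HH (k+1) m ≤ HH 2 (m - (k+1)) + HH 2 (m - (k+1) - 1) := by
        apply ih (k+1) (by omega) m hm
        omega
      have step3 : HH k (m - k) ≤ HH 3 (m - k) := HH_mono 3 k (m - k) (by omega)
      have step4 : HH 2 (m - k) = HH 3 (m - k) + HH 2 (m - k - 2) := HH_rec 2 (by omega) (m - k)
      have e1 : m - ((k:ℤ) + 1) = m - k - 1 := by ring
      rw [e1] at step2
      have e2 : m - (k:ℤ) - 1 - 1 = m - k - 2 := by ring
      rw [e2] at step2
      linarith

lemma pp_eq_HH (m : ℤ) : pp m = HH 1 m := by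
  unfold pp HH
  rw [hh_one]

theorem merca_ineq (n : ℕ) (hn : 1 ≤ n) :
    pp n - pp ((n : ℤ) - 1) - pp ((n : ℤ) - 2) + pp ((n : ℤ) - 5) ≤ 0 := by
  set m : ℤ := (n : ℤ) with hmdef
  have hm : 1 ≤ m := by rw [hmdef]; exact_mod_cast hn
  have h1 : HH 1 m = HH 2 m + HH 1 (m - 1) := HH_rec 1 le_rfl m
  have h2 := HH_rec 1 le_rfl (m - 2)
  have h3 := HH_rec 1 le_rfl (m - 3)
  have h4 := HH_rec 1 le_rfl (m - 4)
  have h5 := HH_rec 2 (by omega) m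
  have h6 := keyA (m - 3).toNat 3 le_rfl m hm le_rfl
  push_cast at h1 h2 h3 h4 h5 h6
  have e1 : m - 2 - 1 = m - 3 := by ring
  have e2 : m - 3 - 1 = m - 4 := by ring
  have e3 : m - 4 - 1 = m - 5 := by ring
  rw [e1] at h2
  rw [e2] at h3 h6
  rw [e3] at h4
  rw [pp_eq_HH, pp_eq_HH, pp_eq_HH, pp_eq_HH]
  linarith
end
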